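/- arXiv:1911.00186 — 7 statements merged into one kernel-verified Lean document; each statement's English description precedes it below -/
import Mathlib

section
/- For every real x > 0, ln(1+x) = ∑_{n=0}^{∞} (-1)^n c_n x^{n+1} / ((1+x)(1+2x)⋯(1+nx)), where the denominator for n = 0 is the empty product 1. -/
open scoped BigOperators

noncomputable def cauchyC (n : ℕ) : ℝ :=
  ∫ x in (0:ℝ)..1, ∏ i ∈ Finset.range n, (x - i)

open Finset Filter

/-- falling factorial polynomial -/
noncomputable def ffp (n : ℕ) (t : ℝ) : ℝ := ∏ i ∈ Finset.range n, (t - i)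

noncomputable def Pden (x : ℝ) (n : ℕ) : ℝ := ∏ i ∈ Finset.range n, (1 + (i + 1 : ℝ) * x)

noncomputable def Qden (x : ℝ) (n : ℕ) : ℝ := ∏ k ∈ Finset.range n, (1 + (k : ℝ) * x)

lemma cauchyC_eq (n : ℕ) : cauchyC n = ∫ t in (0:ℝ)..1, ffp n t := rfl

lemma Pden_pos {x : ℝ} (hx : 0 < x) (n : ℕ) : 0 < Pden x n := by
  apply Finset.prod_pos; intro i _; positivity

lemma Qden_pos {x : ℝ} (hx : 0 < x) (n : ℕ) : 0 < Qden x n := by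
  apply Finset.prod_pos; intro i _; positivity

lemma Pden_eq_Qden (x : ℝ) (n : ℕ) : Pden x n = Qden x (n + 1) := by
  rw [Qden, Finset.prod_range_succ']
  simp [Pden]

lemma Qden_succ (x : ℝ) (n : ℕ) : Qden x (n + 1) = Qden x n * (1 + n * x) := by
  rw [Qden, Finset.prod_range_succ]; rfl

lemma ffp_succ (n : ℕ) (t : ℝ) : ffp (n + 1) t = ffp n t * (t - n) := by
  rw [ffp, Finset.prod_range_succ]; rfl

lemma one_add_pos {x t : ℝ} (hx : 0 < x) (ht : 0 ≤ t) : 0 < 1 + t * x := by nlinarith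

/-- the key telescoping identity -/
lemma key_identity {x : ℝ} (hx : 0 < x) {t : ℝ} (ht : 0 ≤ t) (N : ℕ) :
    x / (1 + t * x) = (∑ n ∈ Finset.range N, (-1) ^ n * x ^ (n + 1) * ffp n t / Pden x n)
      + (-1) ^ N * x ^ (N + 1) * ffp N t / ((1 + t * x) * Qden x N) := by
  induction N with
  | zero =>
      simp [ffp, Qden]
  | succ N ih =>
      rw [Finset.sum_range_succ, ih]
      have h1 : (0:ℝ) < 1 + t * x := one_add_pos hx ht
      have h2 : (0:ℝ) < Qden x N := Qden_pos hx N
      have h3 : (0:ℝ) < 1 + (N:ℝ) * x := by positivity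
      have hP : Pden x N = Qden x N * (1 + N * x) := by
        rw [Pden_eq_Qden, Qden_succ]
      rw [Qden_succ, ffp_succ, hP]
      have e1 : (-1:ℝ) ^ (N+1) = (-1)^N * (-1) := pow_succ _ _
      have e2 : (x:ℝ) ^ (N+1+1) = x^(N+1) * x := pow_succ _ _
      rw [e1, e2]
      field_simp
      ring

lemma integral_core {x : ℝ} (hx : 0 < x) :
    ∫ t in (0:ℝ)..1, x / (1 + t * x) = Real.log (1 + x) := by
  have hderiv : ∀ t ∈ Set.uIcc (0:ℝ) 1,
      HasDerivAt (fun u : ℝ => Real.log (1 + u * x)) (x / (1 + t * x)) t := by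
    intro t ht
    rw [Set.uIcc_of_le (by norm_num : (0:ℝ) ≤ 1)] at ht
    have h1 : (0:ℝ) < 1 + t * x := one_add_pos hx ht.1
    have hinner : HasDerivAt (fun u : ℝ => 1 + u * x) x t := by
      simpa using ((hasDerivAt_id t).mul_const x).const_add (1:ℝ)
    have := (Real.hasDerivAt_log h1.ne').comp t hinner
    rw [div_eq_inv_mul]; exact this
  have hcont : IntervalIntegrable (fun t : ℝ => x / (1 + t * x)) MeasureTheory.volume 0 1 := by
    apply ContinuousOn.intervalIntegrable
    apply ContinuousOn.div continuousOn_const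
    · exact (continuous_const.add (continuous_id.mul continuous_const)).continuousOn
    · intro t ht
      rw [Set.uIcc_of_le (by norm_num : (0:ℝ) ≤ 1)] at ht
      exact (one_add_pos hx ht.1).ne'
  have := intervalIntegral.integral_eq_sub_of_hasDerivAt hderiv hcont
  rw [this]
  norm_num

lemma ffp_continuous (n : ℕ) : Continuous (ffp n) := by
  apply continuous_finset_prod
  intro i _
  exact continuous_id.sub continuous_const

/-- sign of ffp on [0,1] -/
lemma ffp_sign (m : ℕ) {t : ℝ} (h0 : 0 ≤ t) (h1 : t ≤ 1) :
    0 ≤ (-1:ℝ) ^ m * ffp (m + 1) t := by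
  rw [ffp, Finset.prod_range_succ']
  push_cast
  simp only [sub_zero]
  have key : ∏ k ∈ Finset.range m, (t - ((k:ℝ) + 1))
      = (-1:ℝ)^m * ∏ k ∈ Finset.range m, (((k:ℝ) + 1) - t) := by
    calc ∏ k ∈ Finset.range m, (t - ((k:ℝ) + 1))
        = ∏ k ∈ Finset.range m, (-1) * (((k:ℝ) + 1) - t) :=
          Finset.prod_congr rfl (fun k _ => by ring)
      _ = (-1:ℝ)^m * ∏ k ∈ Finset.range m, (((k:ℝ) + 1) - t) := by
          rw [Finset.prod_mul_distrib, Finset.prod_const, Finset.card_range]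
  rw [key, ← mul_assoc, ← mul_assoc, ← mul_pow]
  norm_num
  apply mul_nonneg _ h0
  apply Finset.prod_nonneg
  intro k _
  have : (0:ℝ) ≤ k := Nat.cast_nonneg k
  linarith

/-- bound for ffp on [0,1] -/
lemma ffp_bound (m : ℕ) {t : ℝ} (h0 : 0 ≤ t) (h1 : t ≤ 1) :
    |ffp (m + 1) t| ≤ (m.factorial : ℝ) := by
  rw [ffp, Finset.prod_range_succ']
  push_cast
  simp only [sub_zero]
  rw [abs_mul, Finset.abs_prod]
  have h2 : ∏ k ∈ Finset.range m, |t - ((k:ℝ) + 1)| ≤ ∏ k ∈ Finset.range m, ((k:ℝ) + 1) := by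
    apply Finset.prod_le_prod
    · intro k _; exact abs_nonneg _
    · intro k _
      have hk : (0:ℝ) ≤ k := Nat.cast_nonneg k
      rw [abs_sub_comm, abs_of_nonneg (by linarith)]
      linarith
  have h3 : ∏ k ∈ Finset.range m, ((k:ℝ) + 1) = (m.factorial : ℝ) := by
    rw [← Finset.prod_range_add_one_eq_factorial]
    push_cast
    rfl
  calc (∏ k ∈ Finset.range m, |t - ((k:ℝ)+1)|) * |t|
      ≤ (∏ k ∈ Finset.range m, ((k:ℝ)+1)) * 1 := by
        apply mul_le_mul h2 (abs_le.mpr ⟨by linarith, h1⟩) (abs_nonneg _)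
        exact Finset.prod_nonneg (fun k _ => by positivity)
    _ = (m.factorial : ℝ) := by rw [mul_one, h3]

noncomputable def gfun (x : ℝ) (N : ℕ) (t : ℝ) : ℝ :=
  (-1) ^ N * x ^ (N + 1) * ffp N t / ((1 + t * x) * Qden x N)

noncomputable def Erem (x : ℝ) (N : ℕ) : ℝ := ∫ t in (0:ℝ)..1, gfun x N t

lemma gfun_integrable {x : ℝ} (hx : 0 < x) (N : ℕ) :
    IntervalIntegrable (gfun x N) MeasureTheory.volume 0 1 := by
  apply ContinuousOn.intervalIntegrable
  unfold gfun
  apply ContinuousOn.div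
  · exact (continuous_const.mul (ffp_continuous N)).continuousOn
  · exact ((continuous_const.add (continuous_id.mul continuous_const)).mul
      continuous_const).continuousOn
  · intro t ht
    rw [Set.uIcc_of_le (by norm_num : (0:ℝ) ≤ 1)] at ht
    exact (mul_pos (one_add_pos hx ht.1) (Qden_pos hx N)).ne'

lemma partial_sum {x : ℝ} (hx : 0 < x) (N : ℕ) :
    Real.log (1 + x)
      = (∑ n ∈ Finset.range N, (-1) ^ n * cauchyC n * x ^ (n + 1) / Pden x n) + Erem x N := by
  rw [← integral_core hx, Erem]
  have hterm_int : ∀ n ∈ Finset.range N, IntervalIntegrable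
      (fun t => (-1) ^ n * x ^ (n + 1) * ffp n t / Pden x n) MeasureTheory.volume 0 1 := by
    intro n _
    exact (((continuous_const.mul (ffp_continuous n)).div_const _)).intervalIntegrable _ _
  have hcong : Set.EqOn (fun t => x / (1 + t * x))
      (fun t => (∑ n ∈ Finset.range N, (-1) ^ n * x ^ (n + 1) * ffp n t / Pden x n)
        + gfun x N t) (Set.uIcc 0 1) := by
    intro t ht
    rw [Set.uIcc_of_le (by norm_num : (0:ℝ) ≤ 1)] at ht
    exact key_identity hx ht.1 N
  rw [intervalIntegral.integral_congr hcong]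
  have hsum_int : IntervalIntegrable
      (fun t => ∑ n ∈ Finset.range N, (-1) ^ n * x ^ (n + 1) * ffp n t / Pden x n)
      MeasureTheory.volume 0 1 := by
    have efun : (fun t => ∑ n ∈ Finset.range N, (-1:ℝ) ^ n * x ^ (n + 1) * ffp n t / Pden x n)
        = ∑ n ∈ Finset.range N, (fun t => (-1:ℝ) ^ n * x ^ (n + 1) * ffp n t / Pden x n) := by
      funext t; simp
    rw [efun]
    exact IntervalIntegrable.sum _ hterm_int
  rw [intervalIntegral.integral_add hsum_int (gfun_integrable hx N)]
  congr 1
  rw [intervalIntegral.integral_finset_sum hterm_int]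
  apply Finset.sum_congr rfl
  intro n _
  have h1 : Set.EqOn (fun t => (-1:ℝ) ^ n * x ^ (n + 1) * ffp n t / Pden x n)
      (fun t => ((-1:ℝ) ^ n * x ^ (n + 1) / Pden x n) * ffp n t) (Set.uIcc 0 1) :=
    fun t _ => by ring
  rw [intervalIntegral.integral_congr h1, intervalIntegral.integral_const_mul, ← cauchyC_eq]
  ring

lemma cauchyC_sign (m : ℕ) : 0 ≤ (-1:ℝ) ^ m * cauchyC (m + 1) := by
  rw [cauchyC_eq, ← intervalIntegral.integral_const_mul]
  apply intervalIntegral.integral_nonneg (by norm_num)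
  intro t ht
  exact ffp_sign m ht.1 ht.2

lemma Erem_nonpos {x : ℝ} (hx : 0 < x) (m : ℕ) : Erem x (m + 1) ≤ 0 := by
  have h : 0 ≤ ∫ t in (0:ℝ)..1, -(gfun x (m + 1) t) := by
    apply intervalIntegral.integral_nonneg (by norm_num)
    intro t ht
    have hs := ffp_sign m ht.1 ht.2
    have hd : 0 < (1 + t * x) * Qden x (m + 1) :=
      mul_pos (one_add_pos hx ht.1) (Qden_pos hx (m + 1))
    have e : (-1:ℝ) ^ (m + 1) * x ^ (m + 1 + 1) * ffp (m + 1) t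
        = -(x ^ (m + 1 + 1) * ((-1:ℝ) ^ m * ffp (m + 1) t)) := by
      rw [pow_succ (-1:ℝ) m]; ring
    have hnum : (-1:ℝ) ^ (m + 1) * x ^ (m + 1 + 1) * ffp (m + 1) t ≤ 0 := by
      rw [e]
      exact neg_nonpos.mpr (mul_nonneg (by positivity) hs)
    have : gfun x (m + 1) t ≤ 0 := div_nonpos_of_nonpos_of_nonneg hnum hd.le
    linarith
  rw [intervalIntegral.integral_neg] at h
  have : Erem x (m + 1) = ∫ t in (0:ℝ)..1, gfun x (m + 1) t := rfl
  linarith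

lemma one_add_sum_le_prod (m : ℕ) (u : ℕ → ℝ) (hu : ∀ k, 0 ≤ u k) :
    1 + ∑ k ∈ Finset.range m, u k ≤ ∏ k ∈ Finset.range m, (1 + u k) := by
  induction m with
  | zero => simp
  | succ m ih =>
      rw [Finset.sum_range_succ, Finset.prod_range_succ]
      have h1 : 0 ≤ ∑ k ∈ Finset.range m, u k := Finset.sum_nonneg fun k _ => hu k
      nlinarith [hu m, ih]

lemma Qden_lower {x : ℝ} (hx : 0 < x) (m : ℕ) :
    (m.factorial : ℝ) * x ^ m * (1 + (∑ k ∈ Finset.range m, 1 / ((k:ℝ) + 1)) / x)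
      ≤ Qden x (m + 1) := by
  have h0 : Qden x (m + 1) = ∏ k ∈ Finset.range m, (1 + ((k:ℝ) + 1) * x) := by
    rw [Qden, Finset.prod_range_succ']
    push_cast
    simp
  have h1 : ∏ k ∈ Finset.range m, (1 + ((k:ℝ) + 1) * x)
      = ((m.factorial : ℝ) * x ^ m) * ∏ k ∈ Finset.range m, (1 + 1 / (((k:ℝ) + 1) * x)) := by
    have e : ∀ k ∈ Finset.range m, (1 + ((k:ℝ) + 1) * x)
        = (((k:ℝ) + 1) * x) * (1 + 1 / (((k:ℝ) + 1) * x)) := by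
      intro k _
      have hk : ((k:ℝ) + 1) * x ≠ 0 := by positivity
      field_simp
      ring
    rw [Finset.prod_congr rfl e, Finset.prod_mul_distrib, Finset.prod_mul_distrib,
      Finset.prod_const, Finset.card_range]
    have h3 : ∏ k ∈ Finset.range m, ((k:ℝ) + 1) = (m.factorial : ℝ) := by
      rw [← Finset.prod_range_add_one_eq_factorial]
      push_cast
      rfl
    rw [h3]
  rw [h0, h1]
  have h4 : 1 + (∑ k ∈ Finset.range m, 1 / ((k:ℝ) + 1)) / x
      ≤ ∏ k ∈ Finset.range m, (1 + 1 / (((k:ℝ) + 1) * x)) := by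
    have := one_add_sum_le_prod m (fun k => 1 / (((k:ℝ) + 1) * x)) (fun k => by positivity)
    have e2 : (∑ k ∈ Finset.range m, 1 / ((k:ℝ) + 1)) / x
        = ∑ k ∈ Finset.range m, 1 / (((k:ℝ) + 1) * x) := by
      rw [Finset.sum_div]
      apply Finset.sum_congr rfl
      intro k _
      rw [div_div]
    rw [e2]
    exact this
  have h5 : (0:ℝ) ≤ (m.factorial : ℝ) * x ^ m := by positivity
  nlinarith [h4, h5]

lemma Erem_bound {x : ℝ} (hx : 0 < x) (m : ℕ) :
    |Erem x (m + 1)| ≤ x ^ 2 / (1 + (∑ k ∈ Finset.range m, 1 / ((k:ℝ) + 1)) / x) := by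
  set S : ℝ := ∑ k ∈ Finset.range m, 1 / ((k:ℝ) + 1) with hS
  have hSnn : 0 ≤ S := Finset.sum_nonneg fun k _ => by positivity
  have hden : (0:ℝ) < 1 + S / x := by positivity
  set C : ℝ := x ^ (m + 2) * (m.factorial : ℝ) / Qden x (m + 1) with hC
  have hQ := Qden_pos hx (m + 1)
  have h1 : |Erem x (m + 1)| ≤ C * |1 - 0| := by
    rw [show Erem x (m + 1) = ∫ t in (0:ℝ)..1, gfun x (m + 1) t from rfl, ← Real.norm_eq_abs]
    apply intervalIntegral.norm_integral_le_of_norm_le_const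
    intro t ht
    rw [Set.uIoc_of_le (by norm_num : (0:ℝ) ≤ 1)] at ht
    have ht0 : 0 ≤ t := ht.1.le
    have ht1 : t ≤ 1 := ht.2
    have h1t : (0:ℝ) < 1 + t * x := one_add_pos hx ht0
    have hdpos : (0:ℝ) < (1 + t * x) * Qden x (m + 1) := mul_pos h1t hQ
    rw [Real.norm_eq_abs, gfun, abs_div, abs_of_pos hdpos, abs_mul, abs_mul, abs_pow,
      abs_neg, abs_one, one_pow, one_mul, abs_pow, abs_of_pos hx]
    have hb := ffp_bound m ht0 ht1
    have step1 : x ^ (m + 1 + 1) * |ffp (m + 1) t| ≤ x ^ (m + 2) * (m.factorial : ℝ) := by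
      have : x ^ (m + 1 + 1) = x ^ (m + 2) := by norm_num
      rw [this]
      exact mul_le_mul_of_nonneg_left hb (by positivity)
    have step2 : (1:ℝ) * Qden x (m + 1) ≤ (1 + t * x) * Qden x (m + 1) := by
      apply mul_le_mul_of_nonneg_right _ hQ.le
      nlinarith
    rw [one_mul] at step2
    calc x ^ (m + 1 + 1) * |ffp (m + 1) t| / ((1 + t * x) * Qden x (m + 1))
        ≤ x ^ (m + 2) * (m.factorial : ℝ) / ((1 + t * x) * Qden x (m + 1)) := by
          gcongr
      _ ≤ x ^ (m + 2) * (m.factorial : ℝ) / Qden x (m + 1) := by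
          gcongr
  have h2 : C ≤ x ^ 2 / (1 + S / x) := by
    have hq := Qden_lower hx m
    have hpos : (0:ℝ) < (m.factorial : ℝ) * x ^ m * (1 + S / x) := by positivity
    have h3 : C ≤ x ^ (m + 2) * (m.factorial : ℝ)
        / ((m.factorial : ℝ) * x ^ m * (1 + S / x)) := by
      rw [hC]
      gcongr
    have h4 : x ^ (m + 2) * (m.factorial : ℝ) / ((m.factorial : ℝ) * x ^ m * (1 + S / x))
        = x ^ 2 / (1 + S / x) := by
      rw [show x ^ (m + 2) = x ^ m * x ^ 2 from by rw [pow_add]]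
      rw [div_eq_div_iff hpos.ne' hden.ne']
      ring
    rw [h4] at h3
    exact h3
  calc |Erem x (m + 1)| ≤ C * |1 - 0| := h1
    _ = C := by norm_num
    _ ≤ x ^ 2 / (1 + S / x) := h2

theorem log_one_add_eq_cauchy_series (x : ℝ) (hx : 0 < x) :
    Real.log (1 + x) = ∑' n : ℕ,
      (-1) ^ n * cauchyC n * x ^ (n + 1) / ∏ i ∈ Finset.range n, (1 + (i + 1 : ℝ) * x) := by
  have hlog : Real.log (1 + x) ≤ x := by
    have := Real.add_one_le_exp (Real.log (1 + x))
    rw [Real.exp_log (by linarith)] at this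
    linarith
  set a : ℕ → ℝ := fun n => (-1) ^ n * cauchyC n * x ^ (n + 1) / Pden x n with ha
  have hS : ∀ N, ∑ n ∈ Finset.range N, a n = Real.log (1 + x) - Erem x N := by
    intro N
    rw [partial_sum hx N]
    ring
  have ha0 : a 0 = x := by
    have hc0 : cauchyC 0 = 1 := by simp [cauchyC]
    simp [ha, hc0, Pden]
  have hanonpos : ∀ m : ℕ, a (m + 1) ≤ 0 := by
    intro m
    have hc := cauchyC_sign m
    have hnum : (-1:ℝ) ^ (m + 1) * cauchyC (m + 1) * x ^ (m + 1 + 1) ≤ 0 := by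
      have e : (-1:ℝ) ^ (m + 1) * cauchyC (m + 1) * x ^ (m + 1 + 1)
          = -(((-1:ℝ) ^ m * cauchyC (m + 1)) * x ^ (m + 1 + 1)) := by
        rw [pow_succ (-1:ℝ) m]; ring
      rw [e]
      exact neg_nonpos.mpr (mul_nonneg hc (by positivity))
    exact div_nonpos_of_nonpos_of_nonneg hnum (Pden_pos hx (m + 1)).le
  have hEtend : Filter.Tendsto (fun m : ℕ => Erem x (m + 1)) Filter.atTop (nhds 0) := by
    apply squeeze_zero_norm (fun m => Erem_bound hx m)
    have hH : Filter.Tendsto (fun m : ℕ => ∑ k ∈ Finset.range m, 1 / ((k:ℝ) + 1))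
        Filter.atTop Filter.atTop := Real.tendsto_sum_range_one_div_nat_succ_atTop
    have h2 : Filter.Tendsto
        (fun m : ℕ => 1 + (∑ k ∈ Finset.range m, 1 / ((k:ℝ) + 1)) / x)
        Filter.atTop Filter.atTop :=
      Filter.tendsto_atTop_add_const_left _ 1 (hH.atTop_div_const hx)
    exact Filter.Tendsto.div_atTop tendsto_const_nhds h2
  have hStend : Filter.Tendsto (fun N => ∑ n ∈ Finset.range N, a n) Filter.atTop
      (nhds (Real.log (1 + x))) := by
    rw [← Filter.tendsto_add_atTop_iff_nat 1]
    simp only [hS]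
    have := (tendsto_const_nhds (x := Real.log (1 + x))
      (f := Filter.atTop (α := ℕ))).sub hEtend
    simpa using this
  have hsum : Summable a := by
    have hg : Summable (fun m : ℕ => -(a (m + 1))) := by
      apply summable_of_sum_range_le (c := x - Real.log (1 + x))
      · intro m
        linarith [hanonpos m]
      · intro N
        have h0 : ∑ i ∈ Finset.range N, -(a (i + 1))
            = -(∑ n ∈ Finset.range (N + 1), a n) + a 0 := by
          rw [Finset.sum_range_succ' a N, Finset.sum_neg_distrib]
          ring
        rw [h0, hS (N + 1), ha0]
        have hE := Erem_nonpos hx N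
        linarith
    have h1 : Summable (fun m : ℕ => a (m + 1)) := by simpa using hg.neg
    exact (summable_nat_add_iff 1).mp h1
  have hfin := tendsto_nhds_unique hsum.hasSum.tendsto_sum_nat hStend
  have hts : ∑' n : ℕ, (-1) ^ n * cauchyC n * x ^ (n + 1)
      / ∏ i ∈ Finset.range n, (1 + (i + 1 : ℝ) * x) = ∑' n : ℕ, a n := by
    apply tsum_congr
    intro n
    rfl
  rw [hts, hfin]
end

section
/- ln 2 = ∑_{n=0}^{∞} (-1)^n c_n / (n+1)!. -/
open scoped BigOperators

open Finset Filter

lemma key (N : ℕ) (x : ℝ) :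
    (x+1) * ∑ n ∈ range (N+1), (-1:ℝ)^n * (∏ i ∈ range n, (x - i)) / (Nat.factorial (n+1))
      = 1 + (-1)^N * (∏ i ∈ range (N+1), (x - i)) / (Nat.factorial (N+1)) := by
  induction N with
  | zero => simp; ring
  | succ N ih =>
    rw [Finset.sum_range_succ, mul_add, ih, prod_range_succ (f := fun i => x - (i:ℝ)) (n := N+1)]
    have h1 : (Nat.factorial (N+1) : ℝ) ≠ 0 := by positivity
    have h2 : (Nat.factorial (N+2) : ℝ) ≠ 0 := by positivity
    have hf : (Nat.factorial (N+2) : ℝ) = (N+2) * Nat.factorial (N+1) := by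
      push_cast [Nat.factorial_succ]; ring
    rw [show (Nat.factorial (N+1+1) : ℝ) = (N+2) * Nat.factorial (N+1) from hf]
    field_simp [hf]
    push_cast
    ring


lemma Pbound (n : ℕ) {x : ℝ} (hx : x ∈ Set.Icc (0:ℝ) 1) :
    |∏ i ∈ range (n+1), (x - i)| ≤ Nat.factorial n := by
  obtain ⟨h0, h1⟩ := hx
  induction n with
  | zero => simpa using abs_le.2 ⟨by linarith, by linarith⟩
  | succ n ih =>
    rw [prod_range_succ, abs_mul]
    have hb : |x - ((n+1:ℕ):ℝ)| ≤ (n+1:ℕ) := by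
      rw [abs_le]; push_cast; constructor <;> nlinarith [Nat.cast_nonneg (α := ℝ) n]
    calc |∏ i ∈ range (n+1), (x - (i:ℝ))| * |x - ((n+1:ℕ):ℝ)|
        ≤ (Nat.factorial n : ℝ) * (n+1:ℕ) := by
          exact mul_le_mul ih hb (abs_nonneg _) (by positivity)
      _ = Nat.factorial (n+1) := by
          rw [Nat.factorial_succ]; push_cast; ring

lemma cbound (n : ℕ) : |cauchyC (n+1)| ≤ Nat.factorial n := by
  have := intervalIntegral.norm_integral_le_of_norm_le_const
    (C := (Nat.factorial n : ℝ)) (a := (0:ℝ)) (b := 1)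
    (f := fun x => ∏ i ∈ range (n+1), (x - (i:ℝ))) ?_
  · simpa [cauchyC, Real.norm_eq_abs] using this
  · intro x hx
    have hx' : x ∈ Set.Icc (0:ℝ) 1 := by
      rw [Set.uIoc_of_le (by norm_num : (0:ℝ) ≤ 1)] at hx
      exact ⟨le_of_lt hx.1, hx.2⟩
    simpa only [Real.norm_eq_abs] using Pbound n hx'

lemma summ : Summable (fun n : ℕ => (-1:ℝ)^n * cauchyC n / (Nat.factorial (n+1))) := by
  rw [← summable_nat_add_iff 1]
  have hg : Summable (fun n : ℕ => (1/((n:ℝ)+1))^2) := by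
    have : Summable (fun n : ℕ => 1/((n:ℝ))^2) := Real.summable_one_div_nat_pow.2 (by norm_num)
    have := (summable_nat_add_iff 1).2 this
    simpa [div_pow] using this
  have hb : ∀ n : ℕ, ‖(-1:ℝ)^(n+1) * cauchyC (n+1) / (Nat.factorial (n+1+1))‖
      ≤ (1/((n:ℝ)+1))^2 := by
    intro n
    have hc := cbound n
    have hf2 : (Nat.factorial (n+2) : ℝ) = (n+2) * ((n+1) * Nat.factorial n) := by
      push_cast [Nat.factorial_succ]; ring
    have hfpos : (0:ℝ) < Nat.factorial n := by positivity
    have hn : (0:ℝ) ≤ (n:ℝ) := Nat.cast_nonneg n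
    rw [Real.norm_eq_abs, abs_div, abs_mul, abs_pow, abs_neg, abs_one, one_pow, one_mul,
      Nat.abs_cast, div_le_iff₀ (by positivity)]
    calc |cauchyC (n+1)| ≤ (Nat.factorial n : ℝ) := hc
      _ ≤ (1/((n:ℝ)+1))^2 * (Nat.factorial (n+1+1)) := by
          rw [show n+1+1 = n+2 from rfl, hf2, div_pow, one_pow, div_mul_eq_mul_div,
            le_div_iff₀ (by positivity)]
          nlinarith
  exact Summable.of_norm (Summable.of_nonneg_of_le (fun n => norm_nonneg _) hb hg)

theorem log_two_eq_cauchy_series :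
    Real.log 2 = ∑' n : ℕ, (-1) ^ n * cauchyC n / (Nat.factorial (n + 1)) := by
  have hsumm := summ
  set f : ℕ → ℝ := fun n => (-1)^n * cauchyC n / (Nat.factorial (n+1)) with hfdef
  have hcont : ∀ n : ℕ,
      Continuous (fun x : ℝ => (-1:ℝ)^n * (∏ i ∈ range n, (x - i)) / (Nat.factorial (n+1))) := by
    intro n
    exact (continuous_const.mul (continuous_finset_prod _ fun i _ => by continuity)).div_const _
  have hinv : IntervalIntegrable (fun x : ℝ => 1/(x+1)) MeasureTheory.volume 0 1 := by
    apply ContinuousOn.intervalIntegrable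
    apply ContinuousOn.div continuousOn_const (by fun_prop)
    intro x hx
    rw [Set.uIcc_of_le (by norm_num : (0:ℝ) ≤ 1)] at hx
    have := hx.1; positivity
  have hL : ∫ x in (0:ℝ)..1, 1/(x+1) = Real.log 2 := by
    have h := intervalIntegral.integral_comp_add_right (a := (0:ℝ)) (b := 1)
      (fun y : ℝ => 1/y) 1
    rw [h, integral_one_div] <;> norm_num [Set.uIcc_of_le]
  have hdiff : ∀ N : ℕ, |∑ n ∈ range (N+1), f n - Real.log 2| ≤ 1/(N+1) := by
    intro N
    have hsum_eq : ∑ n ∈ range (N+1), f n = ∫ x in (0:ℝ)..1,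
        ∑ n ∈ range (N+1), (-1:ℝ)^n * (∏ i ∈ range n, (x - i)) / (Nat.factorial (n+1)) := by
      rw [intervalIntegral.integral_finset_sum
        (fun n _ => (hcont n).intervalIntegrable _ _)]
      refine Finset.sum_congr rfl fun n _ => ?_
      simp only [hfdef]
      rw [cauchyC, show (fun x : ℝ => (-1:ℝ)^n * (∏ i ∈ range n, (x-(i:ℝ))) / (Nat.factorial (n+1)))
          = fun x => ((-1:ℝ)^n / (Nat.factorial (n+1))) * (∏ i ∈ range n, (x-(i:ℝ)))
          from funext fun x => by ring]
      rw [intervalIntegral.integral_const_mul]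
      ring
    rw [hsum_eq, ← hL, ← intervalIntegral.integral_sub
      (((continuous_finset_sum _ fun n _ => hcont n).intervalIntegrable _ _)) hinv]
    rw [← Real.norm_eq_abs]
    have := intervalIntegral.norm_integral_le_of_norm_le_const (C := 1/((N:ℝ)+1))
      (a := (0:ℝ)) (b := 1)
      (f := fun x => (∑ n ∈ range (N+1),
        (-1:ℝ)^n * (∏ i ∈ range n, (x - i)) / (Nat.factorial (n+1))) - 1/(x+1)) ?_
    · simpa using this
    · intro x hx
      rw [Set.uIoc_of_le (by norm_num : (0:ℝ) ≤ 1)] at hx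
      obtain ⟨hx0, hx1⟩ := hx
      have hx1' : (0:ℝ) < x + 1 := by linarith
      have hkey := key N x
      have hne : x + 1 ≠ 0 := ne_of_gt hx1'
      have hS' : (∑ n ∈ range (N+1), (-1:ℝ)^n * (∏ i ∈ range n, (x - i)) / (Nat.factorial (n+1)))
          = (1 + (-1)^N * (∏ i ∈ range (N+1), (x - i)) / (Nat.factorial (N+1)))/(x+1) := by
        rw [eq_div_iff hne]
        linear_combination hkey
      have hS : (∑ n ∈ range (N+1), (-1:ℝ)^n * (∏ i ∈ range n, (x - i)) / (Nat.factorial (n+1)))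
          - 1/(x+1) = (-1)^N * (∏ i ∈ range (N+1), (x - i)) / ((Nat.factorial (N+1)) * (x+1)) := by
        rw [hS']
        rw [div_sub_div_same, add_sub_cancel_left, div_div]
      show ‖(∑ n ∈ range (N+1), (-1:ℝ)^n * (∏ i ∈ range n, (x - i)) / (Nat.factorial (n+1)))
          - 1/(x+1)‖ ≤ 1/((N:ℝ)+1)
      rw [hS, Real.norm_eq_abs, abs_div, abs_mul, abs_pow, abs_neg, abs_one, one_pow, one_mul]
      have hP := Pbound N ⟨le_of_lt hx0, hx1⟩
      have h1 : (1:ℝ) ≤ x + 1 := by linarith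
      have hfac : (Nat.factorial (N+1) : ℝ) = (N+1) * Nat.factorial N := by
        push_cast [Nat.factorial_succ]; ring
      rw [abs_mul, Nat.abs_cast, abs_of_pos hx1', div_le_iff₀ (by positivity)]
      calc |∏ i ∈ range (N+1), (x - (i:ℝ))| ≤ (Nat.factorial N : ℝ) := hP
        _ ≤ 1/((N:ℝ)+1) * ((Nat.factorial (N+1)) * (x+1)) := by
            have hfn : (0:ℝ) < (Nat.factorial N : ℝ) := by positivity
            have hNp : (0:ℝ) < (N:ℝ)+1 := by positivity
            rw [hfac, div_mul_eq_mul_div, one_mul, le_div_iff₀ hNp]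
            nlinarith
  have h1 : Tendsto (fun N => ∑ n ∈ range (N+1), f n) atTop (nhds (Real.log 2)) := by
    have h0 : Tendsto (fun N : ℕ => ∑ n ∈ range (N+1), f n - Real.log 2) atTop (nhds 0) := by
      apply squeeze_zero_norm (fun N => (hdiff N))
      exact tendsto_one_div_add_atTop_nhds_zero_nat
    have := h0.add_const (Real.log 2)
    simpa using this
  have h2 : Tendsto (fun N => ∑ n ∈ range N, f n) atTop (nhds (∑' n, f n)) :=
    hsumm.hasSum.tendsto_sum_nat
  have h2' : Tendsto (fun N => ∑ n ∈ range (N+1), f n) atTop (nhds (∑' n, f n)) :=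
    h2.comp (tendsto_add_atTop_nat 1)
  exact tendsto_nhds_unique h1 h2'
end

section
/- For every integer k ≥ 1, ζ(k+1) = ∑_{n=k}^{∞} (-1)^{n-k} s(n,k) / (n! · n), where ζ is the Riemann zeta function. -/
open scoped BigOperators
open Nat Set MeasureTheory
open scoped NNReal ENNReal

noncomputable def stirlingS1 (n k : ℕ) : ℝ :=
  (∏ i ∈ Finset.range n, (Polynomial.X - Polynomial.C (i : ℝ))).coeff k

namespace ZS
open Polynomial

/-- Unsigned Stirling coefficients. -/
noncomputable def q (n k : ℕ) : ℝ :=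
  (∏ i ∈ Finset.range n, (Polynomial.X + Polynomial.C (i : ℝ))).coeff k

lemma coeff_mul_X_add_C (p : ℝ[X]) (a : ℝ) (j : ℕ) :
    (p * (X + C a)).coeff (j + 1) = p.coeff j + a * p.coeff (j + 1) := by
  rw [mul_add, Polynomial.coeff_add, Polynomial.coeff_mul_X, Polynomial.coeff_mul_C]
  ring

lemma coeff_mul_X_add_C_zero (p : ℝ[X]) (a : ℝ) :
    (p * (X + C a)).coeff 0 = a * p.coeff 0 := by
  rw [mul_add, Polynomial.coeff_add, Polynomial.coeff_mul_C, Polynomial.mul_coeff_zero,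
    Polynomial.coeff_X_zero]
  ring

lemma q_zero (k : ℕ) : q 0 k = if k = 0 then 1 else 0 := by
  simp [q, Polynomial.coeff_one]

lemma q_succ (n j : ℕ) : q (n + 1) (j + 1) = q n j + n * q n (j + 1) := by
  unfold q
  rw [Finset.prod_range_succ, coeff_mul_X_add_C]

lemma q_succ_zero (n : ℕ) : q (n + 1) 0 = n * q n 0 := by
  unfold q
  rw [Finset.prod_range_succ, coeff_mul_X_add_C_zero]

lemma s_zero (k : ℕ) : stirlingS1 0 k = if k = 0 then 1 else 0 := by
  simp [stirlingS1, Polynomial.coeff_one]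

lemma s_succ (n j : ℕ) :
    stirlingS1 (n + 1) (j + 1) = stirlingS1 n j + (-(n:ℝ)) * stirlingS1 n (j + 1) := by
  unfold stirlingS1
  rw [Finset.prod_range_succ]
  have : (X : ℝ[X]) - C (n : ℝ) = X + C (-(n:ℝ)) := by
    rw [map_neg]; ring
  rw [this, coeff_mul_X_add_C]

lemma s_succ_zero (n : ℕ) : stirlingS1 (n + 1) 0 = (-(n:ℝ)) * stirlingS1 n 0 := by
  unfold stirlingS1
  rw [Finset.prod_range_succ]
  have : (X : ℝ[X]) - C (n : ℝ) = X + C (-(n:ℝ)) := by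
    rw [map_neg]; ring
  rw [this, coeff_mul_X_add_C_zero]

lemma q_nonneg (n k : ℕ) : 0 ≤ q n k := by
  induction n generalizing k with
  | zero => rw [q_zero]; split <;> norm_num
  | succ n ih =>
    cases k with
    | zero => rw [q_succ_zero]; have := ih 0; positivity
    | succ j => rw [q_succ]; have := ih j; have := ih (j+1); positivity

lemma q_le_factorial (n k : ℕ) : q n k ≤ (n ! : ℝ) := by
  induction n generalizing k with
  | zero => rw [q_zero]; split <;> simp
  | succ n ih =>
    have h1 : ((n+1)! : ℝ) = ((n:ℝ)+1) * (n ! : ℝ) := by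
      rw [Nat.factorial_succ]; push_cast; ring
    cases k with
    | zero =>
      rw [q_succ_zero, h1]
      have := ih 0
      nlinarith [q_nonneg n 0, Nat.one_le_iff_ne_zero.2 (Nat.factorial_ne_zero n),
        (by positivity : (0:ℝ) ≤ (n:ℝ))]
    | succ j =>
      rw [q_succ, h1]
      have := ih j; have := ih (j+1)
      nlinarith [q_nonneg n j, q_nonneg n (j+1), (by positivity : (0:ℝ) ≤ (n:ℝ))]

lemma q_eq_zero_of_lt (n k : ℕ) (h : n < k) : q n k = 0 := by
  unfold q
  apply Polynomial.coeff_eq_zero_of_natDegree_lt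
  calc (∏ i ∈ Finset.range n, (X + C (i : ℝ))).natDegree
      ≤ ∑ i ∈ Finset.range n, (X + C (i : ℝ)).natDegree := Polynomial.natDegree_prod_le _ _
    _ ≤ ∑ _i ∈ Finset.range n, 1 := by
        apply Finset.sum_le_sum
        intro i _
        exact (Polynomial.natDegree_X_add_C (i:ℝ)).le
    _ = n := by simp
    _ < k := h

lemma stirling_sign (n k : ℕ) : stirlingS1 n k = (-1 : ℝ) ^ (n + k) * q n k := by
  induction n generalizing k with
  | zero =>
    rw [s_zero, q_zero]
    rcases eq_or_ne k 0 with rfl | h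
    · simp
    · simp [h]
  | succ n ih =>
    cases k with
    | zero =>
      rw [s_succ_zero, q_succ_zero, ih 0]
      have h2 : (-1:ℝ)^(n+1+0) = -(-1)^(n+0) := by
        rw [Nat.add_zero, Nat.add_zero, pow_succ]; ring
      rw [h2]
      ring
    | succ j =>
      rw [s_succ, q_succ, ih j, ih (j+1)]
      have h1 : (-1:ℝ)^(n+1+(j+1)) = (-1)^(n+j) := by
        have : n+1+(j+1) = (n+j) + 2 := by ring
        rw [this, pow_add]; norm_num
      have h2 : (-1:ℝ)^(n+(j+1)) = -(-1)^(n+j) := by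
        have : n+(j+1) = (n+j) + 1 := by ring
        rw [this, pow_succ]; ring
      rw [h1, h2]
      ring

lemma term_eq (n k : ℕ) : (-1:ℝ)^n * stirlingS1 (n + k) k = q (n + k) k := by
  rw [stirling_sign]
  rw [← mul_assoc, ← pow_add]
  have : ((-1:ℝ))^(n + (n+k+k)) = 1 := Even.neg_one_pow ⟨n+k, by ring⟩
  rw [this, one_mul]

lemma q_zero_right (n : ℕ) (hn : n ≠ 0) : q n 0 = 0 := by
  induction n with
  | zero => simp at hn
  | succ n ih =>
    rw [q_succ_zero]
    rcases eq_or_ne n 0 with rfl | h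
    · simp
    · rw [ih h, mul_zero]

noncomputable def F (k : ℕ) (x : ℝ) : ℝ := ∑' m : ℕ, q m k * x ^ m / (m ! : ℝ)

lemma term_bound (k m : ℕ) (x : ℝ) : ‖q m k * x ^ m / (m ! : ℝ)‖ ≤ |x| ^ m := by
  have h0 : (0:ℝ) < (m ! : ℝ) := by exact_mod_cast Nat.factorial_pos m
  rw [Real.norm_eq_abs, abs_div, abs_mul, abs_of_nonneg (q_nonneg m k),
    abs_of_nonneg h0.le, abs_pow]
  rw [div_le_iff₀ h0]
  calc q m k * |x| ^ m ≤ (m ! : ℝ) * |x| ^ m := by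
        apply mul_le_mul_of_nonneg_right (q_le_factorial m k) (by positivity)
    _ = |x| ^ m * (m ! : ℝ) := by ring

lemma summable_F (k : ℕ) {x : ℝ} (hx : |x| < 1) :
    Summable (fun m => q m k * x ^ m / (m ! : ℝ)) :=
  Summable.of_norm_bounded (summable_geometric_of_lt_one (abs_nonneg x) hx)
    (fun m => term_bound k m x)

lemma deriv_term_bound (k m : ℕ) {x r : ℝ} (hr : 0 < r) (hx : |x| ≤ r) :
    ‖q m k * m * x ^ (m - 1) / (m ! : ℝ)‖ ≤ (m : ℝ) * r ^ (m - 1) := by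
  have h0 : (0:ℝ) < (m ! : ℝ) := by exact_mod_cast Nat.factorial_pos m
  rw [Real.norm_eq_abs, abs_div, abs_of_nonneg h0.le, abs_mul, abs_mul,
    abs_of_nonneg (q_nonneg m k), abs_of_nonneg (by positivity : (0:ℝ) ≤ (m:ℝ)), abs_pow]
  rw [div_le_iff₀ h0]
  have h1 : |x| ^ (m-1) ≤ r ^ (m-1) := pow_le_pow_left₀ (abs_nonneg x) hx _
  calc q m k * (m:ℝ) * |x| ^ (m-1) ≤ (m ! : ℝ) * (m:ℝ) * r ^ (m-1) := by
        gcongr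
        exact q_le_factorial m k
    _ = (m:ℝ) * r ^ (m-1) * (m ! : ℝ) := by ring

lemma summable_u {r : ℝ} (hr0 : 0 < r) (hr : r < 1) :
    Summable (fun m : ℕ => (m : ℝ) * r ^ (m - 1)) := by
  rw [← summable_nat_add_iff 1]
  have h : Summable (fun m : ℕ => ((m:ℝ) + 1) * r ^ m) := by
    have h1 : Summable (fun m : ℕ => (m:ℝ) * r ^ m) := by
      have := summable_pow_mul_geometric_of_norm_lt_one (R := ℝ) 1 (r := r)
        (by rwa [Real.norm_eq_abs, abs_of_nonneg hr0.le])
      simpa using this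
    have h2 : Summable (fun m : ℕ => r ^ m) := summable_geometric_of_lt_one hr0.le hr
    simpa [add_mul] using h1.add h2
  refine h.congr fun m => ?_
  push_cast [Nat.add_sub_cancel]
  ring_nf

lemma hasDerivAt_F (k : ℕ) {r : ℝ} (hr0 : 0 < r) (hr : r < 1) {y : ℝ} (hy : y ∈ Ioo (-r) r) :
    HasDerivAt (F k) (∑' m : ℕ, q m k * m * y ^ (m - 1) / (m ! : ℝ)) y := by
  refine hasDerivAt_tsum_of_isPreconnected (summable_u hr0 hr) isOpen_Ioo
    (convex_Ioo _ _).isPreconnected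
    (g := fun m y => q m k * y ^ m / (m ! : ℝ))
    (g' := fun m y => q m k * m * y ^ (m - 1) / (m ! : ℝ))
    ?_ ?_ (?_ : (0:ℝ) ∈ Ioo (-r) r) ?_ hy
  · intro m z _
    have h := ((hasDerivAt_pow m z).const_mul (q m k)).div_const ((m ! : ℝ))
    refine h.congr_deriv ?_
    ring
  · intro m z hz
    exact deriv_term_bound k m hr0 (by
      rw [abs_le]; exact ⟨hz.1.le, hz.2.le⟩)
  · simp only [mem_Ioo]
    constructor <;> linarith
  · exact summable_F k (by norm_num)

lemma F_deriv_eq (k : ℕ) {y : ℝ} (hy : |y| < 1) :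
    (∑' m : ℕ, q m (k+1) * m * y ^ (m - 1) / (m ! : ℝ)) * (1 - y) = F k y := by
  set D := ∑' m : ℕ, q m (k+1) * m * y ^ (m - 1) / (m ! : ℝ) with hD
  have hsumd : Summable (fun m : ℕ => q m (k+1) * m * y ^ (m - 1) / (m ! : ℝ)) := by
    apply Summable.of_norm_bounded (summable_u (r := (|y|+1)/2) (by positivity) (by linarith))
    intro m
    exact deriv_term_bound _ m (by positivity) (by linarith)
  -- reindex
  have h1 : D = ∑' m : ℕ, q (m+1) (k+1) * y ^ m / (m ! : ℝ) := by
    rw [hD, Summable.tsum_eq_zero_add hsumd]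
    simp only [Nat.cast_zero, mul_zero, zero_mul, zero_div, zero_add, Nat.factorial_zero]
    apply tsum_congr
    intro m
    have : ((m+1)! : ℝ) = ((m:ℝ)+1) * (m ! : ℝ) := by
      rw [Nat.factorial_succ]; push_cast; ring
    rw [this]
    push_cast [Nat.add_sub_cancel]
    have hm : ((m:ℝ)+1) ≠ 0 := by positivity
    field_simp
  have hsum1 : Summable (fun m : ℕ => q m k * y ^ m / (m ! : ℝ)) := summable_F k hy
  have hsum2 : Summable (fun m : ℕ => (m:ℝ) * (q m (k+1) * y ^ m / (m ! : ℝ))) := by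
    apply Summable.of_norm_bounded (g := fun m : ℕ => (m:ℝ)^1 * |y| ^ m)
      (summable_pow_mul_geometric_of_norm_lt_one (R := ℝ) 1
        (by rwa [Real.norm_eq_abs, abs_abs] : ‖|y|‖ < 1))
    intro m
    rw [norm_mul, Real.norm_natCast, pow_one]
    exact mul_le_mul_of_nonneg_left (term_bound (k+1) m y) (by positivity)
  have h2 : ∑' m : ℕ, (m:ℝ) * (q m (k+1) * y ^ m / (m ! : ℝ)) = y * D := by
    rw [hD, ← tsum_mul_left]
    apply tsum_congr
    intro m
    cases m with
    | zero => simp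
    | succ m =>
      have : (m + 1) - 1 = m := rfl
      rw [this, pow_succ]
      push_cast
      ring
  have h3 : D = F k y + y * D := by
    conv_lhs => rw [h1]
    calc ∑' m : ℕ, q (m+1) (k+1) * y ^ m / (m ! : ℝ)
        = ∑' m : ℕ, (q m k * y ^ m / (m ! : ℝ) + (m:ℝ) * (q m (k+1) * y ^ m / (m ! : ℝ))) := by
          apply tsum_congr
          intro m
          rw [q_succ]
          ring
      _ = (∑' m : ℕ, q m k * y ^ m / (m ! : ℝ))
          + ∑' m : ℕ, (m:ℝ) * (q m (k+1) * y ^ m / (m ! : ℝ)) := Summable.tsum_add hsum1 hsum2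
      _ = F k y + y * D := by rw [h2]; rfl
  nlinarith [h3]


lemma F_zero_eq (k : ℕ) : F (k+1) 0 = 0 := by
  unfold F
  rw [tsum_eq_single 0]
  · simp [q_zero]
  · intro m hm
    cases m with
    | zero => exact absurd rfl hm
    | succ m => simp

lemma gf (k : ℕ) : ∀ x : ℝ, 0 ≤ x → x < 1 →
    F k x = (-Real.log (1 - x)) ^ k / (k ! : ℝ) := by
  induction k with
  | zero =>
    intro x _ _
    unfold F
    rw [tsum_eq_single 0]
    · simp [q_zero]
    · intro m hm
      rw [q_zero_right m hm]
      simp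
  | succ k ih =>
    intro x hx0 hx1
    set r : ℝ := (x+1)/2 with hrdef
    have hr0 : 0 < r := by rw [hrdef]; linarith
    have hr1 : r < 1 := by rw [hrdef]; linarith
    have hxr : x < r := by rw [hrdef]; linarith
    set f' : ℝ → ℝ := fun y => (-Real.log (1-y))^k / ((k ! : ℝ) * (1-y)) with hf'def
    have hmem : ∀ y ∈ Icc 0 x, y ∈ Ioo (-r) r := by
      intro y hy
      exact ⟨by linarith [hy.1], by linarith [hy.2]⟩
    have hF : ∀ y ∈ Icc 0 x, HasDerivAt (F (k+1)) (f' y) y := by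
      intro y hy
      have hD := hasDerivAt_F (k+1) hr0 hr1 (hmem y hy)
      have hy1 : |y| < 1 := by
        rw [abs_lt]; exact ⟨by linarith [hy.1], by linarith [hy.2]⟩
      have key := F_deriv_eq k hy1
      have h1y : (0:ℝ) < 1 - y := by
        rw [abs_lt] at hy1; linarith [hy1.2]
      have hid : (∑' m : ℕ, q m (k+1) * m * y ^ (m - 1) / (m ! : ℝ)) = f' y := by
        rw [ih y hy.1 (by linarith [hy.2])] at key
        rw [hf'def]
        have hk0 : (k ! : ℝ) ≠ 0 := by positivity
        field_simp at key ⊢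
        linarith [key]
      rwa [hid] at hD
    have hG : ∀ y ∈ Icc 0 x, HasDerivAt
        (fun z => (-Real.log (1-z))^(k+1) / ((k+1)! : ℝ)) (f' y) y := by
      intro y hy
      have h1y : (0:ℝ) < 1 - y := by linarith [hy.2]
      have hinner : HasDerivAt (fun z : ℝ => (1:ℝ) - z) (-1) y := by
        simpa using (hasDerivAt_id y).const_sub 1
      have hlog : HasDerivAt (fun z : ℝ => Real.log (1 - z)) ((1-y)⁻¹ * (-1)) y :=
        (Real.hasDerivAt_log (ne_of_gt h1y)).comp y hinner
      have hL : HasDerivAt (fun z : ℝ => -Real.log (1 - z)) ((1-y)⁻¹) y := by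
        have := hlog.neg
        refine this.congr_deriv ?_
        ring
      have hpow := (hL.pow (k+1)).div_const (((k+1)! : ℝ))
      refine hpow.congr_deriv ?_
      rw [hf'def]
      have hfact : (((k+1)!) : ℝ) = ((k:ℝ)+1) * (k ! : ℝ) := by
        rw [Nat.factorial_succ]; push_cast; ring
      have hk0 : (k ! : ℝ) ≠ 0 := by positivity
      rw [hfact]
      push_cast
      field_simp
    have heq := eq_of_has_deriv_right_eq (f' := f') (a := 0) (b := x)
      (fun y hy => (hF y (mem_Icc_of_Ico hy)).hasDerivWithinAt)
      (fun y hy => (hG y (mem_Icc_of_Ico hy)).hasDerivWithinAt)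
      (fun y hy => (hF y hy).continuousAt.continuousWithinAt)
      (fun y hy => (hG y hy).continuousAt.continuousWithinAt)
      (by simp [F_zero_eq])
    exact heq x (right_mem_Icc.2 hx0)

lemma gf_tsum (k : ℕ) : ∀ x : ℝ, 0 ≤ x → x < 1 →
    (∑' m : ℕ, q m k * x ^ m / (m ! : ℝ)) = (-Real.log (1 - x)) ^ k / (k ! : ℝ) :=
  gf k


-- L1 : basic power integral
lemma lint_pow (c : ℝ) (hc : 0 ≤ c) (m : ℕ) (hm : 1 ≤ m) :
    ∫⁻ x in Ioo (0:ℝ) 1, ENNReal.ofReal (c * x ^ (m-1)) = ENNReal.ofReal (c / m) := by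
  have hint : IntegrableOn (fun x : ℝ => c * x ^ (m-1)) (Ioo 0 1) := by
    apply Integrable.const_mul
    have : IntegrableOn (fun x : ℝ => x ^ (m-1)) (Icc (0:ℝ) 1) :=
      (continuous_pow (m-1)).continuousOn.integrableOn_Icc
    exact this.mono_set Ioo_subset_Icc_self
  rw [← ofReal_integral_eq_lintegral_ofReal hint]
  · congr 1
    rw [← integral_Ioc_eq_integral_Ioo, ← intervalIntegral.integral_of_le (by norm_num : (0:ℝ) ≤ 1)]
    rw [intervalIntegral.integral_const_mul, integral_pow]
    have h1 : m - 1 + 1 = m := Nat.succ_pred_eq_of_pos hm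
    have h3 : ((m - 1 : ℕ) : ℝ) = (m:ℝ) - 1 := by
      push_cast [Nat.cast_sub hm]; ring
    rw [h1, h3, zero_pow (by omega : m ≠ 0), one_pow]
    have h2 : ((m:ℝ) - 1 + 1 : ℝ) = m := by ring
    rw [h2]
    ring
  · apply (ae_restrict_iff' measurableSet_Ioo).2
    filter_upwards with x hx
    have := hx.1
    positivity

-- L3 : pointwise inner tsum identity
lemma inner_tsum (k : ℕ) (hk : 1 ≤ k) {x : ℝ} (hx0 : 0 < x) (hx1 : x < 1) :
    (∑' n : ℕ, ENNReal.ofReal (q (n+k) k * x ^ (n+k-1) / ((n+k)! : ℝ)))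
      = ENNReal.ofReal ((-Real.log (1 - x)) ^ k / ((k ! : ℝ) * x)) := by
  have hxabs : |x| < 1 := by rw [abs_of_pos hx0]; exact hx1
  have hsumF := summable_F k hxabs
  have hshift : Summable (fun n : ℕ => q (n+k) k * x ^ (n+k) / ((n+k)! : ℝ)) :=
    (summable_nat_add_iff k).2 hsumF
  have hterm : ∀ n : ℕ, q (n+k) k * x ^ (n+k-1) / ((n+k)! : ℝ)
      = x⁻¹ * (q (n+k) k * x ^ (n+k) / ((n+k)! : ℝ)) := by
    intro n
    have h1 : x ^ (n+k) = x * x ^ (n+k-1) := by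
      conv_lhs => rw [show n + k = (n+k-1) + 1 by omega]
      rw [pow_succ]
      ring
    rw [h1]
    field_simp
  have hsum : Summable (fun n : ℕ => q (n+k) k * x ^ (n+k-1) / ((n+k)! : ℝ)) := by
    apply Summable.congr (hshift.mul_left x⁻¹)
    intro n
    exact (hterm n).symm
  rw [← ENNReal.ofReal_tsum_of_nonneg
    (fun n => by have := q_nonneg (n+k) k; positivity) hsum]
  congr 1
  have h2 : (∑' n : ℕ, q (n+k) k * x ^ (n+k-1) / ((n+k)! : ℝ))
      = x⁻¹ * ∑' n : ℕ, q (n+k) k * x ^ (n+k) / ((n+k)! : ℝ) := by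
    rw [← tsum_mul_left]
    exact tsum_congr hterm
  have h3 : (∑' n : ℕ, q (n+k) k * x ^ (n+k) / ((n+k)! : ℝ))
      = ∑' m : ℕ, q m k * x ^ m / (m ! : ℝ) := by
    rw [← Summable.sum_add_tsum_nat_add k hsumF]
    have : ∀ i ∈ Finset.range k, q i k * x ^ i / (i ! : ℝ) = 0 := by
      intro i hi
      rw [q_eq_zero_of_lt i k (Finset.mem_range.1 hi)]
      simp
    rw [Finset.sum_eq_zero this, zero_add]
  rw [h2, h3, gf_tsum k x hx0.le hx1]
  rw [div_mul_eq_div_div]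
  ring

-- L4 : geometric expansion pointwise
lemma geom_expand (k : ℕ) {x : ℝ} (hx0 : 0 < x) (hx1 : x < 1) :
    ENNReal.ofReal ((-Real.log (1 - x)) ^ k / ((k ! : ℝ) * x))
      = ∑' m : ℕ, ENNReal.ofReal ((-Real.log (1 - x)) ^ k * (1-x) ^ m / (k ! : ℝ)) := by
  have hL : 0 ≤ -Real.log (1 - x) := by
    rw [neg_nonneg]
    apply Real.log_nonpos <;> linarith
  have hgeo : Summable (fun m : ℕ => (1-x) ^ m) :=
    summable_geometric_of_lt_one (by linarith) (by linarith)
  have hsum : Summable (fun m : ℕ => (-Real.log (1 - x)) ^ k * (1-x) ^ m / (k ! : ℝ)) := by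
    apply Summable.congr ((hgeo.mul_left ((-Real.log (1 - x)) ^ k / (k ! : ℝ))))
    intro m
    ring
  have h1x : (0:ℝ) ≤ 1 - x := by linarith
  rw [← ENNReal.ofReal_tsum_of_nonneg (fun m => div_nonneg
    (mul_nonneg (pow_nonneg hL k) (pow_nonneg h1x m)) (by positivity)) hsum]
  congr 1
  have h1 : (∑' m : ℕ, (-Real.log (1 - x)) ^ k * (1-x) ^ m / (k ! : ℝ))
      = ((-Real.log (1 - x)) ^ k / (k ! : ℝ)) * ∑' m : ℕ, (1-x) ^ m := by
    rw [← tsum_mul_left]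
    apply tsum_congr
    intro m
    ring
  rw [h1, tsum_geometric_of_lt_one (by linarith) (by linarith)]
  have h2 : (1 : ℝ) - (1 - x) = x := by ring
  rw [h2, div_mul_eq_div_div]
  ring

lemma image_eq : (fun t : ℝ => 1 - Real.exp (-t)) '' Ioi 0 = Ioo 0 1 := by
  ext y
  constructor
  · rintro ⟨t, ht, rfl⟩
    have ht0 : (0:ℝ) < t := ht
    have h1 : Real.exp (-t) < 1 := by
      rw [← Real.exp_zero]
      exact Real.exp_lt_exp.2 (by linarith)
    have h2 := Real.exp_pos (-t)
    exact ⟨by simp; linarith, by simp; linarith⟩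
  · intro hy
    refine ⟨-Real.log (1-y), ?_, ?_⟩
    · have : Real.log (1-y) < 0 :=
        Real.log_neg (by linarith [hy.2]) (by linarith [hy.1])
      simpa using this
    · show (1:ℝ) - Real.exp (-(-Real.log (1-y))) = y
      rw [neg_neg, Real.exp_log (by linarith [hy.2])]
      ring

lemma key_integral (k m : ℕ) :
    ∫⁻ x in Ioo (0:ℝ) 1, ENNReal.ofReal ((-Real.log (1-x))^k * (1-x)^m / (k ! : ℝ))
      = ENNReal.ofReal (1 / ((m:ℝ)+1)^(k+1)) := by
  set f : ℝ → ℝ := fun t => 1 - Real.exp (-t) with hfdef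
  set g : ℝ → ℝ := fun x => (-Real.log (1-x))^k * (1-x)^m with hgdef
  have hderiv : ∀ t ∈ Ioi (0:ℝ), HasDerivWithinAt f (Real.exp (-t)) (Ioi 0) t := by
    intro t _
    have h1 : HasDerivAt (fun u : ℝ => -u) (-1) t := (hasDerivAt_id t).neg
    have h2 := (Real.hasDerivAt_exp (-t)).comp t h1
    have h3 := h2.const_sub 1
    have h4 : HasDerivAt f (Real.exp (-t)) t := by
      refine h3.congr_deriv ?_
      ring
    exact h4.hasDerivWithinAt
  have hinj : InjOn f (Ioi 0) := by
    intro a _ b _ hab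
    have h1 : Real.exp (-a) = Real.exp (-b) := by
      simp only [hfdef] at hab
      linarith
    have := Real.exp_injective h1
    linarith
  have hcomp : ∀ t ∈ Ioi (0:ℝ),
      |Real.exp (-t)| • g (f t) = t ^ ((k:ℝ)) * Real.exp (-(((m:ℝ)+1) * t)) := by
    intro t _
    have h1 : (1:ℝ) - f t = Real.exp (-t) := by simp [hfdef]
    simp only [smul_eq_mul, abs_of_pos (Real.exp_pos (-t)), hgdef]
    rw [h1, Real.log_exp, neg_neg, Real.rpow_natCast, ← Real.exp_nat_mul]
    rw [mul_left_comm, ← Real.exp_add]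
    ring_nf
  have hIR : IntegrableOn (fun t : ℝ => t ^ ((k:ℝ)) * Real.exp (-(((m:ℝ)+1) * t))) (Ioi 0) := by
    have h := integrableOn_rpow_mul_exp_neg_mul_rpow
      (lt_of_lt_of_le neg_one_lt_zero (Nat.cast_nonneg k)) zero_lt_one
      (by positivity : (0:ℝ) < (m:ℝ)+1)
    apply h.congr_fun _ measurableSet_Ioi
    intro t _
    simp only [Real.rpow_one]
    ring_nf
  have hint_g : IntegrableOn g (Ioo 0 1) := by
    rw [← image_eq,
      integrableOn_image_iff_integrableOn_abs_deriv_smul measurableSet_Ioi hderiv hinj]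
    exact (hIR.congr_fun (fun t ht => (hcomp t ht).symm) measurableSet_Ioi :)
  have hval : ∫ x in Ioo (0:ℝ) 1, g x = (k ! : ℝ) / ((m:ℝ)+1)^(k+1) := by
    rw [← image_eq, integral_image_eq_integral_abs_deriv_smul measurableSet_Ioi hderiv hinj,
      setIntegral_congr_fun measurableSet_Ioi hcomp]
    have h5 : ∀ t ∈ Ioi (0:ℝ), t ^ ((k:ℝ)) * Real.exp (-(((m:ℝ)+1) * t))
        = t ^ (((k:ℝ)+1) - 1) * Real.exp (-(((m:ℝ)+1) * t)) := by
      intro t _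
      norm_num
    rw [setIntegral_congr_fun measurableSet_Ioi h5,
      Real.integral_rpow_mul_exp_neg_mul_Ioi (by positivity) (by positivity)]
    rw [Real.Gamma_nat_eq_factorial]
    have h6 : ((k:ℝ)+1) = ((k+1 : ℕ) : ℝ) := by push_cast; ring
    rw [h6, Real.rpow_natCast, div_pow, one_pow]
    ring
  have hnn : 0 ≤ᵐ[volume.restrict (Ioo (0:ℝ) 1)] fun x => g x / (k ! : ℝ) := by
    apply (ae_restrict_iff' measurableSet_Ioo).2
    filter_upwards with x hx
    have hL : 0 ≤ -Real.log (1 - x) := by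
      rw [neg_nonneg]
      apply Real.log_nonpos <;> [linarith [hx.2]; linarith [hx.1]]
    have h1x : (0:ℝ) ≤ 1 - x := by linarith [hx.2]
    have : 0 ≤ g x := mul_nonneg (pow_nonneg hL k) (pow_nonneg h1x m)
    positivity
  have heq : ∀ x, (-Real.log (1-x))^k * (1-x)^m / (k ! : ℝ) = g x / (k ! : ℝ) := fun x => rfl
  simp only [heq]
  rw [← ofReal_integral_eq_lintegral_ofReal (hint_g.div_const _) hnn]
  rw [integral_div, hval]
  congr 1
  have hkf : (k ! : ℝ) ≠ 0 := by positivity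
  field_simp

lemma hZsum (k : ℕ) (hk : 1 ≤ k) : Summable (fun m : ℕ => 1 / ((m:ℝ)+1)^(k+1)) := by
  have h : Summable (fun n : ℕ => 1 / (n:ℝ)^(k+1)) :=
    Real.summable_one_div_nat_pow.2 (by omega)
  apply ((summable_nat_add_iff 1).2 h).congr
  intro m
  push_cast
  ring_nf

lemma chain (k : ℕ) (hk : 1 ≤ k) :
    (∑' n : ℕ, ENNReal.ofReal (q (n+k) k / (((n+k)! : ℝ) * ((n+k) : ℕ))))
      = ENNReal.ofReal (∑' m : ℕ, 1 / ((m:ℝ)+1)^(k+1)) := by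
  have h1 : ∀ n : ℕ, ENNReal.ofReal (q (n+k) k / (((n+k)! : ℝ) * ((n+k) : ℕ)))
      = ∫⁻ x in Ioo (0:ℝ) 1,
          ENNReal.ofReal (q (n+k) k * x ^ (n+k-1) / ((n+k)! : ℝ)) := by
    intro n
    have hstep : ∀ x : ℝ, q (n+k) k * x ^ (n+k-1) / ((n+k)! : ℝ)
        = (q (n+k) k / ((n+k)! : ℝ)) * x ^ (n+k-1) := fun x => by ring
    simp only [hstep]
    rw [lint_pow (q (n+k) k / ((n+k)! : ℝ))
      (by have := q_nonneg (n+k) k; positivity) (n+k) (by omega)]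
    rw [div_div]
  have meas1 : ∀ n : ℕ, AEMeasurable
      (fun x : ℝ => ENNReal.ofReal (q (n+k) k * x ^ (n+k-1) / ((n+k)! : ℝ)))
      (volume.restrict (Ioo (0:ℝ) 1)) := fun n =>
    ((((measurable_id.pow_const (n+k-1)).const_mul (q (n+k) k)).div_const
      _).ennreal_ofReal).aemeasurable
  have meas2 : ∀ m : ℕ, AEMeasurable
      (fun x : ℝ => ENNReal.ofReal ((-Real.log (1-x))^k * (1-x)^m / (k ! : ℝ)))
      (volume.restrict (Ioo (0:ℝ) 1)) := fun m =>
    (((((Real.measurable_log.comp (measurable_const.sub measurable_id)).neg.pow_const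
      k).mul ((measurable_const.sub measurable_id).pow_const m)).div_const
      _).ennreal_ofReal).aemeasurable
  calc ∑' n : ℕ, ENNReal.ofReal (q (n+k) k / (((n+k)! : ℝ) * ((n+k) : ℕ)))
      = ∑' n : ℕ, ∫⁻ x in Ioo (0:ℝ) 1,
          ENNReal.ofReal (q (n+k) k * x ^ (n+k-1) / ((n+k)! : ℝ)) := tsum_congr h1
    _ = ∫⁻ x in Ioo (0:ℝ) 1, ∑' n : ℕ,
          ENNReal.ofReal (q (n+k) k * x ^ (n+k-1) / ((n+k)! : ℝ)) :=
        (lintegral_tsum meas1).symm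
    _ = ∫⁻ x in Ioo (0:ℝ) 1,
          ENNReal.ofReal ((-Real.log (1-x))^k / ((k ! : ℝ) * x)) :=
        setLIntegral_congr_fun measurableSet_Ioo
          (fun x hx => inner_tsum k hk hx.1 hx.2)
    _ = ∫⁻ x in Ioo (0:ℝ) 1, ∑' m : ℕ,
          ENNReal.ofReal ((-Real.log (1-x))^k * (1-x)^m / (k ! : ℝ)) :=
        setLIntegral_congr_fun measurableSet_Ioo
          (fun x hx => geom_expand k hx.1 hx.2)
    _ = ∑' m : ℕ, ∫⁻ x in Ioo (0:ℝ) 1,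
          ENNReal.ofReal ((-Real.log (1-x))^k * (1-x)^m / (k ! : ℝ)) :=
        lintegral_tsum meas2
    _ = ∑' m : ℕ, ENNReal.ofReal (1 / ((m:ℝ)+1)^(k+1)) :=
        tsum_congr (fun m => key_integral k m)
    _ = ENNReal.ofReal (∑' m : ℕ, 1 / ((m:ℝ)+1)^(k+1)) :=
        (ENNReal.ofReal_tsum_of_nonneg (fun m => by positivity) (hZsum k hk)).symm

lemma real_sum (k : ℕ) (hk : 1 ≤ k) :
    Summable (fun n : ℕ => q (n+k) k / (((n+k)! : ℝ) * ((n+k) : ℕ)))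
    ∧ (∑' n : ℕ, q (n+k) k / (((n+k)! : ℝ) * ((n+k) : ℕ)))
        = ∑' m : ℕ, 1 / ((m:ℝ)+1)^(k+1) := by
  set g : ℕ → ℝ := fun n => q (n+k) k / (((n+k)! : ℝ) * ((n+k) : ℕ)) with hg
  have hgnn : ∀ n, 0 ≤ g n := fun n => by
    have := q_nonneg (n+k) k
    have h2 : (0:ℝ) < ((n+k)! : ℝ) := by exact_mod_cast Nat.factorial_pos (n+k)
    have h3 : (0:ℝ) < ((n+k : ℕ) : ℝ) := by
      have : 0 < n + k := by omega
      exact_mod_cast this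
    positivity
  set g' : ℕ → ℝ≥0 := fun n => ⟨g n, hgnn n⟩ with hg'
  have hcoe : ∀ n, ENNReal.ofReal (g n) = (g' n : ℝ≥0∞) := fun n => by
    rw [hg', ENNReal.ofReal]
    congr 1
    exact Real.toNNReal_of_nonneg (hgnn n)
  have hch := chain k hk
  rw [show (∑' n : ℕ, ENNReal.ofReal (q (n+k) k / (((n+k)! : ℝ) * ((n+k) : ℕ))))
      = ∑' n, (g' n : ℝ≥0∞) from tsum_congr hcoe] at hch
  have hne : (∑' n, (g' n : ℝ≥0∞)) ≠ ⊤ := by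
    rw [hch]; exact ENNReal.ofReal_ne_top
  have hsum' : Summable g' := ENNReal.tsum_coe_ne_top_iff_summable.1 hne
  have hsumg : Summable g := by
    have := NNReal.summable_coe.2 hsum'
    apply this.congr
    intro n
    rfl
  constructor
  · exact hsumg
  · have hZnn : 0 ≤ ∑' m : ℕ, 1 / ((m:ℝ)+1)^(k+1) :=
      tsum_nonneg (fun m => by positivity)
    have h2 : ((∑' n, g' n : ℝ≥0) : ℝ≥0∞) = ENNReal.ofReal (∑' m : ℕ, 1 / ((m:ℝ)+1)^(k+1)) := by
      rw [ENNReal.coe_tsum hsum']; exact hch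
    have h3 : ((∑' n, g' n : ℝ≥0) : ℝ) = ∑' m : ℕ, 1 / ((m:ℝ)+1)^(k+1) := by
      have := congrArg ENNReal.toReal h2
      rwa [ENNReal.coe_toReal, ENNReal.toReal_ofReal hZnn] at this
    rw [← h3, NNReal.coe_tsum]
    exact tsum_congr (fun n => rfl)


end ZS

theorem zeta_eq_stirling_series (k : ℕ) (hk : 1 ≤ k) :
    riemannZeta ((k : ℂ) + 1) =
      ((∑' n : ℕ, (-1) ^ n * stirlingS1 (n + k) k /
        ((Nat.factorial (n + k)) * (n + k)) : ℝ) : ℂ) := by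
  have hre : 1 < Complex.re ((k:ℂ)+1) := by
    have h1 : ((k:ℂ)+1).re = (k:ℝ)+1 := by simp
    rw [h1]
    have : (1:ℝ) ≤ (k:ℝ) := by exact_mod_cast hk
    linarith
  rw [zeta_eq_tsum_one_div_nat_add_one_cpow hre]
  have hsum_eq : (∑' n : ℕ, (-1:ℝ) ^ n * stirlingS1 (n + k) k /
        ((Nat.factorial (n + k)) * (n + k)))
      = ∑' m : ℕ, 1 / ((m:ℝ)+1)^(k+1) := by
    rw [← (ZS.real_sum k hk).2]
    apply tsum_congr
    intro n
    rw [ZS.term_eq n k]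
    push_cast
    ring_nf
  rw [hsum_eq, Complex.ofReal_tsum]
  apply tsum_congr
  intro n
  have h1 : ((k:ℂ)+1) = ((k+1 : ℕ) : ℂ) := by push_cast; ring
  rw [h1, Complex.cpow_natCast]
  push_cast
  ring
end

section
/- For every integer k ≥ 1, ζ(k+3) = (1/((k+1)(k+2))) ∑_{n=k}^{∞} (-1)^{n-k} s(n,k) (H_n^2 + H_n^{(2)}) / (n! · n), where ζ is the Riemann zeta function. -/
open scoped BigOperators

noncomputable def H (n : ℕ) : ℝ := ∑ j ∈ Finset.range n, 1 / (j + 1 : ℝ)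

noncomputable def Hgen (p n : ℕ) : ℝ := ∑ j ∈ Finset.range n, 1 / ((j + 1 : ℝ) ^ p)

open MeasureTheory Set Real

namespace ZetaAux


noncomputable def A (n k : ℕ) : ℝ := (-1 : ℝ) ^ (n + k) * stirlingS1 n k

lemma stirling_zero (k : ℕ) : stirlingS1 0 k = if k = 0 then 1 else 0 := by
  simp [stirlingS1, Polynomial.coeff_one]

lemma stirling_rec (n k : ℕ) :
    stirlingS1 (n + 1) (k + 1) = stirlingS1 n k - n * stirlingS1 n (k + 1) := by
  unfold stirlingS1
  rw [Finset.prod_range_succ, mul_sub, Polynomial.coeff_sub, Polynomial.coeff_mul_X,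
    Polynomial.coeff_mul_C]
  ring

lemma stirling_zero_coeff (n : ℕ) (hn : n ≠ 0) : stirlingS1 n 0 = 0 := by
  unfold stirlingS1
  rw [Polynomial.coeff_zero_eq_eval_zero, Polynomial.eval_prod]
  apply Finset.prod_eq_zero (Finset.mem_range.mpr (Nat.pos_of_ne_zero hn))
  simp

lemma stirling_eq_zero_of_lt {n k : ℕ} (h : n < k) : stirlingS1 n k = 0 := by
  unfold stirlingS1
  apply Polynomial.coeff_eq_zero_of_natDegree_lt
  calc (∏ i ∈ Finset.range n, (Polynomial.X - Polynomial.C (i : ℝ))).natDegree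
      ≤ ∑ i ∈ Finset.range n, (Polynomial.X - Polynomial.C (i : ℝ)).natDegree :=
        Polynomial.natDegree_prod_le _ _
    _ ≤ n := by
        refine le_trans (Finset.sum_le_sum (fun i _ => le_of_eq (Polynomial.natDegree_X_sub_C (i:ℝ)))) ?_
        simp
    _ < k := h

lemma A_zero (k : ℕ) : A 0 k = if k = 0 then 1 else 0 := by
  simp [A, stirling_zero]
  split <;> simp_all

lemma A_zero_right (n : ℕ) (hn : n ≠ 0) : A n 0 = 0 := by
  simp [A, stirling_zero_coeff n hn]

lemma A_eq_zero_of_lt {n k : ℕ} (h : n < k) : A n k = 0 := by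
  simp [A, stirling_eq_zero_of_lt h]

lemma A_rec (n k : ℕ) : A (n + 1) (k + 1) = n * A n (k + 1) + A n k := by
  unfold A
  rw [stirling_rec]
  have h1 : (-1 : ℝ) ^ (n + 1 + (k + 1)) = (-1) ^ (n + k) := by
    rw [show n + 1 + (k + 1) = (n + k) + 2 by ring, pow_add]
    norm_num
  rw [h1]
  have h2 : (-1 : ℝ) ^ (n + k) * stirlingS1 n (k+1) = -((-1 : ℝ) ^ (n + (k+1)) * stirlingS1 n (k+1)) := by
    rw [show n + (k+1) = (n + k) + 1 by ring, pow_succ]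
    ring
  rw [mul_sub]
  rw [show (-1 : ℝ) ^ (n + k) * (↑n * stirlingS1 n (k + 1)) = ↑n * ((-1 : ℝ) ^ (n+k) * stirlingS1 n (k+1)) by ring, h2]
  ring

lemma A_nonneg (n k : ℕ) : 0 ≤ A n k := by
  induction n generalizing k with
  | zero => rw [A_zero]; split <;> norm_num
  | succ n ih =>
    cases k with
    | zero => rw [A_zero_right _ (Nat.succ_ne_zero n)]
    | succ k =>
      rw [A_rec]
      have := ih k
      have := ih (k+1)
      positivity

/-- The key identity `A (N+1) (k+1) = N! * ∑_{n ≤ N} A n k / n!`. -/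
lemma A_key (k N : ℕ) :
    A (N + 1) (k + 1) = N.factorial * ∑ n ∈ Finset.range (N + 1), A n k / n.factorial := by
  induction N with
  | zero => simp [A_rec]
  | succ N ih =>
    have hS : ∑ n ∈ Finset.range (N+1+1), A n k / n.factorial
        = (∑ n ∈ Finset.range (N+1), A n k / n.factorial) + A (N+1) k / (N+1).factorial :=
      Finset.sum_range_succ _ _
    have hfac : ((N+1).factorial : ℝ) = ((N:ℝ)+1) * N.factorial := by
      rw [Nat.factorial_succ]; push_cast; ring
    have hne : ((N:ℝ)+1) * N.factorial ≠ 0 := by positivity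
    rw [A_rec, ih, hS, hfac]
    push_cast
    field_simp

/-- Crude bound: `A n k ≤ n! * (n+1)^k`. -/
lemma A_le (k n : ℕ) : A n k ≤ n.factorial * ((n : ℝ) + 1) ^ k := by
  induction k generalizing n with
  | zero =>
    cases n with
    | zero => simp [A_zero]
    | succ n => rw [A_zero_right _ (Nat.succ_ne_zero n)]; positivity
  | succ k ih =>
    cases n with
    | zero => rw [A_zero]; norm_num
    | succ N =>
      rw [A_key]
      have hbound : ∑ n ∈ Finset.range (N + 1), A n k / n.factorial
          ≤ ∑ n ∈ Finset.range (N + 1), ((N : ℝ) + 1) ^ k := by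
        apply Finset.sum_le_sum
        intro i hi
        have hi' : i ≤ N := Nat.lt_succ_iff.mp (Finset.mem_range.mp hi)
        have h1 : A i k / i.factorial ≤ ((i : ℝ) + 1) ^ k := by
          rw [div_le_iff₀ (by positivity)]
          calc A i k ≤ i.factorial * ((i : ℝ) + 1) ^ k := ih i
            _ = ((i : ℝ)+1)^k * i.factorial := by ring
        refine h1.trans ?_
        apply pow_le_pow_left₀ (by positivity)
        have : (i:ℝ) ≤ N := by exact_mod_cast hi'
        push_cast; linarith
      calc (N.factorial : ℝ) * ∑ n ∈ Finset.range (N + 1), A n k / n.factorial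
          ≤ N.factorial * ((N+1) * ((N : ℝ) + 1) ^ k) := by
            apply mul_le_mul_of_nonneg_left _ (by positivity)
            rw [Finset.sum_const, Finset.card_range] at hbound
            simpa using hbound
        _ = ((N+1) * N.factorial : ℝ) * ((N : ℝ)+1)^k := by ring
        _ ≤ ((N+1).factorial : ℝ) * (((N:ℝ)+1) + 1)^(k+1) := by
            rw [Nat.factorial_succ]
            push_cast
            have h1 : ((N:ℝ)+1)^k ≤ ((N:ℝ)+1+1)^k := by
              apply pow_le_pow_left₀ (by positivity); linarith
            have h2 : ((N:ℝ)+1+1)^k ≤ ((N:ℝ)+1+1)^(k+1) := by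
              apply pow_le_pow_right₀ (by linarith) (Nat.le_succ k)
            exact mul_le_mul_of_nonneg_left (h1.trans h2) (by positivity)
        _ = ((N+1).factorial : ℝ) * (((N+1:ℕ) : ℝ) + 1)^(k+1) := by push_cast; ring
      


lemma H_succ (m : ℕ) : H (m + 1) = H m + 1 / ((m:ℝ) + 1) := by
  rw [H, Finset.sum_range_succ]; rfl

lemma Hgen_succ (p m : ℕ) : Hgen p (m + 1) = Hgen p m + 1 / ((m:ℝ) + 1) ^ p := by
  rw [Hgen, Finset.sum_range_succ]; rfl

lemma choose_div (N i : ℕ) :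
    (N.choose i : ℝ) / ((i:ℝ) + 1) = ((N+1).choose (i+1) : ℝ) / ((N:ℝ) + 1) := by
  have h := Nat.add_one_mul_choose_eq N i
  have h' : ((N:ℝ)+1) * N.choose i = ((N+1).choose (i+1) : ℝ) * ((i:ℝ)+1) := by
    exact_mod_cast h
  rw [div_eq_div_iff (by positivity) (by positivity)]
  linarith [h']

lemma alt_sum (N : ℕ) : ∑ i ∈ Finset.range (N + 1), (-1:ℝ)^i * ((N+1).choose (i+1)) = 1 := by
  have h := Int.alternating_sum_range_choose_of_ne (Nat.succ_ne_zero N)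
  have h' : ∑ j ∈ Finset.range (N + 2), (-1:ℝ)^j * ((N+1).choose j) = 0 := by
    exact_mod_cast h
  rw [Finset.sum_range_succ'] at h'
  simp only [pow_succ, Nat.choose_zero_right] at h'
  have : ∑ i ∈ Finset.range (N+1), (-1:ℝ)^i * (-1) * ((N+1).choose (i+1)) + 1 = 0 := by
    convert h' using 2
    norm_num
  have h2 : ∑ i ∈ Finset.range (N+1), (-1:ℝ)^i * (-1) * ((N+1).choose (i+1))
      = -∑ i ∈ Finset.range (N+1), (-1:ℝ)^i * ((N+1).choose (i+1)) := by
    rw [← Finset.sum_neg_distrib]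
    exact Finset.sum_congr rfl fun i _ => by ring
  rw [h2] at this
  linarith

lemma id1 (N : ℕ) :
    ∑ i ∈ Finset.range (N + 1), (-1:ℝ)^i * (N.choose i) / ((i:ℝ) + 1) = 1 / ((N:ℝ) + 1) := by
  have : ∀ i ∈ Finset.range (N+1), (-1:ℝ)^i * (N.choose i) / ((i:ℝ) + 1)
      = (-1:ℝ)^i * ((N+1).choose (i+1)) / ((N:ℝ) + 1) := by
    intro i _
    rw [mul_div_assoc, choose_div, mul_div_assoc]
  rw [Finset.sum_congr rfl this, ← Finset.sum_div]
  rw [show ∑ i ∈ Finset.range (N+1), (-1:ℝ)^i * ((N+1).choose (i+1))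
      = (1:ℝ) from alt_sum N]

lemma id2' (m : ℕ) :
    ∑ i ∈ Finset.range m, (-1:ℝ)^i * (m.choose (i+1)) / ((i:ℝ) + 1) = H m := by
  induction m with
  | zero => simp [H]
  | succ m ih =>
    have hsplit : ∀ i ∈ Finset.range (m+1), (-1:ℝ)^i * ((m+1).choose (i+1)) / ((i:ℝ) + 1)
        = (-1:ℝ)^i * (m.choose (i+1)) / ((i:ℝ) + 1) + (-1:ℝ)^i * (m.choose i) / ((i:ℝ) + 1) := by
      intro i _
      rw [Nat.choose_succ_succ]
      push_cast
      ring
    rw [Finset.sum_congr rfl hsplit, Finset.sum_add_distrib]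
    have h1 : ∑ i ∈ Finset.range (m+1), (-1:ℝ)^i * (m.choose (i+1)) / ((i:ℝ) + 1)
        = ∑ i ∈ Finset.range m, (-1:ℝ)^i * (m.choose (i+1)) / ((i:ℝ) + 1) := by
      rw [Finset.sum_range_succ]
      simp [Nat.choose_succ_self]
    rw [h1, ih, id1 m, H_succ]

lemma id2 (N : ℕ) :
    ∑ i ∈ Finset.range (N + 1), (-1:ℝ)^i * (N.choose i) / ((i:ℝ) + 1)^2
      = H (N+1) / ((N:ℝ) + 1) := by
  have : ∀ i ∈ Finset.range (N+1), (-1:ℝ)^i * (N.choose i) / ((i:ℝ) + 1)^2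
      = ((-1:ℝ)^i * ((N+1).choose (i+1)) / ((i:ℝ) + 1)) / ((N:ℝ) + 1) := by
    intro i _
    have hcd := choose_div N i
    have hi : ((i:ℝ)+1) ≠ 0 := by positivity
    calc (-1:ℝ)^i * (N.choose i) / ((i:ℝ)+1)^2
        = ((-1:ℝ)^i / ((i:ℝ)+1)) * ((N.choose i:ℝ)/((i:ℝ)+1)) := by field_simp
      _ = ((-1:ℝ)^i / ((i:ℝ)+1)) * (((N+1).choose (i+1):ℝ)/((N:ℝ)+1)) := by rw [hcd]
      _ = ((-1:ℝ)^i * ((N+1).choose (i+1)) / ((i:ℝ)+1)) / ((N:ℝ)+1) := by ring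
  rw [Finset.sum_congr rfl this, ← Finset.sum_div, id2' (N+1)]

lemma id3' (m : ℕ) :
    ∑ i ∈ Finset.range m, (-1:ℝ)^i * (m.choose (i+1)) / ((i:ℝ) + 1)^2
      = (H m ^ 2 + Hgen 2 m) / 2 := by
  induction m with
  | zero => simp [H, Hgen]
  | succ m ih =>
    have hsplit : ∀ i ∈ Finset.range (m+1), (-1:ℝ)^i * ((m+1).choose (i+1)) / ((i:ℝ) + 1)^2
        = (-1:ℝ)^i * (m.choose (i+1)) / ((i:ℝ) + 1)^2 + (-1:ℝ)^i * (m.choose i) / ((i:ℝ) + 1)^2 := by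
      intro i _
      rw [Nat.choose_succ_succ]
      push_cast
      ring
    rw [Finset.sum_congr rfl hsplit, Finset.sum_add_distrib]
    have h1 : ∑ i ∈ Finset.range (m+1), (-1:ℝ)^i * (m.choose (i+1)) / ((i:ℝ) + 1)^2
        = ∑ i ∈ Finset.range m, (-1:ℝ)^i * (m.choose (i+1)) / ((i:ℝ) + 1)^2 := by
      rw [Finset.sum_range_succ]
      simp [Nat.choose_succ_self]
    rw [h1, ih, id2 m, H_succ, Hgen_succ]
    have hm : ((m:ℝ)+1) ≠ 0 := by positivity
    field_simp
    ring

lemma id3 (N : ℕ) :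
    ∑ i ∈ Finset.range (N + 1), (-1:ℝ)^i * (N.choose i) / ((i:ℝ) + 1)^3
      = (H (N+1) ^ 2 + Hgen 2 (N+1)) / (2 * ((N:ℝ) + 1)) := by
  have : ∀ i ∈ Finset.range (N+1), (-1:ℝ)^i * (N.choose i) / ((i:ℝ) + 1)^3
      = ((-1:ℝ)^i * ((N+1).choose (i+1)) / ((i:ℝ) + 1)^2) / ((N:ℝ) + 1) := by
    intro i _
    have hcd := choose_div N i
    have hi : ((i:ℝ)+1) ≠ 0 := by positivity
    calc (-1:ℝ)^i * (N.choose i) / ((i:ℝ)+1)^3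
        = ((-1:ℝ)^i / ((i:ℝ)+1)^2) * ((N.choose i:ℝ)/((i:ℝ)+1)) := by field_simp
      _ = ((-1:ℝ)^i / ((i:ℝ)+1)^2) * (((N+1).choose (i+1):ℝ)/((N:ℝ)+1)) := by rw [hcd]
      _ = ((-1:ℝ)^i * ((N+1).choose (i+1)) / ((i:ℝ)+1)^2) / ((N:ℝ)+1) := by ring
  rw [Finset.sum_congr rfl this, ← Finset.sum_div, id3' (N+1), div_div]



lemma summable_poly_geom (k : ℕ) {x : ℝ} (hx0 : 0 ≤ x) (hx1 : x < 1) :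
    Summable (fun n : ℕ => ((n : ℝ) + 1) ^ k * x ^ n) := by
  have h : ∀ n : ℕ, ((n : ℝ) + 1) ^ k * x ^ n
      = ∑ j ∈ Finset.range (k + 1), (k.choose j : ℝ) * ((n : ℝ) ^ j * x ^ n) := by
    intro n
    rw [add_pow, Finset.sum_mul]
    congr 1 with j
    rw [one_pow, mul_one]; ring
  rw [funext h]
  apply summable_sum
  intro j _
  exact (summable_pow_mul_geometric_of_norm_lt_one (R := ℝ) j (r := x) (by rwa [Real.norm_eq_abs, abs_of_nonneg hx0])).mul_left _

/-- termwise bound -/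
lemma A_term_le (k n : ℕ) {x : ℝ} (hx0 : 0 ≤ x) :
    A n k * x ^ n / n.factorial ≤ ((n : ℝ) + 1) ^ k * x ^ n := by
  have h1 : A n k * x ^ n ≤ (n.factorial * ((n : ℝ) + 1) ^ k) * x ^ n :=
    mul_le_mul_of_nonneg_right (A_le k n) (by positivity)
  rw [div_le_iff₀ (by positivity : (0:ℝ) < (n.factorial:ℝ))]
  calc A n k * x ^ n ≤ (n.factorial * ((n : ℝ) + 1) ^ k) * x ^ n := h1
    _ = ((n : ℝ) + 1) ^ k * x ^ n * n.factorial := by ring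

lemma summable_A (k : ℕ) {x : ℝ} (hx0 : 0 ≤ x) (hx1 : x < 1) :
    Summable (fun n : ℕ => A n k * x ^ n / n.factorial) := by
  apply Summable.of_nonneg_of_le
    (fun n => div_nonneg (mul_nonneg (A_nonneg n k) (pow_nonneg hx0 n)) (Nat.cast_nonneg _))
    (fun n => A_term_le k n hx0) (summable_poly_geom k hx0 hx1)

/-- partial sums of `A n k / n!` -/
noncomputable def cp (k N : ℕ) : ℝ := ∑ n ∈ Finset.range (N + 1), A n k / n.factorial

lemma cp_nonneg (k N : ℕ) : 0 ≤ cp k N :=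
  Finset.sum_nonneg fun n _ => div_nonneg (A_nonneg n k) (Nat.cast_nonneg _)

lemma cp_le (k N : ℕ) : cp k N ≤ ((N : ℝ) + 1) ^ (k + 1) := by
  have h : ∀ n ∈ Finset.range (N + 1), A n k / n.factorial ≤ ((N : ℝ) + 1) ^ k := by
    intro n hn
    have hn' : n ≤ N := Nat.lt_succ_iff.mp (Finset.mem_range.mp hn)
    have h1 : A n k / n.factorial ≤ ((n : ℝ) + 1) ^ k := by
      rw [div_le_iff₀ (by positivity : (0:ℝ) < (n.factorial:ℝ))]
      calc A n k ≤ n.factorial * ((n : ℝ) + 1) ^ k := A_le k n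
        _ = ((n : ℝ)+1)^k * n.factorial := by ring
    refine h1.trans (pow_le_pow_left₀ (by positivity) ?_ k)
    have : (n:ℝ) ≤ N := by exact_mod_cast hn'
    linarith
  calc cp k N ≤ ∑ _n ∈ Finset.range (N + 1), ((N : ℝ) + 1) ^ k := Finset.sum_le_sum h
    _ = ((N:ℝ) + 1) * ((N:ℝ)+1)^k := by
        rw [Finset.sum_const, Finset.card_range]; push_cast; ring
    _ = ((N:ℝ)+1)^(k+1) := by ring

lemma summable_cp (k : ℕ) {x : ℝ} (hx0 : 0 ≤ x) (hx1 : x < 1) :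
    Summable (fun N : ℕ => cp k N * x ^ N) := by
  apply Summable.of_nonneg_of_le (fun n => mul_nonneg (cp_nonneg k n) (pow_nonneg hx0 n))
    (fun n => mul_le_mul_of_nonneg_right (cp_le k n) (by positivity))
    (summable_poly_geom (k+1) hx0 hx1)

lemma cp_mul_one_sub {k : ℕ} {u : ℝ} (hu0 : 0 ≤ u) (hu1 : u < 1) :
    (∑' N, cp k N * u ^ N) * (1 - u) = ∑' n, A n k * u ^ n / n.factorial := by
  have hS := summable_cp k hu0 hu1
  have hS1 : Summable (fun N : ℕ => cp k (N + 1) * u ^ (N + 1)) :=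
    (summable_nat_add_iff 1).mpr hS
  have hS2 : Summable (fun N : ℕ => cp k N * u ^ (N + 1)) := by
    have := hS.mul_right u
    refine this.congr fun N => by ring
  have hA := summable_A k hu0 hu1
  have expand : (∑' N, cp k N * u ^ N) * (1 - u)
      = (∑' N, cp k N * u ^ N) - ∑' N, cp k N * u ^ (N + 1) := by
    rw [mul_sub, mul_one, ← tsum_mul_right]
    congr 1
    exact tsum_congr fun N => by ring
  rw [expand, Summable.tsum_eq_zero_add hS]
  have step : cp k 0 * u ^ 0 + ∑' N, cp k (N+1) * u ^ (N+1) - ∑' N, cp k N * u ^ (N + 1)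
      = cp k 0 + ∑' N, (cp k (N+1) - cp k N) * u ^ (N+1) := by
    rw [pow_zero, mul_one, add_sub_assoc, ← Summable.tsum_sub hS1 hS2]
    congr 1
    exact tsum_congr fun N => by ring
  rw [step]
  have hdiff : ∀ N : ℕ, (cp k (N+1) - cp k N) = A (N+1) k / (N+1).factorial := by
    intro N
    unfold cp
    rw [Finset.sum_range_succ (f := fun n => A n k / n.factorial) (n := N+1)]
    ring
  have hcp0 : cp k 0 = A 0 k := by simp [cp]
  rw [Summable.tsum_eq_zero_add hA, hcp0]
  congr 1
  · simp
  · exact tsum_congr fun N => by rw [hdiff N]; ring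

/-- The generating function identity. -/
theorem gf (k : ℕ) : ∀ {x : ℝ}, 0 ≤ x → x < 1 →
    ∑' n, A n k * x ^ n / n.factorial = (-Real.log (1 - x)) ^ k / k.factorial := by
  induction k with
  | zero =>
    intro x hx0 hx1
    rw [tsum_eq_single 0 (fun n hn => by simp [A_zero_right n hn])]
    simp [A_zero]
  | succ k ih =>
    intro x hx0 hx1
    -- FTC computation of the RHS
    have hcont : ContinuousOn (fun u : ℝ => (-Real.log (1 - u)) ^ k / (k.factorial * (1 - u)))
        (Set.uIcc 0 x) := by
      have hsub : Set.uIcc (0:ℝ) x ⊆ Set.Iio 1 := by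
        rw [Set.uIcc_of_le hx0]
        intro t ht
        exact lt_of_le_of_lt ht.2 hx1
      apply ContinuousOn.div
      · apply ContinuousOn.pow
        apply ContinuousOn.neg
        apply Real.continuousOn_log.comp (by fun_prop)
        intro t ht
        have := hsub ht
        simp only [Set.mem_Iio] at this
        simp only [Set.mem_compl_iff, Set.mem_singleton_iff]
        intro h; rw [sub_eq_zero] at h; exact absurd h.symm (ne_of_lt this)
      · fun_prop
      · intro t ht
        have := hsub ht
        simp only [Set.mem_Iio] at this
        have h1 : (0:ℝ) < 1 - t := by linarith
        positivity
    have hderiv : ∀ t ∈ Set.uIcc (0:ℝ) x,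
        HasDerivAt (fun u : ℝ => (-Real.log (1 - u)) ^ (k+1) / (k+1).factorial)
          ((-Real.log (1 - t)) ^ k / (k.factorial * (1 - t))) t := by
      intro t ht
      rw [Set.uIcc_of_le hx0] at ht
      have ht1 : t < 1 := lt_of_le_of_lt ht.2 hx1
      have h1t : (0:ℝ) < 1 - t := by linarith
      have h1 : HasDerivAt (fun u : ℝ => 1 - u) (-1) t := by
        simpa using (hasDerivAt_id t).const_sub 1
      have h2 : HasDerivAt (fun u : ℝ => Real.log (1 - u)) ((1-t)⁻¹ * -1) t :=
        (Real.hasDerivAt_log (ne_of_gt h1t)).comp t h1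
      have h3 : HasDerivAt (fun u : ℝ => -Real.log (1 - u)) ((1-t)⁻¹) t := by
        exact h2.neg.congr_deriv (by ring)
      have h4 : HasDerivAt (fun u : ℝ => (-Real.log (1 - u)) ^ (k+1))
          ((k+1) * (-Real.log (1 - t)) ^ k * (1-t)⁻¹) t := by
        exact (h3.pow (k+1)).congr_deriv (by simp)
      have h5 := h4.div_const ((k+1).factorial : ℝ)
      refine h5.congr_deriv ?_
      rw [Nat.factorial_succ]
      push_cast
      field_simp
    have hii : IntervalIntegrable
        (fun u : ℝ => (-Real.log (1 - u)) ^ k / (k.factorial * (1 - u))) volume 0 x :=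
      hcont.intervalIntegrable
    have hftc := intervalIntegral.integral_eq_sub_of_hasDerivAt hderiv hii
    -- rewrite the integrand as the series
    have hcongr : ∀ u ∈ Set.uIcc (0:ℝ) x,
        (-Real.log (1 - u)) ^ k / (k.factorial * (1 - u)) = ∑' N, cp k N * u ^ N := by
      intro u hu
      rw [Set.uIcc_of_le hx0] at hu
      have hu1 : u < 1 := lt_of_le_of_lt hu.2 hx1
      have hu0 : 0 ≤ u := hu.1
      have h1u : (0:ℝ) < 1 - u := by linarith
      have h := cp_mul_one_sub (k := k) hu0 hu1
      rw [ih hu0 hu1] at h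
      have h2 : (∑' N, cp k N * u ^ N)
          = (-Real.log (1 - u)) ^ k / k.factorial / (1 - u) := by
        rw [eq_div_iff (ne_of_gt h1u), h]
      rw [h2, div_div]
    rw [intervalIntegral.integral_congr hcongr] at hftc
    -- termwise integration
    have hint : ∀ N : ℕ, IntegrableOn (fun u : ℝ => cp k N * u ^ N) (Set.Ioc 0 x) volume :=
      fun N => (Continuous.integrableOn_Ioc (by continuity))
    have hval : ∀ N : ℕ, ∫ u in Set.Ioc 0 x, cp k N * u ^ N = cp k N * (x ^ (N+1) / (N+1)) := by
      intro N
      rw [← intervalIntegral.integral_of_le hx0, intervalIntegral.integral_const_mul,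
        integral_pow]
      norm_num
    have hnorm : ∀ N : ℕ, ∫ u in Set.Ioc 0 x, ‖cp k N * u ^ N‖ = cp k N * (x ^ (N+1) / (N+1)) := by
      intro N
      rw [← hval N]
      apply setIntegral_congr_fun measurableSet_Ioc
      intro u hu
      dsimp only
      rw [Real.norm_eq_abs, abs_of_nonneg (mul_nonneg (cp_nonneg k N) (pow_nonneg (le_of_lt hu.1) N))]
    have hsum : Summable (fun N : ℕ => ∫ u in Set.Ioc 0 x, ‖cp k N * u ^ N‖) := by
      rw [funext hnorm]
      apply Summable.of_nonneg_of_le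
        (fun N => mul_nonneg (cp_nonneg k N) (by positivity))
        (fun N => ?_) (summable_cp k hx0 hx1)
      have h1 : x ^ (N+1) / ((N:ℝ)+1) ≤ x ^ N := by
        rw [div_le_iff₀ (by positivity)]
        calc x^(N+1) = x^N * x := by ring
          _ ≤ x^N * 1 := by
              apply mul_le_mul_of_nonneg_left (le_of_lt hx1) (by positivity)
          _ ≤ x^N * ((N:ℝ)+1) := by
              apply mul_le_mul_of_nonneg_left (by push_cast; linarith [Nat.cast_nonneg (α := ℝ) N]) (by positivity)
      exact mul_le_mul_of_nonneg_left h1 (cp_nonneg k N)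
    have hinterchange := MeasureTheory.integral_tsum_of_summable_integral_norm hint hsum
    rw [intervalIntegral.integral_of_le hx0, ← hinterchange] at hftc
    simp only [hval] at hftc
    -- identify with the (k+1)-series
    have hid : ∀ N : ℕ, cp k N * (x ^ (N+1) / (N+1)) = A (N+1) (k+1) * x^(N+1) / (N+1).factorial := by
      intro N
      rw [A_key k N]
      have : ((N+1).factorial : ℝ) = ((N:ℝ)+1) * N.factorial := by
        rw [Nat.factorial_succ]; push_cast; ring
      rw [this]
      unfold cp
      field_simp
    have hA1 := summable_A (k+1) hx0 hx1
    have hshift : ∑' n, A n (k+1) * x ^ n / n.factorial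
        = ∑' N, A (N+1) (k+1) * x ^ (N+1) / (N+1).factorial := by
      rw [Summable.tsum_eq_zero_add hA1]
      simp [A_zero]
    rw [hshift, ← tsum_congr hid, hftc]
    simp [Real.log_one]



lemma integrableOn_pow_exp (m : ℕ) {c : ℝ} (hc : 0 < c) :
    IntegrableOn (fun v : ℝ => v ^ m * Real.exp (-(c * v))) (Set.Ioi 0) := by
  have hm : (-1:ℝ) < (m:ℝ) := lt_of_lt_of_le (by norm_num) (Nat.cast_nonneg m)
  have h := integrableOn_rpow_mul_exp_neg_mul_rpow (s := (m:ℝ)) (p := 1) hm zero_lt_one hc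
  apply h.congr_fun _ measurableSet_Ioi
  intro x hx
  dsimp only
  rw [Real.rpow_one, Real.rpow_natCast]
  ring_nf

lemma integral_pow_exp (m : ℕ) {c : ℝ} (hc : 0 < c) :
    ∫ v in Set.Ioi (0:ℝ), v ^ m * Real.exp (-(c * v)) = m.factorial / c ^ (m + 1) := by
  have h := integral_rpow_mul_exp_neg_mul_Ioi (a := (m:ℝ)+1) (by positivity) hc
  have hcongr : ∫ v in Set.Ioi (0:ℝ), v ^ m * Real.exp (-(c * v))
      = ∫ t in Set.Ioi (0:ℝ), t ^ ((m:ℝ) + 1 - 1) * Real.exp (-(c * t)) := by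
    apply setIntegral_congr_fun measurableSet_Ioi
    intro t ht
    dsimp only
    rw [add_sub_cancel_right, Real.rpow_natCast]
  rw [hcongr, h, Real.Gamma_nat_eq_factorial]
  have h1 : ((1:ℝ)/c) ^ ((m:ℝ) + 1) = (1/c) ^ ((m + 1 : ℕ)) := by
    rw [show ((m:ℝ) + 1) = ((m + 1 : ℕ) : ℝ) from by push_cast; ring, Real.rpow_natCast]
  rw [h1, one_div, inv_pow, inv_mul_eq_div]

lemma expand_binom (N : ℕ) (v : ℝ) :
    v ^ 2 * Real.exp (-v) * (1 - Real.exp (-v)) ^ N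
      = ∑ m ∈ Finset.range (N + 1),
          ((-1:ℝ) ^ (m + N) * (N.choose m)) * (v ^ 2 * Real.exp (-(((N - m + 1 : ℕ) : ℝ) * v))) := by
  rw [sub_pow, Finset.mul_sum]
  apply Finset.sum_congr rfl
  intro m _
  have h1 : (Real.exp (-v)) ^ (N - m) = Real.exp (-(((N - m : ℕ) : ℝ) * v)) := by
    rw [← Real.exp_nat_mul]
    ring_nf
  have h2 : Real.exp (-v) * Real.exp (-(((N - m : ℕ) : ℝ) * v))
      = Real.exp (-(((N - m + 1 : ℕ) : ℝ) * v)) := by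
    rw [← Real.exp_add]
    congr 1
    push_cast
    ring
  rw [one_pow, h1]
  rw [show v ^ 2 * Real.exp (-v) * ((-1:ℝ) ^ (m + N) * 1 * Real.exp (-(((N - m : ℕ) : ℝ) * v)) * (N.choose m))
      = ((-1:ℝ) ^ (m + N) * (N.choose m)) * (v ^ 2 * (Real.exp (-v) * Real.exp (-(((N - m : ℕ) : ℝ) * v)))) from by ring, h2]

lemma integrableOn_M1 (N : ℕ) :
    IntegrableOn (fun v : ℝ => v ^ 2 * Real.exp (-v) * (1 - Real.exp (-v)) ^ N) (Set.Ioi 0) := by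
  have : (fun v : ℝ => v ^ 2 * Real.exp (-v) * (1 - Real.exp (-v)) ^ N)
      = fun v => ∑ m ∈ Finset.range (N + 1),
          ((-1:ℝ) ^ (m + N) * (N.choose m)) * (v ^ 2 * Real.exp (-(((N - m + 1 : ℕ) : ℝ) * v))) :=
    funext fun v => expand_binom N v
  rw [this]
  apply integrable_finset_sum
  intro m _
  exact ((integrableOn_pow_exp 2 (by positivity : (0:ℝ) < ((N - m + 1 : ℕ) : ℝ))).const_mul _)

lemma integral_M1 (N : ℕ) :
    ∫ v in Set.Ioi (0:ℝ), v ^ 2 * Real.exp (-v) * (1 - Real.exp (-v)) ^ N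
      = (H (N+1) ^ 2 + Hgen 2 (N+1)) / ((N:ℝ) + 1) := by
  have hrw : (fun v : ℝ => v ^ 2 * Real.exp (-v) * (1 - Real.exp (-v)) ^ N)
      = fun v => ∑ m ∈ Finset.range (N + 1),
          ((-1:ℝ) ^ (m + N) * (N.choose m)) * (v ^ 2 * Real.exp (-(((N - m + 1 : ℕ) : ℝ) * v))) :=
    funext fun v => expand_binom N v
  rw [hrw, integral_finset_sum _ (fun m _ =>
    ((integrableOn_pow_exp 2 (by positivity : (0:ℝ) < ((N - m + 1 : ℕ) : ℝ))).const_mul _))]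
  have hval : ∀ m ∈ Finset.range (N + 1),
      ∫ v in Set.Ioi (0:ℝ), ((-1:ℝ) ^ (m + N) * (N.choose m)) * (v ^ 2 * Real.exp (-(((N - m + 1 : ℕ) : ℝ) * v)))
        = (fun i => 2 * ((-1:ℝ) ^ i * (N.choose i) / ((i:ℝ) + 1) ^ 3)) (N + 1 - 1 - m) := by
    intro m hm
    have hmN : m ≤ N := Nat.lt_succ_iff.mp (Finset.mem_range.mp hm)
    rw [MeasureTheory.integral_const_mul, integral_pow_exp 2 (by positivity)]
    dsimp only
    have e0 : N + 1 - 1 - m = N - m := by omega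
    rw [e0]
    have e1 : N.choose (N - m) = N.choose m := Nat.choose_symm hmN
    have e2 : (-1:ℝ) ^ (N - m) = (-1:ℝ) ^ (m + N) := by
      have h3 : m + N = (N - m) + 2 * m := by omega
      rw [h3, pow_add, pow_mul]
      norm_num
    rw [e1, e2]
    have e3 : ((N - m + 1 : ℕ) : ℝ) = ((N - m : ℕ) : ℝ) + 1 := by push_cast; ring
    rw [e3]
    norm_num
    ring
  rw [Finset.sum_congr rfl hval,
    Finset.sum_range_reflect (fun i => 2 * ((-1:ℝ) ^ i * (N.choose i) / ((i:ℝ) + 1) ^ 3)) (N+1)]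
  rw [← Finset.mul_sum, id3 N]
  have hN : ((N:ℝ) + 1) ≠ 0 := by positivity
  field_simp


lemma exp_lt_one {v : ℝ} (hv : 0 < v) : Real.exp (-v) < 1 := by
  rw [Real.exp_lt_one_iff]; linarith

lemma summable_inv_pow {p : ℕ} (hp : 2 ≤ p) :
    Summable (fun j : ℕ => 1 / ((j:ℝ) + 1) ^ p) := by
  have h : Summable (fun n : ℕ => 1 / (n:ℝ) ^ p) :=
    Real.summable_one_div_nat_pow.mpr (by omega)
  have h2 := (summable_nat_add_iff (f := fun n : ℕ => 1 / (n:ℝ) ^ p) 1).mpr h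
  refine h2.congr fun j => ?_
  push_cast
  ring

/-- The zeta-type integral, in Lebesgue form. -/
lemma lint_zeta (m : ℕ) (hm : 2 ≤ m) :
    ∫⁻ v in Ioi (0:ℝ), ENNReal.ofReal (v ^ m * Real.exp (-v) / (1 - Real.exp (-v)))
      = ENNReal.ofReal ((m.factorial : ℝ) * ∑' j : ℕ, 1 / ((j:ℝ) + 1) ^ (m + 1)) := by
  have hpt : ∀ v ∈ Ioi (0:ℝ), ENNReal.ofReal (v ^ m * Real.exp (-v) / (1 - Real.exp (-v)))
      = ∑' j : ℕ, ENNReal.ofReal (v ^ m * Real.exp (-(((j:ℝ) + 1) * v))) := by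
    intro v hv
    rw [mem_Ioi] at hv
    have hq0 : 0 < Real.exp (-v) := Real.exp_pos _
    have hq1 : Real.exp (-v) < 1 := exp_lt_one hv
    have hsum : Summable (fun j : ℕ => v ^ m * Real.exp (-(((j:ℝ) + 1) * v))) := by
      have hg : Summable (fun j : ℕ => (Real.exp (-v)) ^ j) := summable_geometric_of_lt_one hq0.le hq1
      refine ((hg.mul_left (v ^ m * Real.exp (-v))).congr fun j => ?_)
      rw [← Real.exp_nat_mul, mul_assoc, ← Real.exp_add]
      congr 1
      push_cast
      ring
    rw [← ENNReal.ofReal_tsum_of_nonneg (fun j => by positivity) hsum]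
    congr 1
    have : (fun j : ℕ => v ^ m * Real.exp (-(((j:ℝ) + 1) * v)))
        = fun j : ℕ => (v ^ m * Real.exp (-v)) * (Real.exp (-v)) ^ j := by
      funext j
      rw [← Real.exp_nat_mul, mul_assoc, ← Real.exp_add]
      congr 1
      push_cast
      ring
    rw [this, tsum_mul_left, tsum_geometric_of_lt_one hq0.le hq1]
    rw [div_eq_mul_inv]
  rw [setLIntegral_congr_fun_ae measurableSet_Ioi (ae_of_all _ hpt)]
  have hmeasj : ∀ j : ℕ, AEMeasurable (fun v : ℝ => ENNReal.ofReal (v ^ m * Real.exp (-(((j:ℝ) + 1) * v))))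
      (volume.restrict (Ioi (0:ℝ))) := fun j =>
    ((by fun_prop : Measurable fun v : ℝ => v ^ m * Real.exp (-(((j:ℝ) + 1) * v))).ennreal_ofReal).aemeasurable
  rw [lintegral_tsum hmeasj]
  have hev : ∀ j : ℕ, ∫⁻ v in Ioi (0:ℝ), ENNReal.ofReal (v ^ m * Real.exp (-(((j:ℝ) + 1) * v)))
      = ENNReal.ofReal ((m.factorial : ℝ) * (1 / ((j:ℝ) + 1) ^ (m + 1))) := by
    intro j
    have hc : (0:ℝ) < (j:ℝ) + 1 := by positivity
    rw [← MeasureTheory.ofReal_integral_eq_lintegral_ofReal (integrableOn_pow_exp m hc)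
      ((ae_restrict_iff' measurableSet_Ioi).mpr (ae_of_all _ fun v hv =>
        mul_nonneg (pow_nonneg (le_of_lt (mem_Ioi.mp hv)) m) (Real.exp_pos _).le))]
    rw [integral_pow_exp m hc]
    congr 1
    field_simp
  rw [tsum_congr hev, ← ENNReal.ofReal_tsum_of_nonneg (fun j => by positivity)
    ((summable_inv_pow (by omega : 2 ≤ m + 1)).mul_left _)]
  congr 1
  rw [tsum_mul_left]

/-- summand function for the main computation -/
noncomputable def g (K n : ℕ) (v : ℝ) : ℝ :=
  A (n+(K+1)) (K+1) / ((n+(K+1)).factorial : ℝ) * (v ^ 2 * Real.exp (-v) * (1 - Real.exp (-v)) ^ (n+K))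

lemma g_eq (K n : ℕ) {v : ℝ} (hv : 0 < v) :
    g K n v = (v ^ 2 * Real.exp (-v) / (1 - Real.exp (-v)))
      * (A (n+(K+1)) (K+1) * (1 - Real.exp (-v)) ^ (n+(K+1)) / ((n+(K+1)).factorial : ℝ)) := by
  have hx0 : 0 < 1 - Real.exp (-v) := by linarith [exp_lt_one hv]
  unfold g
  have hpow : (1 - Real.exp (-v)) ^ (n+(K+1)) = (1 - Real.exp (-v)) ^ (n+K) * (1 - Real.exp (-v)) := by
    rw [show n+(K+1) = (n+K) + 1 from rfl, pow_succ]
  rw [hpow]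
  field_simp

lemma summable_g (K : ℕ) {v : ℝ} (hv : 0 < v) : Summable (fun n => g K n v) := by
  have hx0 : 0 < 1 - Real.exp (-v) := by linarith [exp_lt_one hv]
  have hx1 : 1 - Real.exp (-v) < 1 := by linarith [Real.exp_pos (-v)]
  have hs := (summable_nat_add_iff (f := fun n : ℕ =>
      A n (K+1) * (1 - Real.exp (-v)) ^ n / (n.factorial : ℝ)) (K+1)).mpr
    (summable_A (K+1) hx0.le hx1)
  refine ((hs.mul_left (v ^ 2 * Real.exp (-v) / (1 - Real.exp (-v)))).congr fun n => ?_)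
  rw [g_eq K n hv]

lemma pointwise_sum (K : ℕ) {v : ℝ} (hv : 0 < v) :
    ∑' n : ℕ, g K n v
      = v ^ (K+3) * Real.exp (-v) / (((K+1).factorial : ℝ) * (1 - Real.exp (-v))) := by
  have hx0 : 0 < 1 - Real.exp (-v) := by linarith [exp_lt_one hv]
  have hx1 : 1 - Real.exp (-v) < 1 := by linarith [Real.exp_pos (-v)]
  have hcongr : ∀ n : ℕ, g K n v = (v ^ 2 * Real.exp (-v) / (1 - Real.exp (-v)))
      * (A (n+(K+1)) (K+1) * (1 - Real.exp (-v)) ^ (n+(K+1)) / ((n+(K+1)).factorial : ℝ)) :=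
    fun n => g_eq K n hv
  rw [tsum_congr hcongr, tsum_mul_left]
  have hs := (summable_nat_add_iff (f := fun n : ℕ =>
      A n (K+1) * (1 - Real.exp (-v)) ^ n / (n.factorial : ℝ)) (K+1)).mpr
    (summable_A (K+1) hx0.le hx1)
  have hshift := Summable.sum_add_tsum_nat_add' (f := fun n : ℕ =>
      A n (K+1) * (1 - Real.exp (-v)) ^ n / (n.factorial : ℝ)) (k := K+1) hs
  have hzero : ∑ i ∈ Finset.range (K+1),
      A i (K+1) * (1 - Real.exp (-v)) ^ i / (i.factorial : ℝ) = 0 := by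
    apply Finset.sum_eq_zero
    intro i hi
    rw [A_eq_zero_of_lt (Finset.mem_range.mp hi)]
    ring
  have htail : ∑' n : ℕ, A (n+(K+1)) (K+1) * (1 - Real.exp (-v)) ^ (n+(K+1)) / ((n+(K+1)).factorial : ℝ)
      = v ^ (K+1) / ((K+1).factorial : ℝ) := by
    have h1 := hshift
    rw [hzero, zero_add] at h1
    rw [h1, gf (K+1) hx0.le hx1]
    have : 1 - (1 - Real.exp (-v)) = Real.exp (-v) := by ring
    rw [this, Real.log_exp]
    norm_num
  rw [htail]
  have h23 : v ^ (K+3) = v ^ 2 * v ^ (K+1) := by ring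
  rw [h23]
  field_simp

/-- The main tsum computation. -/
theorem main_tsum (K : ℕ) :
    ∑' n : ℕ, A (n+(K+1)) (K+1) * (H (n+(K+1)) ^ 2 + Hgen 2 (n+(K+1))) /
        (((n+(K+1)).factorial : ℝ) * ((n+(K+1) : ℕ) : ℝ))
      = ((K+3).factorial : ℝ) / ((K+1).factorial : ℝ) * ∑' j : ℕ, 1 / ((j:ℝ) + 1) ^ (K+4) := by
  set t : ℕ → ℝ := fun n => A (n+(K+1)) (K+1) * (H (n+(K+1)) ^ 2 + Hgen 2 (n+(K+1))) /
        (((n+(K+1)).factorial : ℝ) * ((n+(K+1) : ℕ) : ℝ)) with ht_def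
  have hH : ∀ n, 0 ≤ H n := fun n => Finset.sum_nonneg fun j _ => by positivity
  have hHgen : ∀ n, 0 ≤ Hgen 2 n := fun n => Finset.sum_nonneg fun j _ => by positivity
  have ht_nonneg : ∀ n, 0 ≤ t n := by
    intro n
    have h1 := A_nonneg (n+(K+1)) (K+1)
    have h2 := hH (n+(K+1))
    have h3 := hHgen (n+(K+1))
    positivity
  have ht : ∀ n, t n = ∫ v in Ioi (0:ℝ), g K n v := by
    intro n
    unfold g
    rw [MeasureTheory.integral_const_mul, integral_M1 (n+K)]
    rw [ht_def]
    have e1 : (n+K) + 1 = n + (K+1) := by omega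
    rw [e1]
    have e2 : ((n+K : ℕ) : ℝ) + 1 = ((n+(K+1) : ℕ) : ℝ) := by push_cast; ring
    rw [e2]
    field_simp
  have hint : ∀ n, IntegrableOn (g K n) (Ioi (0:ℝ)) := by
    intro n
    exact (integrableOn_M1 (n+K)).const_mul _
  have hg_nonneg : ∀ n, (0:ℝ→ℝ) ≤ᵐ[volume.restrict (Ioi (0:ℝ))] (g K n) := by
    intro n
    refine (ae_restrict_iff' measurableSet_Ioi).mpr (ae_of_all _ fun v hv => ?_)
    rw [mem_Ioi] at hv
    have hx0 : (0:ℝ) ≤ 1 - Real.exp (-v) := by linarith [exp_lt_one hv]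
    have h1 := A_nonneg (n+(K+1)) (K+1)
    unfold g
    positivity
  have step2 : ∀ n, ENNReal.ofReal (t n) = ∫⁻ v in Ioi (0:ℝ), ENNReal.ofReal (g K n v) := by
    intro n
    rw [ht n, MeasureTheory.ofReal_integral_eq_lintegral_ofReal (hint n) (hg_nonneg n)]
  have hmeas : ∀ n, AEMeasurable (fun v : ℝ => ENNReal.ofReal (g K n v))
      (volume.restrict (Ioi (0:ℝ))) := by
    intro n
    exact ((by unfold g; fun_prop : Measurable fun v : ℝ => g K n v).ennreal_ofReal).aemeasurable
  have step4 : ∀ v ∈ Ioi (0:ℝ), ∑' n, ENNReal.ofReal (g K n v)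
      = ENNReal.ofReal (v ^ (K+3) * Real.exp (-v) / (((K+1).factorial : ℝ) * (1 - Real.exp (-v)))) := by
    intro v hv
    rw [mem_Ioi] at hv
    have gnn : ∀ n : ℕ, 0 ≤ g K n v := by
      intro n
      have hx0 : (0:ℝ) ≤ 1 - Real.exp (-v) := by linarith [exp_lt_one hv]
      have h1 := A_nonneg (n+(K+1)) (K+1)
      unfold g
      positivity
    rw [← ENNReal.ofReal_tsum_of_nonneg gnn (summable_g K hv), pointwise_sum K hv]
  calc ∑' n, t n = ∑' n, (ENNReal.ofReal (t n)).toReal := by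
        exact tsum_congr fun n => (ENNReal.toReal_ofReal (ht_nonneg n)).symm
    _ = (∑' n, ENNReal.ofReal (t n)).toReal :=
        (ENNReal.tsum_toReal_eq (fun _ => ENNReal.ofReal_ne_top)).symm
    _ = ((K+3).factorial : ℝ) / ((K+1).factorial : ℝ) * ∑' j : ℕ, 1 / ((j:ℝ) + 1) ^ (K+4) := by
        rw [tsum_congr step2, ← lintegral_tsum hmeas,
          setLIntegral_congr_fun_ae measurableSet_Ioi (ae_of_all _ step4)]
        have hofm : ∀ v : ℝ, ENNReal.ofReal (v ^ (K+3) * Real.exp (-v) / (((K+1).factorial : ℝ) * (1 - Real.exp (-v))))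
            = ENNReal.ofReal (1 / ((K+1).factorial : ℝ)) *
              ENNReal.ofReal (v ^ (K+3) * Real.exp (-v) / (1 - Real.exp (-v))) := by
          intro v
          rw [← ENNReal.ofReal_mul (by positivity)]
          congr 1
          rw [div_mul_div_comm, one_mul]
        simp_rw [hofm]
        have hz : 0 ≤ ∑' j : ℕ, 1 / ((j:ℝ) + 1) ^ (K+3+1) :=
          tsum_nonneg fun j => by positivity
        rw [lintegral_const_mul' _ _ ENNReal.ofReal_ne_top, lint_zeta (K+3) (by omega),
          ← ENNReal.ofReal_mul (by positivity),
          ENNReal.toReal_ofReal (mul_nonneg (by positivity) (mul_nonneg (by positivity) hz))]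
        rw [show K+3+1 = K+4 by norm_num]
        ring

lemma A_alt (n k : ℕ) : (-1:ℝ) ^ n * stirlingS1 (n + k) k = A (n + k) k := by
  unfold A
  rw [show n + k + k = n + 2 * k by omega, pow_add, pow_mul]
  norm_num

end ZetaAux

open ZetaAux Complex in
theorem zeta_eq_stirling_harmonic_sq_series (k : ℕ) (hk : 1 ≤ k) :
    riemannZeta ((k : ℂ) + 3) =
      ((1 / (((k : ℝ) + 1) * ((k : ℝ) + 2)) *
        ∑' n : ℕ, (-1) ^ n * stirlingS1 (n + k) k * (H (n + k) ^ 2 + Hgen 2 (n + k)) /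
          ((Nat.factorial (n + k)) * (n + k)) : ℝ) : ℂ) := by
  obtain ⟨K, rfl⟩ : ∃ K, k = K + 1 := ⟨k - 1, by omega⟩
  -- real computation of the series
  have hts : ∑' n : ℕ, (-1:ℝ) ^ n * stirlingS1 (n + (K+1)) (K+1) *
      (H (n + (K+1)) ^ 2 + Hgen 2 (n + (K+1))) /
      ((Nat.factorial (n + (K+1)) : ℝ) * ((n:ℝ) + ((K+1:ℕ):ℝ)))
      = ((K+3).factorial : ℝ) / ((K+1).factorial : ℝ) * ∑' j : ℕ, 1 / ((j:ℝ) + 1) ^ (K+4) := by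
    rw [← main_tsum K]
    refine tsum_congr fun n => ?_
    rw [← A_alt n (K+1)]
    congr 1
    push_cast
    ring
  have hfac : ((K+3).factorial : ℝ) = ((K:ℝ)+3) * (((K:ℝ)+2) * ((K+1).factorial : ℝ)) := by
    rw [show K+3 = (K+2)+1 by omega, Nat.factorial_succ, show K+2 = (K+1)+1 by omega,
      Nat.factorial_succ]
    push_cast
    ring
  have hval : (1 / ((((K+1:ℕ):ℝ) + 1) * (((K+1:ℕ):ℝ) + 2)) *
      (((K+3).factorial : ℝ) / ((K+1).factorial : ℝ) * ∑' j : ℕ, 1 / ((j:ℝ) + 1) ^ (K+4)))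
      = ∑' j : ℕ, 1 / ((j:ℝ) + 1) ^ (K+4) := by
    have hprod : (((K+1:ℕ):ℝ) + 1) * (((K+1:ℕ):ℝ) + 2) = ((K:ℝ)+2) * ((K:ℝ)+3) := by
      push_cast; ring
    rw [hprod, hfac]
    have h1 : ((K+1).factorial : ℝ) ≠ 0 := by positivity
    field_simp
  rw [hts, hval]
  -- now the zeta side
  have hcast : ((K+1 : ℕ) : ℂ) + 3 = ((K+4 : ℕ) : ℂ) := by push_cast; ring
  rw [hcast, zeta_nat_eq_tsum_of_gt_one (by omega : 1 < K+4)]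
  have hsR : Summable (fun n : ℕ => 1 / ((n:ℝ)) ^ (K+4)) :=
    Real.summable_one_div_nat_pow.mpr (by omega)
  have hsC : Summable (fun n : ℕ => 1 / ((n:ℂ)) ^ (K+4)) := by
    apply Summable.of_norm
    refine hsR.congr fun n => ?_
    rw [norm_div, norm_one, norm_pow, Complex.norm_natCast]
  rw [Summable.tsum_eq_zero_add hsC]
  have h0 : 1 / ((0:ℕ):ℂ) ^ (K+4) = 0 := by
    norm_num
  rw [h0, zero_add, Complex.ofReal_tsum]
  exact (tsum_congr fun n => by push_cast; norm_num).symm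
end

section
/- For every integer k ≥ 1, k + 1 = ∑_{n=k}^{∞} (-1)^{n-k} s(n,k) H_{n+1} / (n+1)!. -/
open scoped BigOperators

namespace SH

/-- Unsigned Stirling numbers of the first kind. -/
def cs : ℕ → ℕ → ℕ
  | 0, k => if k = 0 then 1 else 0
  | n+1, 0 => n * cs n 0
  | n+1, (k+1) => n * cs n (k+1) + cs n k

@[simp] lemma cs_zero_zero : cs 0 0 = 1 := rfl
@[simp] lemma cs_zero_succ (k : ℕ) : cs 0 (k+1) = 0 := rfl
@[simp] lemma cs_succ_zero (n : ℕ) : cs (n+1) 0 = n * cs n 0 := rfl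
@[simp] lemma cs_succ_succ (n k : ℕ) : cs (n+1) (k+1) = n * cs n (k+1) + cs n k := rfl

lemma cs_zero (n : ℕ) : cs n 0 = if n = 0 then 1 else 0 := by
  induction n with
  | zero => rfl
  | succ n ih => cases n <;> simp_all

lemma cs_eq_zero : ∀ {n k : ℕ}, n < k → cs n k = 0 := by
  intro n
  induction n with
  | zero => intro k h; cases k with
    | zero => omega
    | succ k => rfl
  | succ n ih =>
    intro k h
    cases k with
    | zero => omega
    | succ k =>
      have h1 : cs n (k+1) = 0 := ih (by omega)
      have h2 : cs n k = 0 := ih (by omega)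
      simp [h1, h2]

lemma cs_le_factorial : ∀ n k : ℕ, cs n k ≤ n.factorial := by
  intro n
  induction n with
  | zero => intro k; cases k <;> simp
  | succ n ih =>
    intro k
    cases k with
    | zero =>
      calc n * cs n 0 ≤ n * n.factorial := by exact Nat.mul_le_mul_left n (ih 0)
        _ ≤ (n+1) * n.factorial := by exact Nat.mul_le_mul_right _ (by omega)
        _ = (n+1).factorial := rfl
    | succ k =>
      calc n * cs n (k+1) + cs n k ≤ n * n.factorial + n.factorial := by
            exact Nat.add_le_add (Nat.mul_le_mul_left n (ih _)) (ih _)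
        _ = (n+1) * n.factorial := by ring
        _ = (n+1).factorial := rfl

lemma stirl_eq (n : ℕ) : ∀ k, stirlingS1 n k = (-1:ℝ)^(n+k) * cs n k := by
  induction n with
  | zero =>
    intro k
    cases k with
    | zero => simp [stirlingS1]
    | succ k => simp [stirlingS1, Polynomial.coeff_one]
  | succ n ih =>
    intro k
    have hP : (∏ i ∈ Finset.range (n+1), (Polynomial.X - Polynomial.C (i : ℝ)))
        = (∏ i ∈ Finset.range n, (Polynomial.X - Polynomial.C (i : ℝ)))
          * (Polynomial.X - Polynomial.C (n : ℝ)) := Finset.prod_range_succ _ _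
    have expand : ∀ j, stirlingS1 (n+1) j
        = (if j = 0 then 0 else stirlingS1 n (j-1)) - (n:ℝ) * stirlingS1 n j := by
      intro j
      show (∏ i ∈ Finset.range (n+1), (Polynomial.X - Polynomial.C (i : ℝ))).coeff j = _
      rw [hP, mul_sub, Polynomial.coeff_sub]
      congr 1
      · cases j with
        | zero => simp [Polynomial.mul_coeff_zero]
        | succ j => simp [Polynomial.coeff_mul_X, stirlingS1]
      · simp [Polynomial.coeff_mul_C, stirlingS1, mul_comm]
    cases k with
    | zero =>
      rw [expand 0, ih 0]
      simp [pow_succ]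
      ring
    | succ k =>
      rw [expand (k+1)]
      simp only [Nat.add_sub_cancel, cs_succ_succ, if_neg (Nat.succ_ne_zero k)]
      rw [ih k, ih (k+1)]
      push_cast
      have h1 : (-1:ℝ)^(n+1+(k+1)) = (-1)^(n+k) := by
        rw [show n+1+(k+1) = (n+k)+2 by ring, pow_add]; norm_num
      have h2 : (-1:ℝ)^(n+(k+1)) = -(-1)^(n+k) := by
        rw [show n+(k+1) = (n+k)+1 by ring, pow_succ]; ring
      rw [h1, h2]
      ring

/-- `u k n = cs n k / n!` -/
noncomputable def u (k n : ℕ) : ℝ := (cs n k : ℝ) / n.factorial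

lemma u_nonneg (k n : ℕ) : 0 ≤ u k n := by unfold u; positivity

lemma u_le_one (k n : ℕ) : u k n ≤ 1 := by
  rw [u, div_le_one (by exact_mod_cast n.factorial_pos)]
  exact_mod_cast cs_le_factorial n k

lemma u_key (k : ℕ) : ∀ n : ℕ, (n : ℝ) * u (k+1) n = ∑ m ∈ Finset.range n, u k m := by
  intro n
  induction n with
  | zero => simp
  | succ n ih =>
    rw [Finset.sum_range_succ, ← ih]
    simp only [u, cs_succ_succ, Nat.factorial_succ]
    have h0 : (n.factorial : ℝ) ≠ 0 := by positivity
    have h1 : ((n:ℝ) + 1) ≠ 0 := by positivity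
    push_cast
    field_simp


open Real MeasureTheory Set

lemma image_f : (fun t : ℝ => 1 - Real.exp (-t)) '' (Set.Ioi 0) = Set.Ioo 0 1 := by
  ext y
  constructor
  · rintro ⟨t, ht, rfl⟩
    have ht' : (0:ℝ) < t := ht
    have h1 : Real.exp (-t) < 1 := by
      rw [Real.exp_lt_one_iff]; linarith
    have h2 : 0 < Real.exp (-t) := Real.exp_pos _
    exact ⟨by simp only []; linarith, by simp only []; linarith⟩
  · rintro ⟨hy0, hy1⟩
    refine ⟨-Real.log (1 - y), ?_, ?_⟩
    · have : Real.log (1 - y) < 0 := Real.log_neg (by linarith) (by linarith)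
      simpa using this
    · simp only [neg_neg]
      rw [Real.exp_log (by linarith)]
      ring

lemma hasDeriv_f (t : ℝ) : HasDerivAt (fun t : ℝ => 1 - Real.exp (-t)) (Real.exp (-t)) t := by
  have h1 : HasDerivAt (fun t : ℝ => Real.exp (-t)) (Real.exp (-t) * (-1)) t :=
    (Real.hasDerivAt_exp (-t)).comp t ((hasDerivAt_id t).neg)
  have h2 := h1.const_sub 1
  simpa using h2

lemma inj_f : Set.InjOn (fun t : ℝ => 1 - Real.exp (-t)) (Set.Ioi 0) := by
  intro a _ b _ h
  simp only [sub_right_inj] at h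
  have := Real.exp_injective h
  linarith

lemma gamma_side (m : ℕ) : IntegrableOn (fun t : ℝ => Real.exp (-t) * t ^ m) (Set.Ioi 0) ∧
    ∫ t in Set.Ioi 0, Real.exp (-t) * t ^ m = m.factorial := by
  have h0 : (0:ℝ) < (m:ℝ) + 1 := by positivity
  have hcongr : ∀ t ∈ Set.Ioi (0:ℝ), Real.exp (-t) * t ^ (((m:ℝ)+1)-1) = Real.exp (-t) * t ^ m := by
    intro t _
    rw [show ((m:ℝ)+1)-1 = (m:ℝ) by ring, Real.rpow_natCast]
  constructor
  · exact (Real.GammaIntegral_convergent h0).congr_fun hcongr measurableSet_Ioi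
  · have := Real.Gamma_eq_integral h0
    rw [setIntegral_congr_fun measurableSet_Ioi hcongr] at this
    rw [← this, Real.Gamma_nat_eq_factorial]

lemma neglog_int (m : ℕ) :
    IntegrableOn (fun u : ℝ => (-Real.log (1-u)) ^ m) (Set.Ioo 0 1) ∧
    ∫ u in Set.Ioo 0 1, (-Real.log (1-u)) ^ m = m.factorial := by
  set g : ℝ → ℝ := fun u => (-Real.log (1-u)) ^ m with hg
  have hds : ∀ t ∈ Set.Ioi (0:ℝ),
      HasDerivWithinAt (fun t : ℝ => 1 - Real.exp (-t)) (Real.exp (-t)) (Set.Ioi 0) t :=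
    fun t _ => (hasDeriv_f t).hasDerivWithinAt
  have key := integral_image_eq_integral_abs_deriv_smul measurableSet_Ioi hds inj_f g
  have keyInt := integrableOn_image_iff_integrableOn_abs_deriv_smul measurableSet_Ioi hds inj_f g
  rw [image_f] at key keyInt
  have heq : (fun t : ℝ => |Real.exp (-t)| • g (1 - Real.exp (-t)))
      = fun t : ℝ => Real.exp (-t) * t ^ m := by
    funext t
    have h1 : (1:ℝ) - (1 - Real.exp (-t)) = Real.exp (-t) := by ring
    simp only [hg, smul_eq_mul, abs_of_pos (Real.exp_pos _)]
    rw [h1, Real.log_exp, neg_neg]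
  rw [heq] at key keyInt
  exact ⟨keyInt.mpr (gamma_side m).1, by rw [key, (gamma_side m).2]⟩

lemma ftc_log (m : ℕ) {x : ℝ} (hx0 : 0 ≤ x) (hx1 : x < 1) :
    ∫ t in Set.Ioo 0 x, (-Real.log (1-t)) ^ m / m.factorial * (1-t)⁻¹
      = (-Real.log (1-x)) ^ (m+1) / (m+1).factorial := by
  have hderiv : ∀ t ∈ Set.uIcc 0 x,
      HasDerivAt (fun t : ℝ => (-Real.log (1-t)) ^ (m+1) / (m+1).factorial)
        ((-Real.log (1-t)) ^ m / m.factorial * (1-t)⁻¹) t := by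
    intro t ht
    rw [Set.uIcc_of_le hx0] at ht
    have h1t : (0:ℝ) < 1 - t := by
      have := ht.2; linarith
    have hl : HasDerivAt (fun t : ℝ => -Real.log (1-t)) ((1-t)⁻¹) t := by
      have h1 : HasDerivAt (fun t : ℝ => 1 - t) (-1) t := (hasDerivAt_id t).const_sub 1
      have h2 := (Real.hasDerivAt_log (ne_of_gt h1t)).comp t h1
      have h3 := h2.neg
      rw [show (1-t)⁻¹ = -((1-t)⁻¹ * -1) by ring]; exact h3
    have hp : HasDerivAt (fun t : ℝ => (-Real.log (1-t)) ^ (m+1) / (m+1).factorial)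
        (((m+1 : ℕ) : ℝ) * (-Real.log (1-t)) ^ m * (1-t)⁻¹ / (m+1).factorial) t :=
      (hl.fun_pow (m+1)).div_const ((m+1).factorial)
    convert hp using 1
    have hfm : ((m+1).factorial : ℝ) = ((m:ℝ)+1) * m.factorial := by
      rw [Nat.factorial_succ]; push_cast; ring
    rw [hfm]
    have hm0 : (m.factorial : ℝ) ≠ 0 := by exact_mod_cast m.factorial_ne_zero
    push_cast
    field_simp
  have hcont : ContinuousOn (fun t : ℝ => (-Real.log (1-t)) ^ m / m.factorial * (1-t)⁻¹)
      (Set.uIcc 0 x) := by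
    rw [Set.uIcc_of_le hx0]
    have hne : ∀ t ∈ Set.Icc 0 x, (1:ℝ) - t ≠ 0 := by
      intro t ht; have := ht.2; intro h; nlinarith [hx1]
    have c1 : ContinuousOn (fun t : ℝ => 1 - t) (Set.Icc 0 x) :=
      (continuous_const.sub continuous_id).continuousOn
    exact (((c1.log hne).neg.pow m).div_const _).mul (c1.inv₀ hne)
  have := intervalIntegral.integral_eq_sub_of_hasDerivAt hderiv
    (hcont.intervalIntegrable)
  rw [intervalIntegral.integral_of_le hx0, MeasureTheory.integral_Ioc_eq_integral_Ioo] at this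
  rw [this]
  norm_num

lemma gf : ∀ (k : ℕ) {x : ℝ}, 0 ≤ x → x < 1 →
    HasSum (fun n => u k n * x ^ n) ((-Real.log (1-x)) ^ k / k.factorial) := by
  intro k
  induction k with
  | zero =>
    intro x hx0 hx1
    have h : ∀ n : ℕ, n ≠ 0 → u 0 n * x ^ n = 0 := by
      intro n hn
      cases n with
      | zero => omega
      | succ n => simp [u, cs_zero]
    have := hasSum_single (f := fun n => u 0 n * x ^ n) 0 h
    simpa [u] using this
  | succ k ih =>
    intro x hx0 hx1
    have hxsum : Summable (fun n : ℕ => x ^ n) := summable_geometric_of_lt_one hx0 hx1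
    have hsummable : Summable (fun n => u (k+1) n * x ^ n) := by
      refine Summable.of_nonneg_of_le (fun n => ?_) (fun n => ?_) hxsum
      · exact mul_nonneg (u_nonneg _ _) (pow_nonneg hx0 n)
      · calc u (k+1) n * x ^ n ≤ 1 * x ^ n :=
              mul_le_mul_of_nonneg_right (u_le_one _ _) (pow_nonneg hx0 n)
          _ = x ^ n := one_mul _
    suffices htsum : ∑' n, u (k+1) n * x ^ n
        = (-Real.log (1-x)) ^ (k+1) / (k+1).factorial by
      rw [← htsum]; exact hsummable.hasSum
    set F : ℕ → ℝ → ℝ := fun n t => ((n:ℝ)+1) * u (k+1) (n+1) * t ^ n with hF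
    -- each integral
    have claim1 : ∀ n : ℕ, ∫ t in Set.Ioo 0 x, F n t = u (k+1) (n+1) * x ^ (n+1) := by
      intro n
      rw [← MeasureTheory.integral_Ioc_eq_integral_Ioo, ← intervalIntegral.integral_of_le hx0]
      rw [intervalIntegral.integral_const_mul, integral_pow]
      have hn1 : ((n:ℝ)+1) ≠ 0 := by positivity
      field_simp
      ring
    have claim2 : ∀ n : ℕ, MeasureTheory.Integrable (F n) (volume.restrict (Set.Ioo 0 x)) := by
      intro n
      exact ((continuous_const.mul (continuous_pow n)).integrableOn_Icc (a := 0) (b := x)).mono_set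
        Set.Ioo_subset_Icc_self
    have claim3 : ∀ t ∈ Set.Ioo (0:ℝ) x, HasSum (fun n => F n t)
        ((-Real.log (1-t)) ^ k / k.factorial * (1-t)⁻¹) := by
      intro t ht
      have ht0 : (0:ℝ) ≤ t := ht.1.le
      have ht1 : t < 1 := lt_trans ht.2 hx1
      have hihsum := ih ht0 ht1
      have hf' : Summable (fun n => ‖u k n * t ^ n‖) := by
        have : (fun n => ‖u k n * t ^ n‖) = fun n => u k n * t ^ n := by
          funext n
          exact Real.norm_of_nonneg (mul_nonneg (u_nonneg _ _) (pow_nonneg ht0 n))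
        rw [this]; exact hihsum.summable
      have hg' : Summable (fun n : ℕ => ‖t ^ n‖) := by
        have : (fun n : ℕ => ‖t ^ n‖) = fun n : ℕ => t ^ n := by
          funext n; exact Real.norm_of_nonneg (pow_nonneg ht0 n)
        rw [this]; exact summable_geometric_of_lt_one ht0 ht1
      have hc := hasSum_sum_range_mul_of_summable_norm hf' hg'
      rw [hihsum.tsum_eq, tsum_geometric_of_lt_one ht0 ht1] at hc
      have hfun : (fun n => ∑ i ∈ Finset.range (n+1), (u k i * t ^ i) * t ^ (n - i))
          = fun n => F n t := by
        funext n
        have hterm : ∀ i ∈ Finset.range (n+1), (u k i * t ^ i) * t ^ (n - i) = u k i * t ^ n := by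
          intro i hi
          rw [Finset.mem_range] at hi
          rw [mul_assoc, ← pow_add, Nat.add_sub_cancel' (Nat.lt_succ_iff.mp hi)]
        rw [Finset.sum_congr rfl hterm, ← Finset.sum_mul, ← u_key k (n+1)]
        push_cast [hF]
        ring
      rw [hfun] at hc
      exact hc
    have hnorm : ∀ n : ℕ, ∫ t in Set.Ioo 0 x, ‖F n t‖ = u (k+1) (n+1) * x ^ (n+1) := by
      intro n
      rw [← claim1 n]
      refine MeasureTheory.setIntegral_congr_fun measurableSet_Ioo (fun t ht => ?_)
      exact Real.norm_of_nonneg (by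
        have := ht.1.le
        have := u_nonneg (k+1) (n+1)
        positivity)
    have hF_sum : Summable (fun n => ∫ t in Set.Ioo 0 x, ‖F n t‖) := by
      simp_rw [hnorm]
      refine Summable.of_nonneg_of_le (fun n => ?_) (fun n => ?_) (hxsum.comp_injective
        (add_left_injective 1))
      · exact mul_nonneg (u_nonneg _ _) (pow_nonneg hx0 _)
      · calc u (k+1) (n+1) * x ^ (n+1) ≤ 1 * x ^ (n+1) :=
              mul_le_mul_of_nonneg_right (u_le_one _ _) (pow_nonneg hx0 _)
          _ = x ^ (n+1) := one_mul _
    have swap := MeasureTheory.integral_tsum_of_summable_integral_norm claim2 hF_sum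
    rw [Summable.tsum_eq_zero_add hsummable]
    have h00 : u (k+1) 0 * x ^ 0 = 0 := by simp [u]
    rw [h00, zero_add]
    have hstep : (fun n => u (k+1) (n+1) * x ^ (n+1)) = fun n => ∫ t in Set.Ioo 0 x, F n t := by
      funext n; rw [claim1 n]
    rw [hstep, swap]
    have hptwise : ∫ t in Set.Ioo 0 x, (∑' n, F n t)
        = ∫ t in Set.Ioo 0 x, (-Real.log (1-t)) ^ k / k.factorial * (1-t)⁻¹ := by
      refine MeasureTheory.setIntegral_congr_fun measurableSet_Ioo (fun t ht => ?_)
      exact (claim3 t ht).tsum_eq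
    rw [hptwise, ftc_log k hx0 hx1]

lemma H_succ (m : ℕ) : H (m+1) = H m + 1/((m:ℝ)+1) := by
  simp [H, Finset.sum_range_succ]

lemma h_partial (n : ℕ) : ∀ M : ℕ, ∑ j ∈ Finset.range M, (1:ℝ)/(((j:ℝ)+1)*((n:ℝ)+(j:ℝ)+2))
    = (1/((n:ℝ)+1)) * (H M + H (n+1) - H (M+n+1)) := by
  intro M
  induction M with
  | zero => simp [H]
  | succ M ih =>
    rw [Finset.sum_range_succ, ih]
    have e1 : H (M+1) = H M + 1/((M:ℝ)+1) := H_succ M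
    have e2 : M + 1 + n + 1 = (M + n + 1) + 1 := by ring
    have e3 : H (M+1+n+1) = H (M+n+1) + 1/((M:ℝ)+(n:ℝ)+2) := by
      rw [e2, H_succ]
      push_cast
      ring_nf
    rw [e1, e3]
    have hM1 : ((M:ℝ)+1) ≠ 0 := by positivity
    have hn1 : ((n:ℝ)+1) ≠ 0 := by positivity
    have hMn2 : ((M:ℝ)+(n:ℝ)+2) ≠ 0 := by positivity
    have hnM2 : ((n:ℝ)+(M:ℝ)+2) ≠ 0 := by positivity
    field_simp
    ring

lemma h_hasSum (n : ℕ) : HasSum (fun j : ℕ => (1:ℝ)/(((j:ℝ)+1)*((n:ℝ)+(j:ℝ)+2)))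
    (H (n+1)/((n:ℝ)+1)) := by
  rw [hasSum_iff_tendsto_nat_of_nonneg (fun j => by positivity)]
  have hfun : (fun M : ℕ => ∑ j ∈ Finset.range M, (1:ℝ)/(((j:ℝ)+1)*((n:ℝ)+(j:ℝ)+2)))
      = fun M => (1/((n:ℝ)+1)) * (H M + H (n+1) - H (M+n+1)) := by
    funext M; exact h_partial n M
  rw [hfun]
  have hdiff : Filter.Tendsto (fun M : ℕ => H (M+n+1) - H M) Filter.atTop (nhds 0) := by
    have hbound : ∀ M : ℕ, H (M+n+1) - H M ≤ ((n:ℝ)+1) * (1/((M:ℝ)+1)) := by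
      intro M
      have hsplit : H M + ∑ j ∈ Finset.Ico M (M+n+1), (1:ℝ)/((j:ℝ)+1) = H (M+n+1) := by
        rw [H, H, Finset.sum_range_add_sum_Ico _ (by omega : M ≤ M+n+1)]
      have hle : ∑ j ∈ Finset.Ico M (M+n+1), (1:ℝ)/((j:ℝ)+1)
          ≤ ∑ _j ∈ Finset.Ico M (M+n+1), (1:ℝ)/((M:ℝ)+1) := by
        refine Finset.sum_le_sum (fun j hj => ?_)
        rw [Finset.mem_Ico] at hj
        have : (M:ℝ) ≤ (j:ℝ) := by exact_mod_cast hj.1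
        apply div_le_div_of_nonneg_left (by norm_num) (by positivity) (by linarith)
      rw [Finset.sum_const, Nat.card_Ico] at hle
      have hcard : M + n + 1 - M = n + 1 := by omega
      rw [hcard] at hle
      have : H (M+n+1) - H M ≤ ((n:ℕ)+1:ℕ) • ((1:ℝ)/((M:ℝ)+1)) := by linarith
      simpa [nsmul_eq_mul] using this
    have hnn : ∀ M : ℕ, 0 ≤ H (M+n+1) - H M := by
      intro M
      have hsplit : H M + ∑ j ∈ Finset.Ico M (M+n+1), (1:ℝ)/((j:ℝ)+1) = H (M+n+1) := by
        rw [H, H, Finset.sum_range_add_sum_Ico _ (by omega : M ≤ M+n+1)]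
      have : 0 ≤ ∑ j ∈ Finset.Ico M (M+n+1), (1:ℝ)/((j:ℝ)+1) :=
        Finset.sum_nonneg (fun j _ => by positivity)
      linarith
    have hlim : Filter.Tendsto (fun M : ℕ => ((n:ℝ)+1) * (1/((M:ℝ)+1)))
        Filter.atTop (nhds 0) := by
      have := tendsto_one_div_add_atTop_nhds_zero_nat.const_mul ((n:ℝ)+1)
      simpa using this
    exact squeeze_zero hnn hbound hlim
  have : Filter.Tendsto (fun M : ℕ => (1/((n:ℝ)+1)) * (H M + H (n+1) - H (M+n+1)))
      Filter.atTop (nhds ((1/((n:ℝ)+1)) * (H (n+1) - 0))) := by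
    refine Filter.Tendsto.const_mul _ ?_
    have heq : (fun M : ℕ => H M + H (n+1) - H (M+n+1))
        = fun M => H (n+1) - (H (M+n+1) - H M) := by funext M; ring
    rw [heq]
    exact tendsto_const_nhds.sub hdiff
  simpa [one_div, div_eq_inv_mul] using this

lemma L_nonneg {t : ℝ} (ht0 : 0 ≤ t) (ht1 : t < 1) : 0 ≤ -Real.log (1-t) := by
  rcases eq_or_lt_of_le ht0 with h | h
  · simp [← h]
  · have : Real.log (1-t) < 0 := Real.log_neg (by linarith) (by linarith)
    linarith

lemma h_int (n : ℕ) :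
    MeasureTheory.IntegrableOn (fun t : ℝ => t ^ n * (-Real.log (1-t))) (Set.Ioo 0 1) ∧
    ∫ t in Set.Ioo 0 1, t ^ n * (-Real.log (1-t)) = H (n+1)/((n:ℝ)+1) := by
  have hL1 := (neglog_int 1).1
  simp only [pow_one] at hL1
  have hmeas : MeasureTheory.AEStronglyMeasurable (fun t : ℝ => t ^ n * (-Real.log (1-t)))
      (volume.restrict (Set.Ioo 0 1)) := by
    refine ContinuousOn.aestronglyMeasurable ?_ measurableSet_Ioo
    refine (continuous_pow n).continuousOn.mul ?_
    refine ContinuousOn.neg ?_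
    refine Real.continuousOn_log.comp ((continuous_const.sub continuous_id).continuousOn) ?_
    intro t ht
    simp only [Set.mem_compl_iff, Set.mem_singleton_iff]
    have := ht.2
    intro h
    have : (1:ℝ) - t = 0 := h
    linarith [ht.2]
  have hintg : MeasureTheory.IntegrableOn (fun t : ℝ => t ^ n * (-Real.log (1-t)))
      (Set.Ioo 0 1) := by
    refine MeasureTheory.Integrable.mono' hL1 hmeas ?_
    filter_upwards [MeasureTheory.ae_restrict_mem measurableSet_Ioo] with t ht
    have ht0 : (0:ℝ) < t := ht.1
    have ht1 : t < 1 := ht.2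
    have hLn : 0 ≤ -Real.log (1-t) := L_nonneg ht0.le ht1
    have htn : t ^ n ≤ 1 := pow_le_one₀ ht0.le ht1.le
    rw [Real.norm_of_nonneg (mul_nonneg (pow_nonneg ht0.le n) hLn)]
    nlinarith [pow_nonneg ht0.le n]
  refine ⟨hintg, ?_⟩
  set G : ℕ → ℝ → ℝ := fun j t => t ^ n * (t ^ (j+1) / ((j:ℝ)+1)) with hG
  have claim1 : ∀ j : ℕ, ∫ t in Set.Ioo 0 1, G j t = 1/(((j:ℝ)+1)*((n:ℝ)+(j:ℝ)+2)) := by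
    intro j
    have hGe : ∀ t : ℝ, G j t = (1/((j:ℝ)+1)) * t ^ (n+j+1) := by
      intro t
      simp only [hG]
      rw [show n+j+1 = n+(j+1) by ring, pow_add]
      ring
    simp_rw [hGe]
    rw [← MeasureTheory.integral_Ioc_eq_integral_Ioo,
      ← intervalIntegral.integral_of_le (by norm_num : (0:ℝ) ≤ 1)]
    rw [intervalIntegral.integral_const_mul, integral_pow]
    rw [one_pow, zero_pow (by omega : n+j+1+1 ≠ 0)]
    push_cast
    rw [sub_zero, div_mul_div_comm, one_mul]
    ring_nf
  have claim2 : ∀ j : ℕ, MeasureTheory.Integrable (G j) (volume.restrict (Set.Ioo 0 1)) := by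
    intro j
    exact (((continuous_pow n).mul ((continuous_pow (j+1)).div_const _)).integrableOn_Icc
      (a := (0:ℝ)) (b := 1)).mono_set Set.Ioo_subset_Icc_self
  have hnorm : ∀ j : ℕ, ∫ t in Set.Ioo 0 1, ‖G j t‖ = 1/(((j:ℝ)+1)*((n:ℝ)+(j:ℝ)+2)) := by
    intro j
    rw [← claim1 j]
    refine MeasureTheory.setIntegral_congr_fun measurableSet_Ioo (fun t ht => ?_)
    have ht0 : (0:ℝ) ≤ t := ht.1.le
    exact Real.norm_of_nonneg (by positivity)
  have hsummable : Summable (fun j : ℕ => (1:ℝ)/(((j:ℝ)+1)*((n:ℝ)+(j:ℝ)+2))) :=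
    (h_hasSum n).summable
  have hF_sum : Summable (fun j => ∫ t in Set.Ioo 0 1, ‖G j t‖) := by
    simp_rw [hnorm]; exact hsummable
  have swap := MeasureTheory.integral_tsum_of_summable_integral_norm claim2 hF_sum
  have hpt : ∫ t in Set.Ioo 0 1, (∑' j, G j t)
      = ∫ t in Set.Ioo 0 1, t ^ n * (-Real.log (1-t)) := by
    refine MeasureTheory.setIntegral_congr_fun measurableSet_Ioo (fun t ht => ?_)
    have habs : |t| < 1 := by
      rw [abs_lt]; constructor <;> [linarith [ht.1]; exact ht.2]
    have hls := (Real.hasSum_pow_div_log_of_abs_lt_one habs).mul_left (t ^ n)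
    exact hls.tsum_eq
  rw [← hpt, ← swap]
  have : (fun j : ℕ => ∫ t in Set.Ioo 0 1, G j t)
      = fun j : ℕ => (1:ℝ)/(((j:ℝ)+1)*((n:ℝ)+(j:ℝ)+2)) := by
    funext j; exact claim1 j
  rw [this, (h_hasSum n).tsum_eq]

variable (k : ℕ)

noncomputable def a (k n : ℕ) : ℝ := u k n * (H (n+1)/((n:ℝ)+1))

lemma a_nonneg (n : ℕ) : 0 ≤ a k n := by
  have h1 : 0 ≤ H (n+1) := Finset.sum_nonneg (fun j _ => by positivity)
  have h2 := u_nonneg k n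
  unfold a
  positivity

lemma a_eq_int (n : ℕ) :
    a k n = ∫ t in Set.Ioo 0 1, u k n * (t ^ n * (-Real.log (1-t))) := by
  rw [MeasureTheory.integral_const_mul, (h_int n).2]
  rfl

lemma intfn (n : ℕ) :
    MeasureTheory.Integrable (fun t : ℝ => u k n * (t ^ n * (-Real.log (1-t))))
      (volume.restrict (Set.Ioo 0 1)) :=
  (h_int n).1.const_mul _

lemma final_int :
    ∫ t in Set.Ioo 0 1, (-Real.log (1-t)) ^ (k+1) / k.factorial = (k:ℝ) + 1 := by
  rw [MeasureTheory.integral_div, (neglog_int (k+1)).2]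
  rw [Nat.factorial_succ]
  have h : (k.factorial : ℝ) ≠ 0 := by exact_mod_cast k.factorial_ne_zero
  push_cast
  field_simp

lemma partial_le (N : ℕ) : ∑ n ∈ Finset.range N, a k n ≤ (k:ℝ) + 1 := by
  have hsum : ∑ n ∈ Finset.range N, a k n
      = ∫ t in Set.Ioo 0 1, ∑ n ∈ Finset.range N, u k n * (t ^ n * (-Real.log (1-t))) := by
    rw [MeasureTheory.integral_finset_sum _ (fun n _ => intfn k n)]
    exact Finset.sum_congr rfl (fun n _ => a_eq_int k n)
  rw [hsum, ← final_int k]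
  refine MeasureTheory.setIntegral_mono_on
    (MeasureTheory.integrable_finset_sum _ (fun n _ => intfn k n))
    ((neglog_int (k+1)).1.div_const _) measurableSet_Ioo (fun t ht => ?_)
  have ht0 : (0:ℝ) ≤ t := ht.1.le
  have ht1 : t < 1 := ht.2
  have hL := L_nonneg ht0 ht1
  have hps : ∑ n ∈ Finset.range N, u k n * t ^ n ≤ (-Real.log (1-t)) ^ k / k.factorial :=
    sum_le_hasSum _ (fun n _ => mul_nonneg (u_nonneg _ _) (pow_nonneg ht0 n)) (gf k ht0 ht1)
  calc ∑ n ∈ Finset.range N, u k n * (t ^ n * (-Real.log (1-t)))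
      = (∑ n ∈ Finset.range N, u k n * t ^ n) * (-Real.log (1-t)) := by
        rw [Finset.sum_mul]; exact Finset.sum_congr rfl (fun n _ => by ring)
    _ ≤ ((-Real.log (1-t)) ^ k / k.factorial) * (-Real.log (1-t)) :=
        mul_le_mul_of_nonneg_right hps hL
    _ = (-Real.log (1-t)) ^ (k+1) / k.factorial := by rw [pow_succ]; ring

lemma summable_a : Summable (a k) :=
  summable_of_sum_range_le (a_nonneg k) (partial_le k)

lemma main_sum : ∑' n, a k n = (k:ℝ) + 1 := by
  have hnorm : ∀ n : ℕ, ∫ t in Set.Ioo 0 1, ‖u k n * (t ^ n * (-Real.log (1-t)))‖ = a k n := by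
    intro n
    rw [a_eq_int]
    refine MeasureTheory.setIntegral_congr_fun measurableSet_Ioo (fun t ht => ?_)
    have ht0 : (0:ℝ) ≤ t := ht.1.le
    have hL := L_nonneg ht0 ht.2
    have hu := u_nonneg k n
    exact Real.norm_of_nonneg (by positivity)
  have hF_sum : Summable (fun n => ∫ t in Set.Ioo 0 1,
      ‖u k n * (t ^ n * (-Real.log (1-t)))‖) := by
    simp_rw [hnorm]; exact summable_a k
  have swap := MeasureTheory.integral_tsum_of_summable_integral_norm (fun n => intfn k n) hF_sum
  have h1 : ∑' n, a k n = ∑' n, ∫ t in Set.Ioo 0 1, u k n * (t ^ n * (-Real.log (1-t))) := by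
    exact tsum_congr (fun n => a_eq_int k n)
  rw [h1, swap]
  have hpt : ∫ t in Set.Ioo 0 1, (∑' n, u k n * (t ^ n * (-Real.log (1-t))))
      = ∫ t in Set.Ioo 0 1, (-Real.log (1-t)) ^ (k+1) / k.factorial := by
    refine MeasureTheory.setIntegral_congr_fun measurableSet_Ioo (fun t ht => ?_)
    have ht0 : (0:ℝ) ≤ t := ht.1.le
    have ht1 : t < 1 := ht.2
    have hgs := (gf k ht0 ht1).mul_right (-Real.log (1-t))
    have heq : (fun n => u k n * t ^ n * (-Real.log (1-t)))
        = fun n => u k n * (t ^ n * (-Real.log (1-t))) := by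
      funext n; ring
    rw [heq] at hgs
    rw [hgs.tsum_eq, pow_succ]
    ring
  rw [hpt, final_int k]

end SH

theorem succ_eq_stirling_harmonic_series (k : ℕ) (hk : 1 ≤ k) :
    (k : ℝ) + 1 =
      ∑' n : ℕ, (-1) ^ n * stirlingS1 (n + k) k * H (n + k + 1) /
        (Nat.factorial (n + k + 1)) := by
  have hsummable := SH.summable_a k
  have hshift := Summable.sum_add_tsum_nat_add (f := SH.a k) k hsummable
  have hzero : ∑ i ∈ Finset.range k, SH.a k i = 0 := by
    refine Finset.sum_eq_zero (fun i hi => ?_)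
    rw [Finset.mem_range] at hi
    have : SH.cs i k = 0 := SH.cs_eq_zero hi
    simp [SH.a, SH.u, this]
  rw [hzero, zero_add] at hshift
  have hterm : (fun n : ℕ => (-1:ℝ) ^ n * stirlingS1 (n + k) k * H (n + k + 1) /
      (Nat.factorial (n + k + 1))) = fun n : ℕ => SH.a k (n + k) := by
    funext n
    rw [SH.stirl_eq (n + k) k]
    have hsign : (-1:ℝ) ^ n * ((-1:ℝ) ^ (n + k + k) * (SH.cs (n+k) k : ℝ))
        = (SH.cs (n+k) k : ℝ) := by
      rw [← mul_assoc, ← pow_add]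
      rw [show n + (n + k + k) = 2 * (n + k) by ring, pow_mul]
      norm_num
    rw [hsign]
    simp only [SH.a, SH.u]
    rw [show n + k + 1 = (n + k) + 1 from rfl, Nat.factorial_succ, Nat.cast_mul, ← div_div]
    push_cast
    ring

  rw [hterm, hshift, SH.main_sum k]
end

section
/- For all integers k ≥ 1 and m ≥ 1, (k+1)/(m^{k+2} (m-1)!) = ∑_{n=k}^{∞} (-1)^{n-k} s(n,k) (H_{n+m} − H_{m-1}) / (n+m)!. -/
open scoped BigOperators

/-- unsigned Stirling numbers of the first kind -/
def SC : ℕ → ℕ → ℕ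
  | 0, 0 => 1
  | 0, _ + 1 => 0
  | n + 1, 0 => n * SC n 0
  | n + 1, j + 1 => n * SC n (j + 1) + SC n j

lemma SC_zero_succ (j : ℕ) : SC 0 (j+1) = 0 := rfl
lemma SC_succ_succ (n j : ℕ) : SC (n+1) (j+1) = n * SC n (j+1) + SC n j := rfl
lemma SC_succ_zero (n : ℕ) : SC (n+1) 0 = n * SC n 0 := rfl

lemma sgn_stirling : ∀ n j : ℕ, stirlingS1 n j = (-1 : ℝ)^(n + j) * SC n j := by
  intro n
  induction n with
  | zero =>
    intro j
    unfold stirlingS1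
    cases j with
    | zero => simp [SC]
    | succ j => simp [SC_zero_succ, Polynomial.coeff_one]
  | succ n ih =>
    intro j
    have hprod : (∏ i ∈ Finset.range (n+1), (Polynomial.X - Polynomial.C (i : ℝ)))
        = (∏ i ∈ Finset.range n, (Polynomial.X - Polynomial.C (i : ℝ))) *
          (Polynomial.X - Polynomial.C (n : ℝ)) := Finset.prod_range_succ _ _
    unfold stirlingS1
    rw [hprod, mul_sub, Polynomial.coeff_sub]
    cases j with
    | zero =>
      rw [Polynomial.mul_coeff_zero]
      simp only [Polynomial.coeff_X_zero, mul_zero, Polynomial.coeff_mul_C, zero_sub]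
      have := ih 0
      unfold stirlingS1 at this
      rw [this, SC_succ_zero]
      push_cast
      rw [pow_succ]
      ring
    | succ j =>
      rw [Polynomial.coeff_mul_X, Polynomial.coeff_mul_C]
      have h1 := ih j
      have h2 := ih (j+1)
      unfold stirlingS1 at h1 h2
      rw [h1, h2, SC_succ_succ]
      push_cast
      rw [show n + (j + 1) = (n + j) + 1 by ring,
        show n + 1 + (j + 1) = (n + j) + 2 by ring, pow_add, pow_succ]
      ring
lemma SC_le_factorial : ∀ n j : ℕ, SC n j ≤ n.factorial := by
  intro n
  induction n with
  | zero => intro j; cases j <;> simp [SC]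
  | succ n ih =>
    intro j
    cases j with
    | zero =>
      rw [SC_succ_zero, Nat.factorial_succ]
      exact Nat.mul_le_mul (Nat.le_succ n) (ih 0)
    | succ j =>
      rw [SC_succ_succ, Nat.factorial_succ]
      have := Nat.add_le_add (Nat.mul_le_mul_left n (ih (j+1))) (ih j)
      calc n * SC n (j+1) + SC n j ≤ n * n.factorial + n.factorial := this
        _ = (n+1) * n.factorial := by ring

lemma SC_ratio_le_one (n j : ℕ) : (SC n j : ℝ) / n.factorial ≤ 1 := by
  rw [div_le_one (by positivity)]
  exact_mod_cast SC_le_factorial n j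

lemma SC_cast_nonneg (n j : ℕ) : (0:ℝ) ≤ SC n j := Nat.cast_nonneg _

lemma summable_SC (j : ℕ) {t : ℝ} (ht : |t| < 1) :
    Summable (fun n => (SC n j : ℝ) * t ^ n / n.factorial) := by
  apply Summable.of_norm_bounded (summable_geometric_of_lt_one (abs_nonneg t) ht)
  intro n
  rw [Real.norm_eq_abs]
  have h1 : |(SC n j : ℝ) * t ^ n / n.factorial| = (SC n j : ℝ) / n.factorial * |t| ^ n := by
    rw [abs_div, abs_mul, abs_pow, Nat.abs_cast, abs_of_nonneg (by positivity : (0:ℝ) ≤ (n.factorial : ℝ))]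
    ring
  rw [h1]
  calc (SC n j : ℝ) / n.factorial * |t| ^ n ≤ 1 * |t| ^ n := by
        apply mul_le_mul_of_nonneg_right (SC_ratio_le_one n j) (by positivity)
    _ = |t| ^ n := one_mul _

lemma summable_deriv_aux {r : ℝ} (hr0 : 0 < r) (hr : r < 1) :
    Summable (fun n : ℕ => (n : ℝ) * r ^ (n - 1)) := by
  have h := (summable_pow_mul_geometric_of_norm_lt_one 1 (r := r) (by rwa [Real.norm_eq_abs, abs_of_pos hr0])).mul_left (1/r)
  apply h.congr
  intro n
  cases n with
  | zero => simp
  | succ n => simp [pow_succ, pow_one]; field_simp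

open Set

lemma monomial_hasDerivAt (c : ℝ) (n : ℕ) (x : ℝ) :
    HasDerivAt (fun y : ℝ => c * y ^ n / (n.factorial : ℝ))
      (c * ((n : ℝ) * x ^ (n - 1)) / n.factorial) x := by
  simpa using (((hasDerivAt_pow n x).const_mul c).div_const (n.factorial : ℝ))

lemma genfun : ∀ (j : ℕ) (t : ℝ), t ∈ Set.Ico (0:ℝ) 1 →
    HasSum (fun n => (SC n j : ℝ) * t ^ n / n.factorial)
      ((-Real.log (1 - t)) ^ j / j.factorial) := by
  intro j
  induction j with
  | zero =>
    intro t ht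
    simp only [pow_zero, Nat.factorial_zero, Nat.cast_one, div_one]
    have : ∀ n : ℕ, n ≠ 0 → (SC n 0 : ℝ) * t ^ n / n.factorial = 0 := by
      intro n hn
      -- SC n 0 = 0 for n ≥ 1
      have : SC n 0 = 0 := by
        induction n with
        | zero => exact absurd rfl hn
        | succ n ihn =>
          cases n with
          | zero => simp [SC_succ_zero]
          | succ m => rw [SC_succ_zero, ihn (Nat.succ_ne_zero m)]; ring
      simp [this]
    have h := hasSum_single (f := fun n => (SC n 0 : ℝ) * t ^ n / n.factorial) 0 this
    simpa [SC] using h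
  | succ j ih =>
    -- derivative of each partial series exists on Ico 0 1
    set F : ℝ → ℝ := fun x => ∑' n, (SC n (j+1) : ℝ) * x ^ n / n.factorial with hF
    set f' : ℝ → ℝ := fun x => (-Real.log (1 - x)) ^ j / (j.factorial * (1 - x)) with hf'
    have stepA : ∀ x ∈ Set.Ico (0:ℝ) 1, HasDerivAt F (f' x) x := by
      intro x hx
      obtain ⟨hx0, hx1⟩ := hx
      set r : ℝ := (1 + x) / 2 with hr
      have hxr : x < r := by rw [hr]; linarith
      have hr0 : 0 < r := by rw [hr]; linarith
      have hr1 : r < 1 := by rw [hr]; linarith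
      have hmem : x ∈ Set.Ioo (-r) r := ⟨by linarith, hxr⟩
      have hbound : ∀ (n : ℕ) (y : ℝ), y ∈ Set.Ioo (-r) r →
          ‖(SC n (j+1) : ℝ) * ((n : ℝ) * y ^ (n - 1)) / n.factorial‖ ≤ (n : ℝ) * r ^ (n - 1) := by
        intro n y hy
        have hyr : |y| ≤ r := le_of_lt (abs_lt.mpr ⟨hy.1, hy.2⟩)
        rw [Real.norm_eq_abs, abs_div, abs_mul, abs_mul, Nat.abs_cast, Nat.abs_cast, abs_pow,
          abs_of_nonneg (by positivity : (0:ℝ) ≤ (n.factorial:ℝ))]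
        have h1 : (SC n (j+1) : ℝ) * ((n:ℝ) * |y| ^ (n-1)) / n.factorial
            = ((SC n (j+1) : ℝ) / n.factorial) * ((n:ℝ) * |y| ^ (n-1)) := by ring
        rw [h1]
        calc ((SC n (j+1) : ℝ) / n.factorial) * ((n:ℝ) * |y| ^ (n-1))
            ≤ 1 * ((n:ℝ) * |y| ^ (n-1)) := by
              apply mul_le_mul_of_nonneg_right (SC_ratio_le_one _ _) (by positivity)
          _ = (n:ℝ) * |y| ^ (n-1) := one_mul _
          _ ≤ (n:ℝ) * r ^ (n-1) := by
              apply mul_le_mul_of_nonneg_left (pow_le_pow_left₀ (abs_nonneg y) hyr _) (Nat.cast_nonneg n)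
      have hderiv : HasDerivAt F
          (∑' n, (SC n (j+1) : ℝ) * ((n : ℝ) * x ^ (n - 1)) / n.factorial) x := by
        apply hasDerivAt_tsum_of_isPreconnected (summable_deriv_aux hr0 hr1) isOpen_Ioo
          (isPreconnected_Ioo)
          (fun n y _ => monomial_hasDerivAt _ n y) hbound
          (show (0:ℝ) ∈ Set.Ioo (-r) r from ⟨by linarith, hr0⟩)
          (summable_SC (j+1) (by rw [abs_zero]; norm_num))
          hmem
      -- now compute the sum of derivatives
      have habs : |x| < 1 := by rw [abs_of_nonneg hx0]; exact hx1
      have hsumd : Summable (fun n => (SC n (j+1) : ℝ) * ((n : ℝ) * x ^ (n - 1)) / n.factorial) :=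
        Summable.of_norm_bounded (summable_deriv_aux hr0 hr1) (fun n => hbound n x hmem)
      set D : ℝ := ∑' n, (SC n (j+1) : ℝ) * ((n : ℝ) * x ^ (n - 1)) / n.factorial with hD
      have hshift : D = ∑' n : ℕ, (SC (n+1) (j+1) : ℝ) * x ^ n / n.factorial := by
        rw [hD, Summable.tsum_eq_zero_add hsumd]
        simp only [Nat.cast_zero, zero_mul, mul_zero, zero_div, zero_add]
        apply tsum_congr
        intro n
        rw [Nat.factorial_succ]
        push_cast
        have hne : ((n:ℝ)+1) ≠ 0 := by positivity
        field_simp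
      have hsplit : ∀ n : ℕ, (SC (n+1) (j+1) : ℝ) * x ^ n / n.factorial
          = x * ((SC n (j+1) : ℝ) * ((n : ℝ) * x ^ (n - 1)) / n.factorial)
            + (SC n j : ℝ) * x ^ n / n.factorial := by
        intro n
        rw [SC_succ_succ]
        push_cast
        cases n with
        | zero => simp
        | succ m =>
          rw [Nat.add_sub_cancel, pow_succ]
          field_simp
      have hsum1 : Summable (fun n => x * ((SC n (j+1) : ℝ) * ((n : ℝ) * x ^ (n - 1)) / n.factorial)) :=
        hsumd.mul_left x
      have hsum2 : Summable (fun n => (SC n j : ℝ) * x ^ n / n.factorial) := summable_SC j habs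
      have hDeq : D = x * D + (-Real.log (1 - x)) ^ j / j.factorial := by
        have h2 : (∑' n : ℕ, (SC (n+1) (j+1) : ℝ) * x ^ n / n.factorial)
            = x * D + (-Real.log (1 - x)) ^ j / j.factorial := by
          rw [tsum_congr hsplit, Summable.tsum_add hsum1 hsum2, tsum_mul_left,
            (ih x ⟨hx0, hx1⟩).tsum_eq, ← hD]
        exact hshift.trans h2
      have hx1' : (1:ℝ) - x ≠ 0 := by linarith
      have h3 : D * (1 - x) = (-Real.log (1 - x)) ^ j / j.factorial := by
        have h := hDeq
        ring_nf
        ring_nf at h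
        linarith
      have hDval : D = f' x := by
        rw [hf']
        rw [eq_div_iff (mul_ne_zero (by positivity : (j.factorial:ℝ) ≠ 0) hx1')]
        rw [show D * ((j.factorial:ℝ) * (1 - x)) = (D * (1 - x)) * j.factorial by ring, h3]
        field_simp
      rw [← hDval]; exact hderiv
    -- derivative of the closed form
    set G : ℝ → ℝ := fun x => (-Real.log (1 - x)) ^ (j+1) / ((j+1).factorial : ℝ) with hG
    have stepB : ∀ x ∈ Set.Ico (0:ℝ) 1, HasDerivAt G (f' x) x := by
      intro x hx
      have hx1' : (1:ℝ) - x ≠ 0 := by have := hx.2; intro h; linarith [h]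
      have hlog : HasDerivAt (fun y : ℝ => -Real.log (1 - y)) (1 / (1 - x)) x := by
        have h1 : HasDerivAt (fun y : ℝ => 1 - y) (-1) x := by
          simpa using (hasDerivAt_id x).const_sub 1
        have h2 := (Real.hasDerivAt_log hx1').comp x h1
        have h3 := h2.neg
        refine h3.congr_deriv ?_
        ring
      have hpow := (hlog.pow (j+1)).div_const ((j+1).factorial : ℝ)
      refine hpow.congr_deriv ?_
      rw [hf']
      rw [Nat.add_sub_cancel, Nat.factorial_succ]
      push_cast
      field_simp
    -- equality on [0, 1)
    intro t ht
    obtain ⟨ht0, ht1⟩ := ht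
    have hFt : F t = G t := by
      rcases eq_or_lt_of_le ht0 with h0 | h0
      · -- t = 0
        rw [← h0, hF, hG]
        simp only
        have : ∀ n : ℕ, (SC n (j+1) : ℝ) * (0:ℝ) ^ n / n.factorial = 0 := by
          intro n
          cases n with
          | zero => simp [SC_zero_succ]
          | succ m => simp
        rw [tsum_congr this, tsum_zero]
        simp
      · have key := eq_of_has_deriv_right_eq
          (f' := f') (a := 0) (b := t)
          (fun x hx => (stepA x ⟨hx.1, lt_trans hx.2 ht1⟩).hasDerivWithinAt)
          (fun x hx => (stepB x ⟨hx.1, lt_trans hx.2 ht1⟩).hasDerivWithinAt)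
          (fun x hx => ((stepA x ⟨hx.1, lt_of_le_of_lt hx.2 ht1⟩).continuousAt).continuousWithinAt)
          (fun x hx => ((stepB x ⟨hx.1, lt_of_le_of_lt hx.2 ht1⟩).continuousAt).continuousWithinAt)
          (by
            -- F 0 = G 0
            rw [hF, hG]
            simp only
            have : ∀ n : ℕ, (SC n (j+1) : ℝ) * (0:ℝ) ^ n / n.factorial = 0 := by
              intro n
              cases n with
              | zero => simp [SC_zero_succ]
              | succ m => simp
            rw [tsum_congr this, tsum_zero]
            simp)
        exact key t ⟨ht0, le_refl t⟩
    have hsum := summable_SC (j+1) (t := t) (by rw [abs_of_nonneg ht0]; exact ht1)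
    have := hsum.hasSum
    rwa [show ∑' n, (SC n (j+1) : ℝ) * t ^ n / n.factorial = G t from hFt, hG] at this
open Set MeasureTheory

lemma image_exp_neg_Ioi : (fun x : ℝ => Real.exp (-x)) '' Ioi 0 = Ioo 0 1 := by
  ext y
  constructor
  · rintro ⟨x, hx, rfl⟩
    exact ⟨Real.exp_pos _, by rw [Real.exp_lt_one_iff]; simpa using hx⟩
  · rintro ⟨hy0, hy1⟩
    refine ⟨-Real.log y, ?_, by dsimp only; rw [neg_neg, Real.exp_log hy0]⟩
    simpa using Real.log_neg hy0 hy1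

lemma exp_neg_hasDeriv (x : ℝ) : HasDerivAt (fun x : ℝ => Real.exp (-x)) (-Real.exp (-x)) x := by
  have h := (Real.hasDerivAt_exp (-x)).comp x ((hasDerivAt_id x).neg)
  exact h.congr_deriv (by simp)

lemma exp_neg_injOn : Set.InjOn (fun x : ℝ => Real.exp (-x)) (Ioi 0) := fun a _ b _ h =>
  neg_injective (Real.exp_injective h)

lemma integrable_pow_exp_neg (j a : ℕ) :
    IntegrableOn (fun x : ℝ => Real.exp (-x) * (Real.exp (-x) ^ a * x ^ j)) (Ioi 0) := by
  have h := integrableOn_rpow_mul_exp_neg_mul_rpow (s := (j:ℝ)) (p := 1) (b := (a:ℝ)+1)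
    (lt_of_lt_of_le (by norm_num) (Nat.cast_nonneg j)) (by norm_num) (by positivity)
  apply h.congr_fun ?_ measurableSet_Ioi
  intro x hx
  have hx0 : (0:ℝ) < x := hx
  dsimp only
  rw [Real.rpow_one, Real.rpow_natCast]
  rw [show -((a:ℝ)+1) * x = -x + (-x) * a by ring, Real.exp_add, Real.exp_mul]
  rw [Real.rpow_natCast]
  ring

lemma integral_pow_exp_neg (j a : ℕ) :
    ∫ x in Ioi (0:ℝ), Real.exp (-x) * (Real.exp (-x) ^ a * x ^ j)
      = (j.factorial : ℝ) / ((a:ℝ)+1) ^ (j+1) := by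
  have h := Real.integral_rpow_mul_exp_neg_mul_Ioi (a := (j:ℝ)+1) (r := (a:ℝ)+1)
    (by positivity) (by positivity)
  have hcongr : ∀ x ∈ Ioi (0:ℝ), x ^ (((j:ℝ)+1) - 1) * Real.exp (-(((a:ℝ)+1) * x))
      = Real.exp (-x) * (Real.exp (-x) ^ a * x ^ j) := by
    intro x hx
    rw [show ((j:ℝ)+1) - 1 = (j:ℝ) by ring, Real.rpow_natCast]
    rw [show -(((a:ℝ)+1) * x) = -x + (-x) * a by ring, Real.exp_add, Real.exp_mul,
      Real.rpow_natCast]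
    ring
  rw [← setIntegral_congr_fun measurableSet_Ioi hcongr, h]
  rw [show ((j:ℝ)+1) = ((j+1 : ℕ):ℝ) by push_cast; ring, Real.rpow_natCast]
  rw [show ((j+1:ℕ):ℝ) = ((j:ℕ):ℝ)+1 from by push_cast; ring, Real.Gamma_nat_eq_factorial]
  rw [div_pow, one_pow]
  ring

lemma integrableOn_pow_log (a j : ℕ) :
    IntegrableOn (fun u : ℝ => u ^ a * (-Real.log u) ^ j) (Ioo 0 1) := by
  rw [← image_exp_neg_Ioi]
  rw [integrableOn_image_iff_integrableOn_abs_deriv_smul measurableSet_Ioi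
    (fun x _ => (exp_neg_hasDeriv x).hasDerivWithinAt) exp_neg_injOn]
  apply (integrable_pow_exp_neg j a).congr_fun ?_ measurableSet_Ioi
  intro x _
  dsimp only
  rw [abs_neg, abs_of_pos (Real.exp_pos _), smul_eq_mul, Real.log_exp, neg_neg]

lemma integral_pow_log (a j : ℕ) :
    ∫ u in Ioo (0:ℝ) 1, u ^ a * (-Real.log u) ^ j
      = (j.factorial : ℝ) / ((a:ℝ)+1) ^ (j+1) := by
  rw [← image_exp_neg_Ioi]
  rw [integral_image_eq_integral_abs_deriv_smul measurableSet_Ioi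
    (fun x _ => (exp_neg_hasDeriv x).hasDerivWithinAt) exp_neg_injOn]
  rw [← integral_pow_exp_neg j a]
  apply setIntegral_congr_fun measurableSet_Ioi
  intro x _
  dsimp only
  rw [abs_neg, abs_of_pos (Real.exp_pos _), smul_eq_mul, Real.log_exp, neg_neg]

lemma one_sub_hasDeriv (x : ℝ) : HasDerivAt (fun x : ℝ => 1 - x) (-1) x := by
  simpa using ((hasDerivAt_id x).const_sub 1)

lemma image_one_sub : (fun x : ℝ => 1 - x) '' Ioo 0 1 = Ioo (0:ℝ) 1 := by
  ext y
  constructor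
  · rintro ⟨x, ⟨h1, h2⟩, rfl⟩; constructor <;> simp <;> linarith
  · rintro ⟨h1, h2⟩; exact ⟨1 - y, ⟨by linarith, by linarith⟩, by ring⟩

lemma one_sub_injOn : Set.InjOn (fun x : ℝ => 1 - x) (Ioo 0 1) := fun a _ b _ h => by
  dsimp at h; linarith

lemma integral_reflect (g : ℝ → ℝ) :
    ∫ t in Ioo (0:ℝ) 1, g t = ∫ t in Ioo (0:ℝ) 1, g (1 - t) := by
  nth_rewrite 1 [← image_one_sub]
  rw [integral_image_eq_integral_abs_deriv_smul measurableSet_Ioo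
    (fun x _ => (one_sub_hasDeriv x).hasDerivWithinAt) one_sub_injOn]
  simp

lemma integrableOn_reflect {g : ℝ → ℝ} (h : IntegrableOn (fun t => g (1 - t)) (Ioo (0:ℝ) 1)) :
    IntegrableOn g (Ioo (0:ℝ) 1) := by
  rw [← image_one_sub]
  rw [integrableOn_image_iff_integrableOn_abs_deriv_smul measurableSet_Ioo
    (fun x _ => (one_sub_hasDeriv x).hasDerivWithinAt) one_sub_injOn]
  simpa using h

lemma H_succ (n : ℕ) : H (n+1) = H n + 1/((n:ℝ)+1) := by
  unfold H; rw [Finset.sum_range_succ]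

lemma H_mono {a b : ℕ} (h : a ≤ b) : H a ≤ H b := by
  unfold H
  apply Finset.sum_le_sum_of_subset_of_nonneg (Finset.range_subset_range.mpr h)
  intro i _ _; positivity

noncomputable def S2fin (N q : ℕ) : ℝ :=
  ∑ j ∈ Finset.range (N+1), (-1:ℝ)^j * (N.choose j) / ((q:ℝ)+1+j)^2

noncomputable def Rcf (N q : ℕ) : ℝ :=
  (N.factorial : ℝ) * q.factorial / (N+q+1).factorial * (H (N+q+1) - H q)

lemma S2fin_rec (N q : ℕ) : S2fin (N+1) q = S2fin N q - S2fin N (q+1) := by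
  have key : ∀ j : ℕ, (-1:ℝ)^(j+1) * (((N+1).choose (j+1) : ℕ) : ℝ) / ((q:ℝ)+1+(j+1))^2
      = -((-1:ℝ)^j * (N.choose j) / (((q:ℝ)+1)+1+j)^2)
        + (-1:ℝ)^(j+1) * (N.choose (j+1)) / ((q:ℝ)+1+(j+1))^2 := by
    intro j
    rw [Nat.choose_succ_succ]
    push_cast
    have e1 : (q:ℝ)+1+1+j = (q:ℝ)+1+(j+1) := by ring
    rw [e1, pow_succ]
    ring
  unfold S2fin
  rw [Finset.sum_range_succ' (fun j => (-1:ℝ)^j * (((N+1).choose j : ℕ) : ℝ) / ((q:ℝ)+1+j)^2) (N+1)]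
  push_cast
  rw [Finset.sum_congr rfl (fun j _ => key j), Finset.sum_add_distrib]
  have hT1 : (∑ j ∈ Finset.range (N+1), -((-1:ℝ)^j * (N.choose j) / (((q:ℝ)+1)+1+j)^2))
      = - ∑ j ∈ Finset.range (N+1), (-1:ℝ)^j * (N.choose j) / (((q:ℝ)+1)+1+j)^2 := by
    rw [Finset.sum_neg_distrib]
  have hT2 : (∑ j ∈ Finset.range (N+1), (-1:ℝ)^(j+1) * ((N.choose (j+1) : ℕ) : ℝ) / ((q:ℝ)+1+(j+1))^2)
      = (∑ j ∈ Finset.range (N+1), (-1:ℝ)^j * (N.choose j) / ((q:ℝ)+1+j)^2)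
        - (-1:ℝ)^0 * ((N.choose 0 : ℕ) : ℝ) / ((q:ℝ)+1)^2 := by
    have := Finset.sum_range_succ' (fun j => (-1:ℝ)^j * ((N.choose j : ℕ) : ℝ) / ((q:ℝ)+1+j)^2) (N+1)
    rw [Finset.sum_range_succ (fun j => (-1:ℝ)^j * ((N.choose j : ℕ) : ℝ) / ((q:ℝ)+1+j)^2) (N+1)] at this
    rw [Nat.choose_succ_self] at this
    simp only [Nat.cast_zero, mul_zero, zero_mul, zero_div, add_zero, mul_zero] at this
    -- this : ∑_{j<N+1} f j (+0) = ∑_{j<N+1} f (j+1) + f 0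
    rw [eq_sub_iff_add_eq]
    push_cast at this ⊢
    linarith [this]
  rw [hT1, hT2]
  simp only [Nat.choose_zero_right, Nat.cast_one]
  ring

lemma S2fin_eq_Rcf : ∀ N q : ℕ, S2fin N q = Rcf N q := by
  intro N
  induction N with
  | zero =>
    intro q
    unfold S2fin Rcf
    rw [Finset.sum_range_one]
    simp only [pow_zero, Nat.choose_self, Nat.cast_one, one_mul, Nat.factorial_zero,
      Nat.cast_zero, add_zero, zero_add]
    rw [H_succ q]
    have hq : ((q:ℝ)+1) ≠ 0 := by positivity
    rw [Nat.factorial_succ]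
    push_cast
    field_simp
    ring
  | succ N ih =>
    intro q
    rw [S2fin_rec, ih q, ih (q+1)]
    unfold Rcf
    have e1 : N+1+q+1 = (N+q+1)+1 := by ring
    have e2 : N+(q+1)+1 = (N+q+1)+1 := by ring
    rw [e1, e2, H_succ (N+q+1), H_succ q, Nat.factorial_succ (N+q+1), Nat.factorial_succ N,
      Nat.factorial_succ q]
    have h1 : ((N+q+1).factorial : ℝ) ≠ 0 := by positivity
    have h2 : ((N:ℝ)+q+1+1) ≠ 0 := by positivity
    have h3 : ((q:ℝ)+1) ≠ 0 := by positivity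
    have h4 : ((N.factorial : ℝ)) ≠ 0 := by positivity
    have h5 : ((q.factorial : ℝ)) ≠ 0 := by positivity
    push_cast
    field_simp
    ring

lemma measurable_aux1 (N q : ℕ) : Measurable (fun s : ℝ => (1-s)^N * s^q * (-Real.log s)) := by
  have h1 : Measurable fun s : ℝ => (1-s)^N := (measurable_const.sub measurable_id).pow_const N
  have h2 : Measurable fun s : ℝ => s^q := measurable_id.pow_const q
  exact ((h1.mul h2).mul Real.measurable_log.neg)

lemma integrableOn_reflected (N q : ℕ) :
    MeasureTheory.IntegrableOn (fun s : ℝ => (1-s)^N * s^q * (-Real.log s)) (Ioo 0 1) := by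
  apply MeasureTheory.Integrable.mono' (integrableOn_pow_log q 1)
  · exact (measurable_aux1 N q).aestronglyMeasurable
  · rw [MeasureTheory.ae_restrict_iff' measurableSet_Ioo]
    filter_upwards with s
    rintro ⟨h0, h1⟩
    have hlog : 0 ≤ -Real.log s := by simpa using (Real.log_nonpos h0.le h1.le)
    have h1s : (0:ℝ) ≤ 1 - s := by linarith
    rw [Real.norm_eq_abs, abs_of_nonneg (by positivity), pow_one]
    have hle : (1-s)^N ≤ 1 := pow_le_one₀ h1s (by linarith)
    calc (1-s)^N * s^q * (-Real.log s) ≤ 1 * s^q * (-Real.log s) := by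
          apply mul_le_mul_of_nonneg_right (mul_le_mul_of_nonneg_right hle (by positivity)) hlog
      _ = s^q * (-Real.log s) := by ring

lemma integrableOn_perterm (N q : ℕ) :
    MeasureTheory.IntegrableOn (fun t : ℝ => t^N * (1-t)^q * (-Real.log (1-t))) (Ioo 0 1) := by
  apply integrableOn_reflect
  apply (integrableOn_reflected N q).congr_fun ?_ measurableSet_Ioo
  intro s _
  dsimp only
  rw [sub_sub_cancel]

lemma integral_perterm (N q : ℕ) :
    ∫ t in Ioo (0:ℝ) 1, t^N * (1-t)^q * (-Real.log (1-t))
      = (N.factorial : ℝ) * q.factorial / ((N+q+1).factorial : ℝ) * (H (N+q+1) - H q) := by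
  rw [integral_reflect (fun t : ℝ => t^N * (1-t)^q * (-Real.log (1-t)))]
  have hcongr : ∀ s ∈ Ioo (0:ℝ) 1, (1-s)^N * (1-(1-s))^q * (-Real.log (1-(1-s)))
      = ∑ j ∈ Finset.range (N+1), ((-1:ℝ)^j * (N.choose j)) * (s^(q+j) * (-Real.log s)^1) := by
    intro s _
    rw [sub_sub_cancel]
    have hexp : ((1:ℝ)-s)^N = ∑ j ∈ Finset.range (N+1), (-s)^j * 1^(N-j) * (N.choose j) := by
      rw [← add_pow]; ring_nf
    rw [hexp, Finset.sum_mul, Finset.sum_mul]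
    apply Finset.sum_congr rfl
    intro j _
    rw [pow_one, one_pow, neg_pow, pow_add]
    ring
  rw [MeasureTheory.setIntegral_congr_fun measurableSet_Ioo hcongr]
  rw [MeasureTheory.integral_finset_sum]
  · have : ∀ j ∈ Finset.range (N+1),
        (∫ s in Ioo (0:ℝ) 1, ((-1:ℝ)^j * (N.choose j)) * (s^(q+j) * (-Real.log s)^1))
        = (-1:ℝ)^j * (N.choose j) / ((q:ℝ)+1+j)^2 := by
      intro j _
      rw [MeasureTheory.integral_const_mul, integral_pow_log (q+j) 1]
      push_cast
      rw [show ((q:ℝ)+j+1) = (q:ℝ)+1+j by ring]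
      norm_num
      ring
    rw [Finset.sum_congr rfl this]
    have := S2fin_eq_Rcf N q
    unfold S2fin Rcf at this
    exact this
  · intro j _
    exact ((integrableOn_pow_log (q+j) 1).const_mul _)

lemma SC_eq_zero_of_lt : ∀ n j : ℕ, n < j → SC n j = 0 := by
  intro n
  induction n with
  | zero => intro j hj; cases j with
    | zero => exact absurd hj (lt_irrefl 0)
    | succ i => rfl
  | succ n ih =>
    intro j hj
    cases j with
    | zero => exact absurd hj (Nat.not_lt_zero _)
    | succ i =>
      rw [SC_succ_succ, ih (i+1) (by omega), ih i (by omega)]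
      ring

section assembly

variable (k q : ℕ)

noncomputable def fterm (k q : ℕ) (n : ℕ) (t : ℝ) : ℝ :=
  (SC (n+k) k : ℝ) * t^(n+k) / ((n+k).factorial : ℝ)
    * ((1-t)^q * (-Real.log (1-t)) / (q.factorial : ℝ))

noncomputable def Tterm (k q : ℕ) (n : ℕ) : ℝ :=
  (SC (n+k) k : ℝ) * (H (n+k+q+1) - H q) / (((n+k+q+1).factorial : ℝ))

noncomputable def Wfun (k q : ℕ) (t : ℝ) : ℝ :=
  ((-Real.log (1-t))^k / (k.factorial : ℝ))
    * ((1-t)^q * (-Real.log (1-t)) / (q.factorial : ℝ))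

lemma fterm_nonneg (n : ℕ) {t : ℝ} (ht : t ∈ Set.Ioo (0:ℝ) 1) : 0 ≤ fterm k q n t := by
  obtain ⟨h0, h1⟩ := ht
  have h1s : (0:ℝ) < 1 - t := by linarith
  have hlog : 0 ≤ -Real.log (1 - t) := by
    simpa using Real.log_nonpos h1s.le (by linarith)
  unfold fterm
  positivity

lemma Tterm_nonneg (n : ℕ) : 0 ≤ Tterm k q n := by
  unfold Tterm
  have := H_mono (show q ≤ n+k+q+1 by omega)
  have h2 : (0:ℝ) ≤ H (n+k+q+1) - H q := by linarith
  positivity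

lemma hasSum_fterm {t : ℝ} (ht : t ∈ Set.Ioo (0:ℝ) 1) :
    HasSum (fun n => fterm k q n t) (Wfun k q t) := by
  obtain ⟨h0, h1⟩ := ht
  have hgen := genfun k t ⟨h0.le, h1⟩
  have hsh : HasSum (fun n => (SC (n+k) k : ℝ) * t^(n+k) / ((n+k).factorial : ℝ))
      ((-Real.log (1-t))^k / (k.factorial : ℝ)) := by
    rw [← (hasSum_nat_add_iff' k)] at hgen
    have hz : (∑ i ∈ Finset.range k, (SC i k : ℝ) * t^i / (i.factorial : ℝ)) = 0 := by
      apply Finset.sum_eq_zero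
      intro i hi
      rw [SC_eq_zero_of_lt i k (Finset.mem_range.mp hi)]
      simp
    rwa [hz, sub_zero] at hgen
  have := hsh.mul_right ((1-t)^q * (-Real.log (1-t)) / (q.factorial : ℝ))
  exact this

lemma measurable_fterm (n : ℕ) : Measurable (fterm k q n) := by
  unfold fterm
  have h1 : Measurable fun t : ℝ => (SC (n+k) k : ℝ) * t^(n+k) / ((n+k).factorial : ℝ) :=
    (measurable_id.pow_const (n+k)).const_mul _ |>.div_const _
  have h2 : Measurable fun t : ℝ => (1-t)^q :=
    (measurable_const.sub measurable_id).pow_const q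
  have h3 : Measurable fun t : ℝ => -Real.log (1-t) :=
    (Real.measurable_log.comp (measurable_const.sub measurable_id)).neg
  exact h1.mul ((h2.mul h3).div_const _)

lemma integrableOn_fterm (n : ℕ) :
    MeasureTheory.IntegrableOn (fterm k q n) (Ioo 0 1) := by
  have h : MeasureTheory.IntegrableOn
      (fun t : ℝ => (SC (n+k) k : ℝ) / (((n+k).factorial : ℝ) * (q.factorial : ℝ))
        * (t^(n+k) * (1-t)^q * (-Real.log (1-t)))) (Ioo 0 1) :=
    (integrableOn_perterm (n+k) q).const_mul _
  apply h.congr_fun ?_ measurableSet_Ioo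
  intro t _
  unfold fterm
  field_simp

lemma integral_fterm (n : ℕ) :
    ∫ t in Ioo (0:ℝ) 1, fterm k q n t = Tterm k q n := by
  have hfe : ∀ t : ℝ, fterm k q n t
      = ((SC (n+k) k : ℝ) / (((n+k).factorial : ℝ) * (q.factorial : ℝ)))
        * (t^(n+k) * (1-t)^q * (-Real.log (1-t))) := by
    intro t; unfold fterm; field_simp
  rw [MeasureTheory.setIntegral_congr_fun measurableSet_Ioo (fun t _ => hfe t)]
  rw [MeasureTheory.integral_const_mul, integral_perterm (n+k) q]
  unfold Tterm
  have h1 : ((n+k).factorial : ℝ) ≠ 0 := by positivity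
  have h2 : ((q.factorial : ℝ)) ≠ 0 := by positivity
  have h3 : (((n+k+q+1).factorial : ℝ)) ≠ 0 := by positivity
  field_simp

lemma integrableOn_Wfun : MeasureTheory.IntegrableOn (Wfun k q) (Ioo 0 1) := by
  have h : MeasureTheory.IntegrableOn
      (fun s : ℝ => 1 / ((k.factorial : ℝ) * (q.factorial : ℝ)) * (s^q * (-Real.log s)^(k+1)))
      (Ioo 0 1) := (integrableOn_pow_log q (k+1)).const_mul _
  have h2 := integrableOn_reflect (g := Wfun k q) ?_
  · exact h2
  · apply h.congr_fun ?_ measurableSet_Ioo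
    intro s hs
    unfold Wfun
    dsimp only
    rw [sub_sub_cancel, pow_succ]
    field_simp

lemma integral_Wfun : ∫ t in Ioo (0:ℝ) 1, Wfun k q t
    = ((k:ℝ)+1) / (((q:ℝ)+1)^(k+2) * (q.factorial : ℝ)) := by
  have hrefl := integral_reflect (Wfun k q)
  rw [hrefl]
  have hcongr : ∀ s ∈ Ioo (0:ℝ) 1, Wfun k q (1-s)
      = (1 / ((k.factorial : ℝ) * (q.factorial : ℝ))) * (s^q * (-Real.log s)^(k+1)) := by
    intro s _
    unfold Wfun
    rw [sub_sub_cancel, pow_succ]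
    field_simp
  rw [MeasureTheory.setIntegral_congr_fun measurableSet_Ioo hcongr,
    MeasureTheory.integral_const_mul, integral_pow_log q (k+1)]
  rw [Nat.factorial_succ]
  have h1 : ((k.factorial : ℝ)) ≠ 0 := by positivity
  have h2 : ((q.factorial : ℝ)) ≠ 0 := by positivity
  have h3 : (((q:ℝ)+1)^(k+2)) ≠ 0 := by positivity
  push_cast
  field_simp

lemma Wfun_nonneg {t : ℝ} (ht : t ∈ Set.Ioo (0:ℝ) 1) : 0 ≤ Wfun k q t := by
  obtain ⟨h0, h1⟩ := ht
  have h1s : (0:ℝ) < 1 - t := by linarith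
  have hlog : 0 ≤ -Real.log (1 - t) := by
    simpa using Real.log_nonpos h1s.le (by linarith)
  unfold Wfun
  positivity

lemma tsum_Tterm : ∑' n : ℕ, Tterm k q n
    = ((k:ℝ)+1) / (((q:ℝ)+1)^(k+2) * (q.factorial : ℝ)) := by
  classical
  set μ := MeasureTheory.volume.restrict (Ioo (0:ℝ) 1) with hμ
  have hmeas : ∀ n : ℕ, AEMeasurable (fun t => ENNReal.ofReal (fterm k q n t)) μ :=
    fun n => ((measurable_fterm k q n).ennreal_ofReal).aemeasurable
  have step1 : ∀ n : ℕ, ENNReal.ofReal (Tterm k q n)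
      = ∫⁻ t, ENNReal.ofReal (fterm k q n t) ∂μ := by
    intro n
    rw [← integral_fterm k q n]
    apply MeasureTheory.ofReal_integral_eq_lintegral_ofReal (integrableOn_fterm k q n)
    filter_upwards [MeasureTheory.ae_restrict_mem measurableSet_Ioo] with t ht
    exact fterm_nonneg k q n ht
  have step2 : ∑' n : ℕ, ENNReal.ofReal (Tterm k q n)
      = ∫⁻ t, ∑' n : ℕ, ENNReal.ofReal (fterm k q n t) ∂μ := by
    rw [tsum_congr step1, MeasureTheory.lintegral_tsum hmeas]
  have step3 : (∫⁻ t, ∑' n : ℕ, ENNReal.ofReal (fterm k q n t) ∂μ)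
      = ∫⁻ t, ENNReal.ofReal (Wfun k q t) ∂μ := by
    rw [hμ]
    apply MeasureTheory.setLIntegral_congr_fun measurableSet_Ioo
    intro t ht; dsimp only
    have hsum := hasSum_fterm k q ht
    rw [← ENNReal.ofReal_tsum_of_nonneg (fun n => fterm_nonneg k q n ht) hsum.summable,
      hsum.tsum_eq]
  have step4 : (∫⁻ t, ENNReal.ofReal (Wfun k q t) ∂μ)
      = ENNReal.ofReal (((k:ℝ)+1) / (((q:ℝ)+1)^(k+2) * (q.factorial : ℝ))) := by
    rw [← integral_Wfun k q]
    rw [← MeasureTheory.ofReal_integral_eq_lintegral_ofReal (integrableOn_Wfun k q)]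
    filter_upwards [MeasureTheory.ae_restrict_mem measurableSet_Ioo] with t ht
    exact Wfun_nonneg k q ht
  have key : ∑' n : ℕ, ENNReal.ofReal (Tterm k q n)
      = ENNReal.ofReal (((k:ℝ)+1) / (((q:ℝ)+1)^(k+2) * (q.factorial : ℝ))) := by
    rw [step2, step3, step4]
  have h := congrArg ENNReal.toReal key
  rw [ENNReal.tsum_toReal_eq (fun n => ENNReal.ofReal_ne_top)] at h
  rw [ENNReal.toReal_ofReal (by positivity)] at h
  rw [tsum_congr (fun n => ENNReal.toReal_ofReal (Tterm_nonneg k q n))] at h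
  exact h

end assembly

theorem stirling_harmonic_series_m (k m : ℕ) (hk : 1 ≤ k) (hm : 1 ≤ m) :
    ((k : ℝ) + 1) / ((m : ℝ) ^ (k + 2) * (Nat.factorial (m - 1))) =
      ∑' n : ℕ, (-1) ^ n * stirlingS1 (n + k) k * (H (n + k + m) - H (m - 1)) /
        (Nat.factorial (n + k + m)) := by
  obtain ⟨q, rfl⟩ : ∃ q, m = q + 1 := ⟨m - 1, (Nat.succ_pred_eq_of_pos hm).symm⟩
  have hterm : ∀ n : ℕ, (-1:ℝ) ^ n * stirlingS1 (n + k) k * (H (n + k + (q+1)) - H ((q+1) - 1)) /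
        (Nat.factorial (n + k + (q+1))) = Tterm k q n := by
    intro n
    rw [sgn_stirling (n+k) k]
    unfold Tterm
    rw [show (q+1) - 1 = q from rfl, show n + k + (q+1) = n+k+q+1 by ring]
    have hsgn : (-1:ℝ)^n * (-1:ℝ)^(n+k+k) = 1 := by
      rw [← pow_add, show n + (n+k+k) = 2*(n+k) by ring, pow_mul]
      norm_num
    linear_combination ((SC (n+k) k : ℝ) * (H (n+k+q+1) - H q) / (((n+k+q+1).factorial : ℝ))) * hsgn
  rw [tsum_congr hterm, tsum_Tterm k q]
  rw [show (q+1) - 1 = q from rfl]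
  push_cast
  ring
end

section
/- For every integer k ≥ 1, ζ(k+1) − 1 = ∑_{n=k}^{∞} (-1)^{n-k} s(n,k) / ((n+1)! · n), where ζ is the Riemann zeta function. -/
open scoped BigOperators

open Finset Polynomial Filter

noncomputable def A (n i : ℕ) : ℝ :=
  (∏ j ∈ Finset.range n, (Polynomial.X + Polynomial.C (j : ℝ))).coeff i

lemma A_zero (i : ℕ) : A 0 i = if i = 0 then 1 else 0 := by
  simp [A, Polynomial.coeff_one, eq_comm]

lemma A_succ_zero (n : ℕ) : A (n+1) 0 = n * A n 0 := by
  simp only [A, Finset.prod_range_succ, mul_add, Polynomial.coeff_add,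
    Polynomial.coeff_mul_X_zero, Polynomial.coeff_mul_C]
  ring

lemma A_succ (n i : ℕ) : A (n+1) (i+1) = A n i + n * A n (i+1) := by
  simp only [A, Finset.prod_range_succ, mul_add, Polynomial.coeff_add,
    Polynomial.coeff_mul_X, Polynomial.coeff_mul_C]
  ring

lemma S_succ_zero (n : ℕ) : stirlingS1 (n+1) 0 = -(n : ℝ) * stirlingS1 n 0 := by
  simp only [stirlingS1, Finset.prod_range_succ, sub_eq_add_neg, mul_add, Polynomial.coeff_add,
    Polynomial.coeff_mul_X_zero, ← Polynomial.C_neg, Polynomial.coeff_mul_C]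
  ring

lemma S_succ (n i : ℕ) : stirlingS1 (n+1) (i+1) = stirlingS1 n i - n * stirlingS1 n (i+1) := by
  simp only [stirlingS1, Finset.prod_range_succ, sub_eq_add_neg, mul_add, Polynomial.coeff_add,
    Polynomial.coeff_mul_X, ← Polynomial.C_neg, Polynomial.coeff_mul_C]
  ring

lemma A_nonneg (n i : ℕ) : 0 ≤ A n i := by
  induction n generalizing i with
  | zero => rw [A_zero]; split <;> norm_num
  | succ n ih =>
    cases i with
    | zero => rw [A_succ_zero]; have := ih 0; positivity
    | succ i => rw [A_succ]; have := ih i; have := ih (i+1); positivity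

lemma A_le (n i : ℕ) : A n i ≤ n.factorial := by
  induction n generalizing i with
  | zero => rw [A_zero]; split <;> norm_num
  | succ n ih =>
    have h1 : ((n+1).factorial : ℝ) = (n+1) * n.factorial := by
      rw [Nat.factorial_succ]; push_cast; ring
    cases i with
    | zero =>
      rw [A_succ_zero, h1]
      have := ih 0
      have h0 := A_nonneg n 0
      have hf : (0:ℝ) < n.factorial := by exact_mod_cast Nat.factorial_pos n
      nlinarith
    | succ i =>
      rw [A_succ, h1]
      have := ih i; have := ih (i+1)
      have h0 := A_nonneg n (i+1)
      nlinarith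

lemma A_eq_zero_of_lt {n i : ℕ} (h : n < i) : A n i = 0 := by
  apply Polynomial.coeff_eq_zero_of_natDegree_lt
  calc (∏ j ∈ Finset.range n, (Polynomial.X + Polynomial.C (j : ℝ))).natDegree
      ≤ ∑ j ∈ Finset.range n, (Polynomial.X + Polynomial.C (j : ℝ)).natDegree :=
        Polynomial.natDegree_prod_le _ _
    _ ≤ ∑ j ∈ Finset.range n, 1 := by
        apply Finset.sum_le_sum; intro j _
        exact (Polynomial.natDegree_X_add_C _).le
    _ = n := by simp
    _ < i := h

lemma A_eq_sign_stirling (n i : ℕ) : A n i = (-1 : ℝ)^(n+i) * stirlingS1 n i := by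
  induction n generalizing i with
  | zero =>
    rw [A_zero]
    simp only [stirlingS1, Finset.range_zero, Finset.prod_empty, Polynomial.coeff_one]
    split <;> simp_all [pow_add]
  | succ n ih =>
    cases i with
    | zero =>
      rw [A_succ_zero, S_succ_zero, ih 0]
      ring_nf
    | succ i =>
      rw [A_succ, S_succ, ih i, ih (i+1)]
      ring_nf

section Row
variable (k m' : ℕ)

noncomputable def Srow (k m' n : ℕ) : ℝ :=
  ∑ i ∈ Finset.range (k+1), A n i * ((m' : ℝ)+2)^i

noncomputable def qrow (k m' n : ℕ) : ℝ :=
  (m'+1).factorial * Srow k m' n / ((m'+n+1).factorial * ((m' : ℝ)+2)^(k+1))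

lemma Srow_key (n : ℕ) :
    (((m' : ℝ)+2) + n) * Srow k m' n - Srow k m' (n+1)
      = ((m' : ℝ)+2)^(k+1) * A n k := by
  set m : ℝ := (m' : ℝ) + 2 with hm
  have e1 : Srow k m' n = ∑ i ∈ Finset.range k, A n (i+1) * m^(i+1) + A n 0 * m^0 :=
    Finset.sum_range_succ' _ k
  have e2 : Srow k m' n = ∑ i ∈ Finset.range k, A n i * m^i + A n k * m^k :=
    Finset.sum_range_succ _ k
  have e3 : Srow k m' (n+1)
      = ∑ i ∈ Finset.range k, A (n+1) (i+1) * m^(i+1) + A (n+1) 0 * m^0 :=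
    Finset.sum_range_succ' _ k
  have e4 : Srow k m' (n+1)
      = (n : ℝ) * Srow k m' n + m * (Srow k m' n - A n k * m^k) := by
    rw [e3, A_succ_zero]
    have : ∑ i ∈ Finset.range k, A (n+1) (i+1) * m^(i+1)
        = m * (∑ i ∈ Finset.range k, A n i * m^i)
          + (n:ℝ) * (∑ i ∈ Finset.range k, A n (i+1) * m^(i+1)) := by
      rw [Finset.mul_sum, Finset.mul_sum, ← Finset.sum_add_distrib]
      refine Finset.sum_congr rfl fun i _ => ?_
      rw [A_succ]
      simp only [pow_succ]
      ring
    rw [this]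
    have e1' := e1; have e2' := e2
    nlinarith [e1', e2']
  rw [e4, pow_succ]
  ring
end Row

section Row2
variable (k m' : ℕ)

lemma qrow_sub (n : ℕ) :
    qrow k m' n - qrow k m' (n+1)
      = A n k * (m'+1).factorial / (m'+n+2).factorial := by
  have hkey := Srow_key k m' n
  have hfac : ((m'+n+2).factorial : ℝ) = ((m':ℝ)+n+2) * (m'+n+1).factorial := by
    rw [show m'+n+2 = (m'+n+1)+1 from rfl, Nat.factorial_succ]
    push_cast; ring
  have h1 : ((m'+n+1).factorial : ℝ) ≠ 0 := by positivity
  have h2 : ((m':ℝ)+n+2) ≠ 0 := by positivity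
  have h3 : ((m' : ℝ)+2)^(k+1) ≠ 0 := by positivity
  rw [qrow, qrow, show m'+(n+1)+1 = m'+n+2 from by ring, hfac]
  field_simp
  linear_combination hkey

lemma qrow_zero_eq : qrow k m' 0 = 1 / ((m' : ℝ)+2)^(k+1) := by
  have hS0 : Srow k m' 0 = 1 := by
    rw [Srow, Finset.sum_eq_single 0]
    · simp [A_zero]
    · intro b _ hb; simp [A_zero, hb]
    · intro h; exact absurd (Finset.mem_range.mpr (Nat.succ_pos k)) h
  rw [qrow, hS0]
  have h1 : ((m'+0+1).factorial : ℝ) = (m'+1).factorial := by norm_num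
  rw [h1]
  have h2 : ((m'+1).factorial : ℝ) ≠ 0 := by positivity
  field_simp

lemma Srow_nonneg (n : ℕ) : 0 ≤ Srow k m' n :=
  Finset.sum_nonneg fun i _ => mul_nonneg (A_nonneg n i) (by positivity)

lemma qrow_nonneg (n : ℕ) : 0 ≤ qrow k m' n := by
  apply div_nonneg
  · exact mul_nonneg (by positivity) (Srow_nonneg k m' n)
  · positivity

lemma qrow_tendsto : Tendsto (qrow k m') atTop (nhds 0) := by
  have hm1 : (1:ℝ) ≤ (m':ℝ)+2 := by
    have : (0:ℝ) ≤ (m':ℝ) := Nat.cast_nonneg m'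
    linarith
  have hb : ∀ n : ℕ, qrow k m' n ≤ (((m'+1).factorial : ℝ) * (k+1)) * (1/((n:ℝ)+1)) := by
    intro n
    have hS : Srow k m' n ≤ (k+1) * (n.factorial : ℝ) * ((m':ℝ)+2)^k := by
      have : Srow k m' n ≤ ∑ _i ∈ Finset.range (k+1), (n.factorial : ℝ) * ((m':ℝ)+2)^k := by
        apply Finset.sum_le_sum
        intro i hi
        have hik : i ≤ k := Nat.lt_succ_iff.mp (Finset.mem_range.mp hi)
        exact mul_le_mul (A_le n i) (pow_le_pow_right₀ hm1 hik) (by positivity)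
          (Nat.cast_nonneg _)
      rw [Finset.sum_const, Finset.card_range, nsmul_eq_mul] at this
      push_cast at this ⊢
      linarith
    have hden : ((n:ℝ)+1) * (n.factorial : ℝ) * ((m':ℝ)+2)^k
        ≤ ((m'+n+1).factorial : ℝ) * ((m':ℝ)+2)^(k+1) := by
      have h1 : ((n+1).factorial : ℝ) ≤ ((m'+n+1).factorial : ℝ) := by
        exact_mod_cast Nat.factorial_le (by omega)
      have h2 : ((n+1).factorial : ℝ) = ((n:ℝ)+1) * n.factorial := by
        rw [Nat.factorial_succ]; push_cast; ring
      have h3 : ((m':ℝ)+2)^k * 1 ≤ ((m':ℝ)+2)^(k+1) := by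
        rw [pow_succ]
        exact mul_le_mul_of_nonneg_left hm1 (by positivity)
      calc ((n:ℝ)+1) * (n.factorial : ℝ) * ((m':ℝ)+2)^k
          = ((n+1).factorial : ℝ) * (((m':ℝ)+2)^k * 1) := by rw [h2]; ring
        _ ≤ ((m'+n+1).factorial : ℝ) * ((m':ℝ)+2)^(k+1) := by
            exact mul_le_mul h1 h3 (by positivity) (by positivity)
    have hq : qrow k m' n
        ≤ ((m'+1).factorial : ℝ) * ((k+1) * (n.factorial : ℝ) * ((m':ℝ)+2)^k)
          / (((n:ℝ)+1) * (n.factorial : ℝ) * ((m':ℝ)+2)^k) := by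
      apply div_le_div₀ (by positivity)
        (mul_le_mul_of_nonneg_left hS (by positivity)) (by positivity) hden
    refine hq.trans_eq ?_
    have hfn : (0:ℝ) < (n.factorial : ℝ) := by exact_mod_cast n.factorial_pos
    field_simp
  apply squeeze_zero (qrow_nonneg k m') hb
  have := (tendsto_one_div_add_atTop_nhds_zero_nat).const_mul
    (((m'+1).factorial : ℝ) * (k+1))
  simpa using this

lemma hasSum_row :
    HasSum (fun n : ℕ => A n k * ((m'+1).factorial : ℝ) / (m'+n+2).factorial)
      (1/((m':ℝ)+2)^(k+1)) := by
  rw [hasSum_iff_tendsto_nat_of_nonneg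
    (fun n => div_nonneg (mul_nonneg (A_nonneg n k) (by positivity)) (by positivity))]
  have hps : ∀ N : ℕ, ∑ n ∈ Finset.range N,
      A n k * ((m'+1).factorial : ℝ) / (m'+n+2).factorial
      = qrow k m' 0 - qrow k m' N := by
    intro N
    rw [← Finset.sum_range_sub' (qrow k m')]
    exact Finset.sum_congr rfl fun n _ => by rw [qrow_sub]
  simp only [hps]
  have := (qrow_tendsto k m').const_sub (qrow k m' 0)
  simpa [qrow_zero_eq] using this
end Row2

section Col
variable (N : ℕ) (hN : 1 ≤ N)

noncomputable def tcol (N M : ℕ) : ℝ :=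
  ((M+1).factorial : ℝ) / ((N : ℝ) * (M+N+1).factorial)

lemma tcol_sub (M : ℕ) (hN : 1 ≤ N) :
    tcol N M - tcol N (M+1) = ((M+1).factorial : ℝ) / (M+N+2).factorial := by
  have hf1 : ((M+2).factorial : ℝ) = ((M:ℝ)+2) * (M+1).factorial := by
    rw [show M+2 = (M+1)+1 from rfl, Nat.factorial_succ]; push_cast; ring
  have hf2 : ((M+N+2).factorial : ℝ) = ((M:ℝ)+N+2) * (M+N+1).factorial := by
    rw [show M+N+2 = (M+N+1)+1 from rfl, Nat.factorial_succ]; push_cast; ring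
  have hNpos : (0:ℝ) < N := by exact_mod_cast hN
  have h1 : ((M+N+1).factorial : ℝ) ≠ 0 := by positivity
  rw [tcol, tcol, show M+1+N+1 = M+N+2 from by ring, hf2, hf1]
  field_simp
  ring

lemma tcol_tendsto (hN : 1 ≤ N) : Filter.Tendsto (tcol N) Filter.atTop (nhds 0) := by
  have hNpos : (0:ℝ) < N := by exact_mod_cast hN
  have hb : ∀ M : ℕ, tcol N M ≤ 1/((M:ℝ)+1) := by
    intro M
    have h1 : ((M+2).factorial : ℝ) ≤ ((M+N+1).factorial : ℝ) := by
      exact_mod_cast Nat.factorial_le (by omega)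
    have h2 : ((M+2).factorial : ℝ) = ((M:ℝ)+2) * (M+1).factorial := by
      rw [show M+2 = (M+1)+1 from rfl, Nat.factorial_succ]; push_cast; ring
    have hq : tcol N M ≤ ((M+1).factorial : ℝ) / (1 * (((M:ℝ)+2) * (M+1).factorial)) := by
      apply div_le_div₀ (by positivity) le_rfl (by positivity)
      rw [← h2]
      have : (1:ℝ) ≤ (N:ℝ) := by exact_mod_cast hN
      have hfp2 : (0:ℝ) < ((M+2).factorial : ℝ) := by exact_mod_cast Nat.factorial_pos _
      nlinarith [h1]
    refine hq.trans ?_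
    have hfp : (0:ℝ) < ((M+1).factorial : ℝ) := by exact_mod_cast Nat.factorial_pos _
    rw [one_mul]
    rw [div_le_div_iff₀ (by positivity) (by positivity)]
    nlinarith [hfp]
  apply squeeze_zero (fun M => by unfold tcol; positivity) hb
  exact tendsto_one_div_add_atTop_nhds_zero_nat

lemma hasSum_col (hN : 1 ≤ N) :
    HasSum (fun M : ℕ => ((M+1).factorial : ℝ) / (M+N+2).factorial)
      (1 / ((N : ℝ) * (N+1).factorial)) := by
  rw [hasSum_iff_tendsto_nat_of_nonneg (fun M => by positivity)]
  have hps : ∀ L : ℕ, ∑ M ∈ Finset.range L,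
      ((M+1).factorial : ℝ) / (M+N+2).factorial = tcol N 0 - tcol N L := by
    intro L
    rw [← Finset.sum_range_sub' (tcol N)]
    exact Finset.sum_congr rfl fun M _ => by rw [tcol_sub N M hN]
  simp only [hps]
  have := (tcol_tendsto N hN).const_sub (tcol N 0)
  have ht0 : tcol N 0 = 1 / ((N : ℝ) * (N+1).factorial) := by
    rw [tcol]; norm_num [show 0+N+1 = N+1 from by ring]
  simpa [ht0] using this
end Col

section Main
variable (k : ℕ) (hk : 1 ≤ k)

noncomputable def Fam (k : ℕ) (p : ℕ × ℕ) : ℝ :=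
  A (p.2+k) k * ((p.1+1).factorial : ℝ) / (p.1+p.2+k+2).factorial

lemma Fam_nonneg : 0 ≤ Fam k := by
  intro p
  exact div_nonneg (mul_nonneg (A_nonneg _ _) (by positivity)) (by positivity)

lemma hasSum_row_shift (m' : ℕ) :
    HasSum (fun n : ℕ => Fam k (m', n)) (1/((m':ℝ)+2)^(k+1)) := by
  have h0 := hasSum_row k m'
  have hz : ∑ i ∈ Finset.range k,
      A i k * ((m'+1).factorial : ℝ) / (m'+i+2).factorial = 0 := by
    apply Finset.sum_eq_zero
    intro i hi
    rw [A_eq_zero_of_lt (Finset.mem_range.mp hi)]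
    simp
  have h1 : HasSum (fun n : ℕ =>
      A (n+k) k * ((m'+1).factorial : ℝ) / (m'+(n+k)+2).factorial)
      (1/((m':ℝ)+2)^(k+1)) := by
    exact (hasSum_nat_add_iff (f := fun n : ℕ =>
      A n k * ((m'+1).factorial : ℝ) / (m'+n+2).factorial) k).mpr
      (by rw [hz, add_zero]; exact h0)
  have he : (fun n : ℕ => Fam k (m', n))
      = fun n : ℕ => A (n+k) k * ((m'+1).factorial : ℝ) / (m'+(n+k)+2).factorial := by
    funext n
    rw [Fam]
    congr 3
    omega
  rw [he]
  exact h1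

lemma hasSum_col_shift (hk : 1 ≤ k) (n : ℕ) :
    HasSum (fun m' : ℕ => Fam k (m', n))
      (A (n+k) k / (((n+k+1).factorial : ℝ) * ((n:ℝ)+k))) := by
  have h0 := (hasSum_col (n+k) (by omega)).mul_left (A (n+k) k)
  have he : (fun M : ℕ => Fam k (M, n))
      = fun M : ℕ => A (n+k) k * (((M+1).factorial : ℝ) / (M+(n+k)+2).factorial) := by
    funext M
    rw [Fam, mul_div_assoc, show M+n+k+2 = M+(n+k)+2 from by omega]
  rw [he]
  convert h0 using 1
  · rfl
  · push_cast
    ring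

lemma summable_tail (k : ℕ) (hk : 1 ≤ k) :
    Summable (fun m' : ℕ => 1/((m':ℝ)+2)^(k+1)) := by
  have h := Real.summable_one_div_nat_pow.mpr (show 1 < k+1 by omega)
  have h2 := (summable_nat_add_iff 2).mpr h
  refine h2.congr fun m' => ?_
  push_cast
  ring

lemma summable_Fam (k : ℕ) (hk : 1 ≤ k) : Summable (Fam k) := by
  refine (summable_prod_of_nonneg (Fam_nonneg k)).mpr ⟨?_, ?_⟩
  · exact fun m' => (hasSum_row_shift k m').summable
  · refine Summable.congr (summable_tail k hk) fun m' => ?_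
    exact ((hasSum_row_shift k m').tsum_eq).symm

lemma main_real (k : ℕ) (hk : 1 ≤ k) :
    ∑' n : ℕ, A (n+k) k / (((n+k+1).factorial : ℝ) * ((n:ℝ)+k))
      = ∑' m' : ℕ, 1/((m':ℝ)+2)^(k+1) := by
  have hs := summable_Fam k hk
  calc ∑' n : ℕ, A (n+k) k / (((n+k+1).factorial : ℝ) * ((n:ℝ)+k))
      = ∑' n : ℕ, ∑' m' : ℕ, Fam k (m', n) :=
        tsum_congr fun n => ((hasSum_col_shift k hk n).tsum_eq).symm
    _ = ∑' m' : ℕ, ∑' n : ℕ, Fam k (m', n) :=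
        Summable.tsum_comm (f := fun m' n => Fam k (m', n)) hs
    _ = ∑' m' : ℕ, 1/((m':ℝ)+2)^(k+1) :=
        tsum_congr fun m' => (hasSum_row_shift k m').tsum_eq
end Main

theorem zeta_sub_one_eq_stirling_series (k : ℕ) (hk : 1 ≤ k) :
    riemannZeta ((k : ℂ) + 1) - 1 =
      ((∑' n : ℕ, (-1) ^ n * stirlingS1 (n + k) k /
        ((Nat.factorial (n + k + 1)) * (n + k)) : ℝ) : ℂ) := by
  -- rewrite the real series using A
  have hterm : ∀ n : ℕ, (-1:ℝ) ^ n * stirlingS1 (n + k) k /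
      ((Nat.factorial (n + k + 1) : ℝ) * ((n : ℝ) + (k : ℝ)))
      = A (n+k) k / (((n+k+1).factorial : ℝ) * ((n:ℝ)+k)) := by
    intro n
    have hsgn : A (n+k) k = (-1:ℝ)^n * stirlingS1 (n+k) k := by
      rw [A_eq_sign_stirling, show n+k+k = n+2*k from by ring, pow_add, pow_mul]
      norm_num
    rw [hsgn]
  -- zeta side
  have hz := zeta_nat_eq_tsum_of_gt_one (k := k+1) (by omega)
  have hcast : ((k+1 : ℕ) : ℂ) = (k:ℂ)+1 := by push_cast; ring
  rw [hcast] at hz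
  have hre : (fun n : ℕ => 1/(n:ℂ)^(k+1)) = fun n : ℕ => ((1/(n:ℝ)^(k+1) : ℝ) : ℂ) := by
    funext n
    push_cast
    ring
  rw [hz, hre, ← Complex.ofReal_tsum]
  set f : ℕ → ℝ := fun n => 1/(n:ℝ)^(k+1) with hf
  have hsf : Summable f := Real.summable_one_div_nat_pow.mpr (by omega)
  have e0 : ∑' n, f n = f 0 + ∑' n, f (n+1) := Summable.tsum_eq_zero_add hsf
  have hsf1 : Summable fun n => f (n+1) := (summable_nat_add_iff 1).mpr hsf
  have e1 : ∑' n, f (n+1) = f 1 + ∑' n, f (n+2) := by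
    have := Summable.tsum_eq_zero_add hsf1
    simpa using this
  have hf0 : f 0 = 0 := by simp [hf]
  have hf1 : f 1 = 1 := by simp [hf]
  have e2 : ∑' n : ℕ, f (n+2) = ∑' m' : ℕ, 1/((m':ℝ)+2)^(k+1) := by
    refine tsum_congr fun n => ?_
    simp only [hf]
    push_cast
    ring
  rw [e0, e1, hf0, hf1, e2, zero_add, tsum_congr hterm, main_real k hk]
  push_cast
  ring
end
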